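/- arXiv:2401.17475 — 9 statements merged into one kernel-verified Lean document; each statement's English description precedes it below -/
import Mathlib

section
/- Let k ≥ 1 and let n be an integer such that n/2 + k is an integer and n is sufficiently large. Let D be the digraph which is the union of two complete digraphs Q_1 and Q_2, each on n/2 + k vertices, with |V(Q_1) ∩ V(Q_2)| = 2k (so |V(D)| = n). Then δ⁰(D) = n/2 + k − 1. Moreover, writing V(Q_1) ∩ V(Q_2) = {x_1, …, x_k, y_1, …, y_k} and letting H be the digraph consisting of the k pairwise disjoint arcs x_1y_1, …, x_ky_k, the subdigraph of D induced by (V(D) ∖ V(H)) ∪ {x_1, y_1} contains no directed path from x_1 to y_1 of length greater than n/2 − k + 1; consequently D is not arbitrary Hamiltonian H-linked. Hence the minimum semi-degree bound n/2 + k in the main theorem is best possible. -/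
open scoped Classical

/-- The out-degree of a vertex `v` in the digraph with arc relation `A`. -/
noncomputable def outDeg {V : Type*} (A : V → V → Prop) (v : V) : ℕ :=
  {u | A v u}.ncard

/-- The in-degree of a vertex `v` in the digraph with arc relation `A`. -/
noncomputable def inDeg {V : Type*} (A : V → V → Prop) (v : V) : ℕ :=
  {u | A u v}.ncard

/-- `p` is a directed path from `u` to `v` in the digraph with arc relation `A`,
recorded as its list of vertices; for `u = v` it is a closed directed path. -/
def IsDipathFrom {V : Type*} (A : V → V → Prop) (u v : V) (p : List V) : Prop :=
  p.Chain' A ∧ p.head? = some u ∧ p.getLast? = some v ∧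
    (u = v → p.dropLast.Nodup) ∧ (u ≠ v → p.Nodup)

/-- The internal vertices of a path recorded as a list of vertices. -/
def listInterior {V : Type*} (p : List V) : List V := p.tail.dropLast

/-- Hamiltonian `(N H)`-subdivision for arcs `a` already mapped into `V`. -/
def IsHamSubdivision {V : Type*} (A : V → V → Prop) {k : ℕ}
    (a : Fin k → V × V) (N : Fin k → ℕ) (g : Fin k → List V) : Prop :=
  (∀ i, IsDipathFrom A (a i).1 (a i).2 (g i) ∧ (g i).length = N i + 1) ∧
  (∀ i j, i ≠ j → ∀ x ∈ listInterior (g i), x ∉ g j) ∧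
  (∀ x : V, ∃ i, x ∈ g i)

/-- Arbitrary Hamiltonian `H`-linkedness with parameters `α, β`. -/
def ArbHamHLinked {V W : Type*} [Fintype V] [Fintype W] (A : V → V → Prop)
    {k : ℕ} (a : Fin k → W × W) (α β : ℝ) : Prop :=
  ∀ f : W → V, Function.Injective f →
    ∀ N : Fin k → ℕ,
      (∀ i, 4 ≤ N i) →
      (∑ i, if (N i : ℝ) < β * Fintype.card V then (N i : ℝ) else 0) ≤ α * Fintype.card V →
      (∑ i, (N i - 1)) + Fintype.card W = Fintype.card V →
      ∃ g : Fin k → List V, IsHamSubdivision A (fun i => (f (a i).1, f (a i).2)) N g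

/-- Along a chain avoiding `Q₁ ∩ Q₂`, all vertices lie on one side. -/
lemma chain_one_side {V : Type} (Q₁ Q₂ : Set V) (A : V → V → Prop)
    (hA : ∀ u v, A u v ↔ u ≠ v ∧ ((u ∈ Q₁ ∧ v ∈ Q₁) ∨ (u ∈ Q₂ ∧ v ∈ Q₂)))
    (hU : Q₁ ∪ Q₂ = Set.univ) :
    ∀ t : List V, t.Chain' A → (∀ z ∈ t, z ∉ Q₁ ∩ Q₂) →
      (∀ z ∈ t, z ∈ Q₁ \ Q₂) ∨ (∀ z ∈ t, z ∈ Q₂ \ Q₁) := by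
  intro t
  induction t with
  | nil => intro _ _; left; intro z hz; simp at hz
  | cons a t ih =>
    intro hc hni
    have hc' : t.Chain' A := (List.isChain_cons.mp hc).2
    have hni' : ∀ z ∈ t, z ∉ Q₁ ∩ Q₂ := fun z hz => hni z (List.mem_cons_of_mem _ hz)
    have ha : a ∈ Q₁ ∪ Q₂ := by rw [hU]; trivial
    have hani : a ∉ Q₁ ∩ Q₂ := hni a List.mem_cons_self
    rcases ih hc' hni' with hside | hside
    · cases t with
      | nil =>
        rcases ha with h1 | h2
        · left; intro z hz; simp at hz; subst hz
          exact ⟨h1, fun h2 => hani ⟨h1, h2⟩⟩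
        · right; intro z hz; simp at hz; subst hz
          exact ⟨h2, fun h1 => hani ⟨h1, h2⟩⟩
      | cons b t' =>
        have hab : A a b := (List.isChain_cons_cons.mp hc).1
        have hb : b ∈ Q₁ \ Q₂ := hside b List.mem_cons_self
        have haq : a ∈ Q₁ := by
          rcases (hA a b).mp hab with ⟨_, ⟨h, _⟩ | ⟨_, h⟩⟩
          · exact h
          · exact absurd h hb.2
        left
        intro z hz
        rcases List.mem_cons.mp hz with rfl | hz
        · exact ⟨haq, fun h2 => hani ⟨haq, h2⟩⟩
        · exact hside z hz
    · cases t with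
      | nil =>
        rcases ha with h1 | h2
        · left; intro z hz; simp at hz; subst hz
          exact ⟨h1, fun h2 => hani ⟨h1, h2⟩⟩
        · right; intro z hz; simp at hz; subst hz
          exact ⟨h2, fun h1 => hani ⟨h1, h2⟩⟩
      | cons b t' =>
        have hab : A a b := (List.isChain_cons_cons.mp hc).1
        have hb : b ∈ Q₂ \ Q₁ := hside b List.mem_cons_self
        have haq : a ∈ Q₂ := by
          rcases (hA a b).mp hab with ⟨_, ⟨_, h⟩ | ⟨h, _⟩⟩
          · exact absurd h hb.2
          · exact h
        right
        intro z hz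
        rcases List.mem_cons.mp hz with rfl | hz
        · exact ⟨haq, fun h1 => hani ⟨h1, haq⟩⟩
        · exact hside z hz

/-- A nodup list whose elements all lie in `S` has length at most `S.ncard`. -/
lemma nodup_length_le {V : Type} [Fintype V] (S : Set V) (t : List V)
    (hnd : t.Nodup) (hsub : ∀ z ∈ t, z ∈ S) : t.length ≤ S.ncard := by
  classical
  have h1 : t.toFinset.card = t.length := List.toFinset_card_of_nodup hnd
  have h2 : (↑t.toFinset : Set V) ⊆ S := by
    intro z hz; exact hsub z (List.mem_toFinset.mp hz)
  calc t.length = ((↑t.toFinset : Set V)).ncard := by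
        rw [Set.ncard_coe_finset, h1]
    _ ≤ S.ncard := Set.ncard_le_ncard h2 (Set.toFinite S)

/-- Decomposition of a dipath between distinct endpoints. -/
lemma path_decomp {V : Type} (A : V → V → Prop) (x y : V) (p : List V)
    (hp : IsDipathFrom A x y p) (hxy : x ≠ y) :
    p = x :: (listInterior p ++ [y]) := by
  obtain ⟨hc, hh, hl, _, hnd⟩ := hp
  cases p with
  | nil => simp at hh
  | cons a t =>
    have hax : a = x := by simpa using hh
    cases t with
    | nil => exfalso; apply hxy; rw [← hax]; simpa using hl
    | cons b t' =>
      have hne : (b :: t') ≠ [] := by simp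
      have hl' : (b :: t').getLast? = some y := by rw [← hl]; rfl
      have hlast : (b :: t').getLast hne = y := by
        have := List.getLast?_eq_getLast hne
        rw [hl'] at this; exact (Option.some_injective _ this).symm
      have hsplit : (b :: t').dropLast ++ [y] = b :: t' := by
        conv_rhs => rw [← List.dropLast_append_getLast hne, hlast]
      rw [hax]
      show x :: (b :: t') = x :: ((b :: t').dropLast ++ [y])
      rw [hsplit]

lemma mem_of_head?_eq {V : Type} {p : List V} {x : V} (h : p.head? = some x) : x ∈ p := by
  cases p with
  | nil => simp at h
  | cons a t => simp at h; simp [h]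

lemma mem_of_getLast?_eq {V : Type} {p : List V} {x : V} (h : p.getLast? = some x) : x ∈ p := by
  cases p with
  | nil => simp at h
  | cons a t =>
    have hne : (a :: t) ≠ [] := by simp
    have := List.getLast?_eq_getLast hne
    rw [h] at this
    have : (a :: t).getLast hne = x := (Option.some_injective _ this).symm
    rw [← this]
    exact List.getLast_mem hne

/-- **Sharpness of the semi-degree bound.**  Let `k ≥ 1` and let `n = 2m` be a large even
integer.  Let `D` be the union of two complete digraphs `Q₁, Q₂`, each on `n/2 + k = m + k`
vertices, sharing exactly `2k` vertices.  Then `δ⁰(D) = n/2 + k - 1`; moreover for any two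
distinct vertices `x₁, y₁` of `Q₁ ∩ Q₂`, every directed path from `x₁` to `y₁` all of whose
vertices avoid `Q₁ ∩ Q₂` except possibly `x₁, y₁` has length at most `n/2 - k + 1`
(i.e. at most `m - k + 2` vertices); consequently, taking `H` to be `k` pairwise disjoint
arcs, `D` is not arbitrary Hamiltonian `H`-linked. -/
theorem semidegree_bound_best_possible (k : ℕ) (hk : 1 ≤ k)
    (α β : ℝ) (hα0 : 0 < α) (hα1 : α < 1) (hβ0 : 0 < β) (hβ1 : β < 1) :
    ∃ n₀ : ℕ, ∀ m : ℕ, n₀ ≤ 2 * m →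
      ∀ (V : Type) [Fintype V] (Q₁ Q₂ : Set V) (A : V → V → Prop),
        Fintype.card V = 2 * m →
        Q₁ ∪ Q₂ = Set.univ →
        Q₁.ncard = m + k → Q₂.ncard = m + k → (Q₁ ∩ Q₂).ncard = 2 * k →
        (∀ u v, A u v ↔ u ≠ v ∧ ((u ∈ Q₁ ∧ v ∈ Q₁) ∨ (u ∈ Q₂ ∧ v ∈ Q₂))) →
        ((∀ v, m + k - 1 ≤ outDeg A v ∧ m + k - 1 ≤ inDeg A v) ∧
          (∃ v, outDeg A v = m + k - 1 ∨ inDeg A v = m + k - 1)) ∧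
        (∀ x₁ y₁, x₁ ∈ Q₁ ∩ Q₂ → y₁ ∈ Q₁ ∩ Q₂ → x₁ ≠ y₁ →
          ∀ p : List V, IsDipathFrom A x₁ y₁ p →
            (∀ z ∈ p, z ∉ Q₁ ∩ Q₂ ∨ z = x₁ ∨ z = y₁) →
            p.length ≤ m - k + 2) ∧
        ¬ ArbHamHLinked A
            (fun i : Fin k => ((Sum.inl i : Fin k ⊕ Fin k), (Sum.inr i : Fin k ⊕ Fin k)))
            α β := by
  refine ⟨max (10 * k + 10) (max (⌈(4:ℝ)/β⌉₊ + 1) (max ⌈4*(k:ℝ)/α⌉₊ (⌈5*(k:ℝ)/(1-β)⌉₊ + 1))), ?_⟩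
  intro m hn₀ V _ Q₁ Q₂ A hcard hU hQ1 hQ2 hQ12 hA
  -- numeric consequences
  have hm1 : 10 * k + 10 ≤ 2 * m := le_trans (le_max_left _ _) hn₀
  have hβm : (4 : ℝ) < β * (2 * m) := by
    have h1 : ⌈(4:ℝ)/β⌉₊ < 2 * m :=
      lt_of_lt_of_le (Nat.lt_succ_self _) (le_trans (le_max_left _ _) (le_trans (le_max_right _ _) hn₀))
    have h2 : (4:ℝ)/β < 2 * m := by
      have := Nat.lt_of_ceil_lt h1; push_cast at this; exact this
    calc (4:ℝ) = (4/β) * β := by field_simp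
      _ < (2*m) * β := mul_lt_mul_of_pos_right h2 hβ0
      _ = β * (2*m) := by ring
  have hαm : 4 * (k:ℝ) ≤ α * (2 * m) := by
    have h1 : ⌈4*(k:ℝ)/α⌉₊ ≤ 2 * m :=
      le_trans (le_max_left _ _) (le_trans (le_max_right _ _) (le_trans (le_max_right _ _) hn₀))
    have h2 : 4*(k:ℝ)/α ≤ 2 * m := by
      have := le_trans (Nat.le_ceil _) (by exact_mod_cast h1 : (⌈4*(k:ℝ)/α⌉₊ : ℝ) ≤ (2*m : ℕ))
      push_cast at this; exact this
    calc 4*(k:ℝ) = (4*(k:ℝ)/α) * α := by field_simp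
      _ ≤ (2*m) * α := mul_le_mul_of_nonneg_right h2 hα0.le
      _ = α * (2*m) := by ring
  have hβm2 : β * (2 * m) < 2 * (m:ℝ) - 5 * k := by
    have h1 : ⌈5*(k:ℝ)/(1-β)⌉₊ < 2 * m :=
      lt_of_lt_of_le (Nat.lt_succ_self _)
        (le_trans (le_max_right _ _) (le_trans (le_max_right _ _) (le_trans (le_max_right _ _) hn₀)))
    have h2 : 5*(k:ℝ)/(1-β) < 2 * m := by
      have := Nat.lt_of_ceil_lt h1; push_cast at this; exact this
    have hβ' : (0:ℝ) < 1 - β := by linarith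
    have h3 : 5*(k:ℝ) < (1-β) * (2*m) := by
      calc 5*(k:ℝ) = (5*(k:ℝ)/(1-β)) * (1-β) := by field_simp
        _ < (2*m) * (1-β) := mul_lt_mul_of_pos_right h2 hβ'
        _ = (1-β) * (2*m) := by ring
    nlinarith
  have h5k : 5 * k ≤ 2 * m := by omega
  -- basic set facts
  have hQ12sub : Q₁ ∩ Q₂ ⊆ Q₁ := Set.inter_subset_left
  have hd1 : Q₁ \ Q₂ = Q₁ \ (Q₁ ∩ Q₂) := by ext z; simp
  have hd2 : Q₂ \ Q₁ = Q₂ \ (Q₁ ∩ Q₂) := by ext z; simp [and_comm]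
  have hc1 : (Q₁ \ Q₂).ncard = m - k := by
    rw [hd1, Set.ncard_diff hQ12sub (Set.toFinite _), hQ1, hQ12]; omega
  have hc2 : (Q₂ \ Q₁).ncard = m - k := by
    rw [hd2, Set.ncard_diff Set.inter_subset_right (Set.toFinite _), hQ2, hQ12]; omega
  have hsymm : ∀ u v, A u v → A v u := by
    intro u v h
    rcases (hA u v).mp h with ⟨hne, h'⟩
    exact (hA v u).mpr ⟨hne.symm, by tauto⟩
  -- Part 1
  have part1 : (∀ v, m + k - 1 ≤ outDeg A v ∧ m + k - 1 ≤ inDeg A v) ∧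
      (∃ v, outDeg A v = m + k - 1 ∨ inDeg A v = m + k - 1) := by
    have hio : ∀ v, inDeg A v = outDeg A v := by
      intro v
      unfold inDeg outDeg
      congr 1
      ext u
      exact ⟨fun h => hsymm u v h, fun h => hsymm v u h⟩
    constructor
    · intro v
      have hv : v ∈ Q₁ ∪ Q₂ := by rw [hU]; trivial
      have key : ∀ Q : Set V, v ∈ Q → Q.ncard = m + k →
          (∀ u w, u ∈ Q → w ∈ Q → u ≠ w → A u w) → m + k - 1 ≤ outDeg A v := by
        intro Q hvQ hQc harc
        have hsub : Q \ {v} ⊆ {u | A v u} := by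
          intro u hu
          exact harc v u hvQ hu.1 (Ne.symm hu.2)
        have := Set.ncard_le_ncard hsub (Set.toFinite _)
        rw [Set.ncard_diff_singleton_of_mem hvQ, hQc] at this
        exact this
      have hge : m + k - 1 ≤ outDeg A v := by
        rcases hv with h | h
        · exact key Q₁ h hQ1 (fun u w hu hw hne => (hA u w).mpr ⟨hne, Or.inl ⟨hu, hw⟩⟩)
        · exact key Q₂ h hQ2 (fun u w hu hw hne => (hA u w).mpr ⟨hne, Or.inr ⟨hu, hw⟩⟩)
      exact ⟨hge, by rw [hio]; exact hge⟩
    · have hpos : 0 < (Q₁ \ Q₂).ncard := by omega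
      have hne : (Q₁ \ Q₂).Nonempty := by
        rw [← Set.ncard_pos (Set.toFinite _)]; exact hpos
      obtain ⟨v, hv⟩ := hne
      refine ⟨v, Or.inl ?_⟩
      have hset : {u | A v u} = Q₁ \ {v} := by
        ext u
        simp only [Set.mem_setOf_eq, Set.mem_diff, Set.mem_singleton_iff]
        constructor
        · intro h
          rcases (hA v u).mp h with ⟨hne', h'⟩
          rcases h' with ⟨_, hu⟩ | ⟨hv2, _⟩
          · exact ⟨hu, fun he => hne' he.symm⟩
          · exact absurd hv2 hv.2
        · intro ⟨hu, hne'⟩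
          exact (hA v u).mpr ⟨fun he => hne' he.symm, Or.inl ⟨hv.1, hu⟩⟩
      unfold outDeg
      rw [hset, Set.ncard_diff_singleton_of_mem hv.1, hQ1]
  -- Part 2
  have part2 : ∀ x₁ y₁, x₁ ∈ Q₁ ∩ Q₂ → y₁ ∈ Q₁ ∩ Q₂ → x₁ ≠ y₁ →
      ∀ p : List V, IsDipathFrom A x₁ y₁ p →
        (∀ z ∈ p, z ∉ Q₁ ∩ Q₂ ∨ z = x₁ ∨ z = y₁) →
        p.length ≤ m - k + 2 := by
    intro x₁ y₁ hx hy hxy p hp hz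
    have hdec := path_decomp A x₁ y₁ p hp hxy
    set I := listInterior p with hI
    have hnd : p.Nodup := hp.2.2.2.2 hxy
    rw [hdec] at hnd
    have hx₁I : x₁ ∉ I := by
      intro h
      exact (List.nodup_cons.mp hnd).1 (List.mem_append.mpr (Or.inl h))
    have hrest : (I ++ [y₁]).Nodup := (List.nodup_cons.mp hnd).2
    have hIa : I.Nodup := hrest.of_append_left
    have hy₁I : y₁ ∉ I := by
      intro h
      have := List.disjoint_of_nodup_append hrest h
      simp at this
    have hzI : ∀ z ∈ I, z ∉ Q₁ ∩ Q₂ := by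
      intro z hzI
      have hzp : z ∈ p := by rw [hdec]; simp [hzI]
      rcases hz z hzp with h | rfl | rfl
      · exact h
      · exact absurd hzI hx₁I
      · exact absurd hzI hy₁I
    have hchainI : I.Chain' A := by
      refine hp.1.infix ⟨[x₁], [y₁], ?_⟩
      rw [hdec]; simp
    have hlenp : p.length = I.length + 2 := by
      rw [hdec]; simp
    have hIlen : I.length ≤ m - k := by
      rcases chain_one_side Q₁ Q₂ A hA hU I hchainI hzI with hs | hs
      · have := nodup_length_le (Q₁ \ Q₂) I hIa hs
        omega
      · have := nodup_length_le (Q₂ \ Q₁) I hIa hs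
        omega
    omega
  refine ⟨part1, part2, ?_⟩
  -- Part 3
  intro hArb
  have i0 : Fin k := ⟨0, hk⟩
  have hcard12 : Fintype.card ↥(Q₁ ∩ Q₂) = 2 * k := by
    rw [← Nat.card_eq_fintype_card, Nat.card_coe_set_eq, hQ12]
  have hcardW : Fintype.card (Fin k ⊕ Fin k) = 2 * k := by simp [two_mul]
  obtain ⟨e⟩ : Nonempty ((Fin k ⊕ Fin k) ≃ ↥(Q₁ ∩ Q₂)) :=
    ⟨Fintype.equivOfCardEq (by rw [hcardW, hcard12])⟩
  set f : (Fin k ⊕ Fin k) → V := fun w => (e w : V) with hf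
  have hfinj : Function.Injective f := fun a b h => e.injective (Subtype.ext h)
  set N : Fin k → ℕ := fun i => if i = i0 then 2*m - 5*k + 4 else 4 with hN
  have hN0 : N i0 = 2*m - 5*k + 4 := by simp [hN]
  have hN4 : ∀ i, 4 ≤ N i := by
    intro i; simp only [hN]; split <;> omega
  have hsum : (∑ i, if (N i : ℝ) < β * Fintype.card V then (N i : ℝ) else 0)
      ≤ α * Fintype.card V := by
    rw [hcard]
    have hcast : ((2*m : ℕ) : ℝ) = 2 * (m:ℝ) := by push_cast; ring
    rw [hcast]
    have hterm : ∀ i ∈ Finset.univ,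
        (if (N i : ℝ) < β * (2*(m:ℝ)) then (N i : ℝ) else 0) ≤ 4 := by
      intro i _
      by_cases hi : i = i0
      · subst hi
        have hnc : ¬ ((N i : ℝ) < β * (2*(m:ℝ))) := by
          rw [hN0]
          have hc2 : ((2*m - 5*k + 4 : ℕ) : ℝ) = 2*(m:ℝ) - 5*k + 4 := by
            rw [Nat.cast_add, Nat.cast_sub h5k]; push_cast; ring
          rw [hc2]
          push_neg
          linarith
        rw [if_neg hnc]; norm_num
      · have hni : N i = 4 := by simp [hN, hi]
        rw [hni]; split <;> norm_num
    have hb := Finset.sum_le_card_nsmul Finset.univ _ 4 hterm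
    have hcu : (Finset.univ : Finset (Fin k)).card = k := by simp
    rw [hcu] at hb
    calc (∑ i, if (N i : ℝ) < β * (2*(m:ℝ)) then (N i : ℝ) else 0) ≤ k • (4:ℝ) := hb
      _ = 4 * (k:ℝ) := by rw [nsmul_eq_mul]; ring
      _ ≤ α * (2 * (m:ℝ)) := hαm
  have hcount : (∑ i, (N i - 1)) + Fintype.card (Fin k ⊕ Fin k) = Fintype.card V := by
    rw [hcard, hcardW]
    have hterm : ∀ i : Fin k, N i - 1 = 3 + (if i = i0 then 2*m - 5*k else 0) := by
      intro i; simp only [hN]; split <;> omega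
    rw [Finset.sum_congr rfl (fun i _ => hterm i), Finset.sum_add_distrib,
      Finset.sum_const, Finset.sum_ite_eq' Finset.univ i0 (fun _ => 2*m-5*k)]
    simp only [Finset.mem_univ, if_true, Finset.card_univ, Fintype.card_fin, smul_eq_mul]
    omega
  obtain ⟨g, hg1, hg2, _⟩ := hArb f hfinj N hN4 hsum hcount
  set x₁ := f (Sum.inl i0) with hx₁def
  set y₁ := f (Sum.inr i0) with hy₁def
  have hx : x₁ ∈ Q₁ ∩ Q₂ := (e (Sum.inl i0)).2
  have hy : y₁ ∈ Q₁ ∩ Q₂ := (e (Sum.inr i0)).2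
  have hxy : x₁ ≠ y₁ := by
    intro h
    exact absurd (hfinj h) (by simp)
  have hdip : IsDipathFrom A x₁ y₁ (g i0) := (hg1 i0).1
  have hlen : (g i0).length = N i0 + 1 := (hg1 i0).2
  have havoid : ∀ z ∈ g i0, z ∉ Q₁ ∩ Q₂ ∨ z = x₁ ∨ z = y₁ := by
    intro z hzmem
    by_cases hzQ : z ∈ Q₁ ∩ Q₂
    · right
      by_contra hcon
      push_neg at hcon
      have hfw : f (e.symm ⟨z, hzQ⟩) = z := by simp [hf]
      obtain ⟨j, hji, hzgj⟩ : ∃ j : Fin k, j ≠ i0 ∧ z ∈ g j := by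
        rcases hww : e.symm ⟨z, hzQ⟩ with j | j
        · rw [hww] at hfw
          refine ⟨j, ?_, ?_⟩
          · intro h; apply hcon.1; rw [← hfw, h]
          · have hh : (g j).head? = some (f (Sum.inl j)) := (hg1 j).1.2.1
            rw [hfw] at hh
            exact mem_of_head?_eq hh
        · rw [hww] at hfw
          refine ⟨j, ?_, ?_⟩
          · intro h; apply hcon.2; rw [← hfw, h]
          · have hh : (g j).getLast? = some (f (Sum.inr j)) := (hg1 j).1.2.2.1
            rw [hfw] at hh
            exact mem_of_getLast?_eq hh
      have hdecomp := path_decomp A x₁ y₁ (g i0) hdip hxy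
      have hzint : z ∈ listInterior (g i0) := by
        rw [hdecomp] at hzmem
        rcases List.mem_cons.mp hzmem with h | h
        · exact absurd h hcon.1
        · rcases List.mem_append.mp h with h' | h'
          · exact h'
          · simp at h'
            exact absurd h' hcon.2
      exact hg2 i0 j (fun h => hji h.symm) z hzint hzgj
    · exact Or.inl hzQ
  have hle := part2 x₁ y₁ hx hy hxy (g i0) hdip havoid
  omega
end

section
/- Let k ≥ 5 and let n be an integer such that l = (n + 3k − 1)/(2(3k − 2)) is an integer with l ≥ 2. Let D be the digraph on n vertices obtained from the disjoint union of an independent set I of (n − 3k + 1)/2 vertices and l pairwise disjoint complete digraphs each on 3k − 2 vertices, by adding all arcs in both directions between I and the complete digraphs. Then δ⁰(D) = (n + 3k − 5)/2 ≥ (n + 2k)/2; yet, taking H to be k pairwise disjoint arcs lying inside a single one of the l complete digraphs and prescribing the lengths n_1 = ⋯ = n_{k−1} = 3 and n_k = n − 4k + 3, D contains no Hamiltonian (NH)-subdivision for this choice. Hence the condition n_i ≥ 4 in the main theorem cannot be weakened to n_i ≥ 3. -/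
open scoped Classical

lemma len4_aux {α : Type*} {p : List α} (h : p.length = 4) :
    ∃ a b c d : α, p = [a, b, c, d] := by
  match p, h with
  | [a,b,c,d], _ => exact ⟨a,b,c,d,rfl⟩

lemma mem_of_head? {α : Type*} {p : List α} {a : α} (h : p.head? = some a) : a ∈ p := by
  cases p with
  | nil => simp at h
  | cons x xs => simp_all

lemma mem_of_getLast? {α : Type*} {p : List α} {a : α} (h : p.getLast? = some a) : a ∈ p := by
  cases p with
  | nil => simp at h
  | cons x xs =>
      rw [List.getLast?_eq_getLast (by simp : (x :: xs) ≠ [])] at h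
      rw [← Option.some_inj.mp h]
      exact List.getLast_mem _

/-- **The condition `nᵢ ≥ 4` is necessary.**  Let `k ≥ 5` and `l ≥ 2` with
`2(3k-2)l = n + 3k - 1`.  Let `D` be obtained from an independent set `I` of
`(n - 3k + 1)/2` vertices together with `l` disjoint complete digraphs `B j`, each on
`3k - 2` vertices, by adding all arcs in both directions between `I` and the `B j`.
Then `δ⁰(D) = (n + 3k - 5)/2 ≥ (n + 2k)/2`, yet for `H` consisting of `k` disjoint arcs
inside a single `B j₀` and lengths `n₁ = ⋯ = n_{k-1} = 3`, `n_k = n - 4k + 3`, there is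
no Hamiltonian `(N H)`-subdivision. -/
theorem min_length_four_is_necessary (k l n : ℕ) (hk : 5 ≤ k) (hl : 2 ≤ l)
    (hln : 2 * (3 * k - 2) * l + 1 = n + 3 * k) :
    ∀ (V : Type) [Fintype V] (I : Set V) (B : Fin l → Set V) (A : V → V → Prop),
      Fintype.card V = n →
      2 * I.ncard + 3 * k = n + 1 →
      (∀ j, (B j).ncard = 3 * k - 2) →
      (∀ j j', j ≠ j' → Disjoint (B j) (B j')) →
      (∀ j, Disjoint I (B j)) →
      I ∪ (⋃ j, B j) = Set.univ →
      (∀ u v, A u v ↔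
        ((u ∈ I ∧ v ∈ ⋃ j, B j) ∨ (u ∈ ⋃ j, B j ∧ v ∈ I) ∨
          (∃ j, u ∈ B j ∧ v ∈ B j ∧ u ≠ v))) →
      ∀ d : ℕ, 2 * d + 5 = n + 3 * k →
        ((∀ v, d ≤ outDeg A v ∧ d ≤ inDeg A v) ∧
          (∃ v, outDeg A v = d ∨ inDeg A v = d) ∧
          n + 2 * k ≤ 2 * d) ∧
        (∀ j₀ : Fin l, ∀ u : Fin k ⊕ Fin k → V, Function.Injective u →
          (∀ z, u z ∈ B j₀) →
          ∀ nk : ℕ, nk + 4 * k = n + 3 →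
            ¬ ∃ g : Fin k → List V,
                IsHamSubdivision A (fun i => (u (Sum.inl i), u (Sum.inr i)))
                  (fun i => if (i : ℕ) < k - 1 then 3 else nk) g) := by
  intro V _ I B A hcard hI hB hBdisj hIB hunion hA d hd
  -- basic helpers
  have hnotI : ∀ (j : Fin l) (v : V), v ∈ B j → v ∉ I :=
    fun j v h hI' => Set.disjoint_left.mp (hIB j) hI' h
  have hBeq : ∀ (j j' : Fin l) (v : V), v ∈ B j → v ∈ B j' → j = j' := by
    intro j j' v h h'
    by_contra hne
    exact Set.disjoint_left.mp (hBdisj j j' hne) h h'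
  have hnotU : ∀ v : V, v ∈ I → v ∉ ⋃ j, B j := by
    intro v hv hvU
    obtain ⟨j, hj⟩ := Set.mem_iUnion.mp hvU
    exact hnotI j v hj hv
  have hmem : ∀ v : V, v ∈ I ∨ ∃ j, v ∈ B j := by
    intro v
    have : v ∈ I ∪ ⋃ j, B j := hunion ▸ Set.mem_univ v
    simpa using this
  have hUcard : I.ncard + (⋃ j, B j).ncard = n := by
    have hdisj : Disjoint I (⋃ j, B j) := Set.disjoint_iUnion_right.2 hIB
    rw [← Set.ncard_union_eq hdisj (Set.toFinite _) (Set.toFinite _), hunion,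
      Set.ncard_univ, Nat.card_eq_fintype_card, hcard]
  have hInOut : ∀ v : V, inDeg A v = outDeg A v := by
    intro v
    unfold inDeg outDeg
    congr 1
    ext w
    simp only [Set.mem_setOf_eq, hA]
    constructor <;> rintro (⟨h1, h2⟩ | ⟨h1, h2⟩ | ⟨j, h1, h2, h3⟩)
    · exact Or.inr (Or.inl ⟨h2, h1⟩)
    · exact Or.inl ⟨h2, h1⟩
    · exact Or.inr (Or.inr ⟨j, h2, h1, h3.symm⟩)
    · exact Or.inr (Or.inl ⟨h2, h1⟩)
    · exact Or.inl ⟨h2, h1⟩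
    · exact Or.inr (Or.inr ⟨j, h2, h1, h3.symm⟩)
  have hdegI : ∀ v ∈ I, outDeg A v = (⋃ j, B j).ncard := by
    intro v hv
    unfold outDeg
    congr 1
    ext w
    simp only [Set.mem_setOf_eq, hA]
    constructor
    · rintro (⟨_, h⟩ | ⟨h, _⟩ | ⟨j, h, _, _⟩)
      · exact h
      · exact absurd h (hnotU v hv)
      · exact absurd hv (hnotI j v h)
    · intro h
      exact Or.inl ⟨hv, h⟩
  have hdegB : ∀ (j : Fin l), ∀ v ∈ B j, outDeg A v = d := by
    intro j v hv
    have hset : {w | A v w} = I ∪ (B j \ {v}) := by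
      ext w
      simp only [Set.mem_setOf_eq, hA, Set.mem_union, Set.mem_diff, Set.mem_singleton_iff]
      constructor
      · rintro (⟨h1, _⟩ | ⟨_, h2⟩ | ⟨j', h1, h2, h3⟩)
        · exact absurd hv (fun h => hnotI j v h h1)
        · exact Or.inl h2
        · exact Or.inr ⟨(hBeq j' j v h1 hv) ▸ h2, fun he => h3 he.symm⟩
      · rintro (h | ⟨h1, h2⟩)
        · exact Or.inr (Or.inl ⟨Set.mem_iUnion.mpr ⟨j, hv⟩, h⟩)
        · exact Or.inr (Or.inr ⟨j, hv, h1, fun he => h2 he.symm⟩)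
    have hdisj : Disjoint I (B j \ {v}) := (hIB j).mono_right Set.diff_subset
    have hc : (B j \ {v}).ncard = 3 * k - 2 - 1 := by
      rw [Set.ncard_diff_singleton_of_mem hv, hB j]
    unfold outDeg
    rw [hset, Set.ncard_union_eq hdisj (Set.toFinite _) (Set.toFinite _), hc]
    -- compute : 2 * I.ncard = n + 1 - 3k ; d from 2d+5 = n+3k
    omega
  constructor
  · -- degree statements
    have hkey : ∀ v : V, outDeg A v = d ∨ outDeg A v = d + 2 := by
      intro v
      rcases hmem v with hv | ⟨j, hv⟩
      · right
        rw [hdegI v hv]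
        omega
      · left; exact hdegB j v hv
    refine ⟨fun v => ?_, ?_, by omega⟩
    · rcases hkey v with h | h <;> rw [hInOut] <;> omega
    · have hne : (B ⟨0, by omega⟩).Nonempty := by
        apply Set.nonempty_of_ncard_ne_zero
        rw [hB]; omega
      obtain ⟨v, hv⟩ := hne
      exact ⟨v, Or.inl (hdegB _ v hv)⟩
  · -- no Hamiltonian subdivision
    rintro j₀ u hu huB nk hnk ⟨g, ⟨hpath, hdisjint, -⟩⟩
    -- every short path has an internal vertex in B j₀ distinct from its endpoints
    have hkey : ∀ i : Fin k, (i : ℕ) < k - 1 →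
        ∃ w, w ∈ listInterior (g i) ∧ w ∈ B j₀ ∧
          w ≠ u (Sum.inl i) ∧ w ≠ u (Sum.inr i) := by
      intro i hi
      obtain ⟨⟨hchain, hhead, hlast, -, hnodup⟩, hlen⟩ := hpath i
      simp only [if_pos hi] at hlen
      obtain ⟨a, x, y, b, heq⟩ := len4_aux hlen
      rw [heq] at hchain hhead hlast hnodup ⊢
      have ha : a = u (Sum.inl i) := by simpa using hhead
      have hb : b = u (Sum.inr i) := by
        have := hlast
        rw [List.getLast?_eq_getLast (by simp : ([a, x, y, b] : List V) ≠ [])] at this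
        simpa using this
      have hab : a ≠ b := by
        rw [ha, hb]; intro h
        exact Sum.inl_ne_inr (hu h)
      have hnd : ([a, x, y, b] : List V).Nodup := hnodup (by simpa [ha, hb] using hab)
      have hne4 : a ≠ x ∧ a ≠ y ∧ x ≠ b ∧ y ≠ b := by
        simp only [List.nodup_cons, List.mem_cons, List.not_mem_nil, or_false,
          List.mem_singleton, List.nodup_nil, and_true] at hnd
        tauto
      have haB : a ∈ B j₀ := ha ▸ huB (Sum.inl i)
      have hbB : b ∈ B j₀ := hb ▸ huB (Sum.inr i)
      simp only [List.Chain', List.isChain_cons_cons, List.isChain_singleton, and_true] at hchain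
      obtain ⟨hax, hxy, hyb⟩ := hchain
      have hint : listInterior ([a, x, y, b] : List V) = [x, y] := rfl
      -- x ∈ I ∨ x ∈ B j₀
      have hx : x ∈ I ∨ x ∈ B j₀ := by
        rcases (hA a x).1 hax with ⟨h1, _⟩ | ⟨_, h2⟩ | ⟨j', h1, h2, _⟩
        · exact absurd h1 (hnotI j₀ a haB)
        · exact Or.inl h2
        · exact Or.inr ((hBeq j' j₀ a h1 haB) ▸ h2)
      rcases hx with hxI | hxB
      · -- then y ∈ B j₀
        have hyB : y ∈ B j₀ := by
          rcases (hA y b).1 hyb with ⟨h1, _⟩ | ⟨h1, h2⟩ | ⟨j', h1, h2, _⟩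
          · -- y ∈ I; but x ∈ I and A x y forces y ∈ ⋃ B
            rcases (hA x y).1 hxy with ⟨_, h3⟩ | ⟨h3, _⟩ | ⟨j'', h3, _, _⟩
            · exact absurd h3 (hnotU y h1)
            · exact absurd h3 (hnotU x hxI)
            · exact absurd hxI (hnotI j'' x h3)
          · exact absurd h2 (hnotI j₀ b hbB)
          · exact (hBeq j' j₀ b h2 hbB) ▸ h1
        refine ⟨y, ?_, hyB, ?_, ?_⟩
        · rw [hint]; simp
        · rw [← ha]; exact fun h => hne4.2.1 h.symm
        · rw [← hb]; exact hne4.2.2.2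
      · refine ⟨x, ?_, hxB, ?_, ?_⟩
        · rw [hint]; simp
        · rw [← ha]; exact fun h => hne4.1 h.symm
        · rw [← hb]; exact hne4.2.2.1
    choose w hw1 hw2 hw3 hw4 using hkey
    have hk1 : k - 1 ≤ k := Nat.sub_le k 1
    have hcast : ∀ i : Fin (k - 1), ((Fin.castLE hk1 i : Fin k) : ℕ) < k - 1 := by
      intro i; simpa using i.isLt
    set f : (Fin k ⊕ Fin k) ⊕ Fin (k - 1) → V := fun z =>
      match z with
      | Sum.inl z => u z
      | Sum.inr i => w (Fin.castLE hk1 i) (hcast i)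
      with hf
    -- f maps into B j₀
    have hfB : ∀ z, f z ∈ B j₀ := by
      rintro (z | i)
      · exact huB z
      · exact hw2 _ _
    -- u z belongs to its own path
    have huMem : ∀ i : Fin k, u (Sum.inl i) ∈ g i ∧ u (Sum.inr i) ∈ g i := by
      intro i
      obtain ⟨⟨-, hhead, hlast, -, -⟩, -⟩ := hpath i
      exact ⟨mem_of_head? hhead, mem_of_getLast? hlast⟩
    -- w i ∈ g i
    have hwMem : ∀ (i : Fin k) (h : (i : ℕ) < k - 1), w i h ∈ g i :=
      fun i h => List.mem_of_mem_tail (List.mem_of_mem_dropLast (hw1 i h))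
    -- w i ≠ u z for all z
    have hwu : ∀ (i : Fin k) (h : (i : ℕ) < k - 1) (z : Fin k ⊕ Fin k), w i h ≠ u z := by
      intro i h z heq
      obtain (⟨j, rfl⟩ | ⟨j, rfl⟩) : (∃ j, z = Sum.inl j) ∨ (∃ j, z = Sum.inr j) := by
        cases z with
        | inl j => exact Or.inl ⟨j, rfl⟩
        | inr j => exact Or.inr ⟨j, rfl⟩
      · by_cases hij : i = j
        · exact hw3 i h (hij ▸ heq)
        · exact hdisjint i j hij _ (hw1 i h) (heq ▸ (huMem j).1)
      · by_cases hij : i = j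
        · exact hw4 i h (hij ▸ heq)
        · exact hdisjint i j hij _ (hw1 i h) (heq ▸ (huMem j).2)
    -- w values pairwise distinct
    have hww : ∀ (i j : Fin k) (hi : (i : ℕ) < k - 1) (hj : (j : ℕ) < k - 1),
        i ≠ j → w i hi ≠ w j hj := by
      intro i j hi hj hij heq
      exact hdisjint i j hij _ (hw1 i hi) (heq ▸ hwMem j hj)
    have hfinj : Function.Injective f := by
      rintro (z₁ | i₁) (z₂ | i₂) heq
      · exact congrArg Sum.inl (hu heq)
      · exact absurd heq.symm (hwu _ _ _)
      · exact absurd heq (hwu _ _ _)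
      · congr 1
        by_contra hne
        have : Fin.castLE hk1 i₁ ≠ Fin.castLE hk1 i₂ := by
          intro h
          exact hne (Fin.castLE_injective hk1 h)
        exact hww _ _ _ _ this heq
    -- cardinality contradiction
    have hcard2 : Nat.card ((Fin k ⊕ Fin k) ⊕ Fin (k - 1)) ≤ Nat.card (B j₀) := by
      refine Nat.card_le_card_of_injective (fun z => ⟨f z, hfB z⟩) ?_
      intro z₁ z₂ h
      exact hfinj (Subtype.mk_eq_mk.mp h)
    rw [Nat.card_coe_set_eq, hB] at hcard2
    simp only [Nat.card_eq_fintype_card, Fintype.card_sum, Fintype.card_fin] at hcard2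
    omega
end

section
/- (Connecting Lemma) For every ε′ ∈ (0,1) there exist γ > 0 and n₀ such that the following holds for all n ≥ n₀ and all k ≤ γn. Let D be a digraph on n vertices with δ⁰(D) ≥ n/2 + k which does not satisfy the extremal condition EC with parameter ε′. Let P_1 and P_2 be two vertex-disjoint directed paths in D, each of length at most 3, where P_1 ends at a vertex b and P_2 starts at a vertex c, and let U ⊆ V(D) be any set of at most γn forbidden vertices. Then D contains a directed path from b to c with at most two internal vertices, all of whose internal vertices lie outside U ∪ V(P_1) ∪ V(P_2). -/
open scoped Classical

/-- The number of arcs directed from `S` to `T`. -/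
noncomputable def arcsCount {V : Type*} (A : V → V → Prop) (S T : Set V) : ℕ :=
  {p : V × V | p.1 ∈ S ∧ p.2 ∈ T ∧ A p.1 p.2}.ncard

/-- The extremal condition **EC** with parameter `ε'`: there are (not necessarily
disjoint) vertex sets `U₁, U₂` of size at least `(1/2 - ε')n` with at most `(ε'n)²`
arcs from `U₁` to `U₂`. -/
def SatisfiesEC {V : Type*} [Fintype V] (A : V → V → Prop) (ε' : ℝ) : Prop :=
  ∃ U₁ U₂ : Set V,
    (1/2 - ε') * Fintype.card V ≤ (U₁.ncard : ℝ) ∧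
    (1/2 - ε') * Fintype.card V ≤ (U₂.ncard : ℝ) ∧
    (arcsCount A U₁ U₂ : ℝ) ≤ (ε' * Fintype.card V)^2

/-- **Connecting Lemma.** For every `ε' ∈ (0,1)` there are `γ > 0` and `n₀` such that for
all `n ≥ n₀`, `k ≤ γn`: if `D` is a digraph on `n` vertices with `δ⁰(D) ≥ n/2 + k` not
satisfying **EC** with parameter `ε'`, `P₁, P₂` are disjoint directed paths of length at
most 3 with `P₁` ending at `b` and `P₂` starting at `c`, and `U` is a set of at most `γn`
forbidden vertices, then there is a directed path from `b` to `c` with at most two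
internal vertices, all of them outside `U ∪ V(P₁) ∪ V(P₂)`. -/
theorem connecting_lemma (ε' : ℝ) (hε'0 : 0 < ε') (hε'1 : ε' < 1) :
    ∃ (γ : ℝ) (n₀ : ℕ), 0 < γ ∧
      ∀ n k : ℕ, n₀ ≤ n → (k : ℝ) ≤ γ * n →
        ∀ (V : Type) [Fintype V] (A : V → V → Prop),
          (∀ v, ¬ A v v) →
          Fintype.card V = n →
          (∀ v : V, (n : ℝ) / 2 + k ≤ (outDeg A v : ℝ) ∧
                    (n : ℝ) / 2 + k ≤ (inDeg A v : ℝ)) →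
          ¬ SatisfiesEC A ε' →
          ∀ (p₁ p₂ : List V) (b c : V),
            p₁.Chain' A → p₁.Nodup → p₁.length ≤ 4 → p₁.getLast? = some b →
            p₂.Chain' A → p₂.Nodup → p₂.length ≤ 4 → p₂.head? = some c →
            (∀ x ∈ p₁, x ∉ p₂) →
            ∀ U : Set V, (U.ncard : ℝ) ≤ γ * n →
              ∃ q : List V, IsDipathFrom A b c q ∧ (listInterior q).length ≤ 2 ∧
                ∀ x ∈ listInterior q, x ∉ U ∧ x ∉ p₁ ∧ x ∉ p₂ := by

  refine ⟨ε'/2, max 1 ⌈(16:ℝ)/ε'⌉₊, by positivity, ?_⟩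
  intro n k hn hk V _ A hirr hcard hdeg hEC p₁ p₂ b c hc1 hnd1 hl1 hlast1 hc2 hnd2 hl2 hhead2 hdisj U hU
  have hn1 : 1 ≤ n := le_trans (le_max_left _ _) hn
  have hnpos : (0:ℝ) < n := by exact_mod_cast hn1
  have hn16 : (16:ℝ)/ε' ≤ n := by
    have h := le_trans (le_max_right _ _) hn
    calc (16:ℝ)/ε' ≤ ⌈(16:ℝ)/ε'⌉₊ := Nat.le_ceil _
    _ ≤ n := by exact_mod_cast h
  have h8 : (8:ℝ) ≤ ε'/2 * n := by
    rw [div_le_iff₀ hε'0] at hn16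
    nlinarith
  have hb : b ∈ p₁ := List.mem_of_getLast? hlast1
  have hc : c ∈ p₂ := List.mem_of_mem_head? (by rw [hhead2]; exact rfl)
  have hbc : b ≠ c := fun h => hdisj b hb (h ▸ hc)
  set Bad : Set V := U ∪ {x | x ∈ p₁} ∪ {x | x ∈ p₂} with hBad
  have hlist1 : ({x | x ∈ p₁} : Set V).ncard ≤ 4 := by
    have : ({x | x ∈ p₁} : Set V) = ↑p₁.toFinset := by ext x; simp
    rw [this, Set.ncard_coe_finset]
    exact le_trans p₁.toFinset_card_le hl1
  have hlist2 : ({x | x ∈ p₂} : Set V).ncard ≤ 4 := by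
    have : ({x | x ∈ p₂} : Set V) = ↑p₂.toFinset := by ext x; simp
    rw [this, Set.ncard_coe_finset]
    exact le_trans p₂.toFinset_card_le hl2
  have hBadcard : (Bad.ncard : ℝ) ≤ ε'/2 * n + 8 := by
    have h1 := Set.ncard_union_le (U ∪ {x | x ∈ p₁}) {x | x ∈ p₂}
    have h2 := Set.ncard_union_le U {x | x ∈ p₁}
    have : Bad.ncard ≤ U.ncard + 4 + 4 := by
      calc Bad.ncard ≤ (U ∪ {x | x ∈ p₁}).ncard + ({x | x ∈ p₂} : Set V).ncard := h1
      _ ≤ (U.ncard + 4) + 4 := by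
          gcongr
          exact le_trans h2 (by omega)
    calc (Bad.ncard : ℝ) ≤ (U.ncard : ℝ) + 4 + 4 := by exact_mod_cast this
    _ ≤ ε'/2 * n + 8 := by linarith
  have key : ∀ S : Set V, ((n:ℝ)/2 + k ≤ (S.ncard : ℝ)) →
      (1/2 - ε') * (Fintype.card V) ≤ (((S \ Bad).ncard : ℝ)) := by
    intro S hS
    have hd := Set.ncard_le_ncard_diff_add_ncard S Bad (Set.toFinite _)
    have hd' : (S.ncard : ℝ) ≤ ((S \ Bad).ncard : ℝ) + (Bad.ncard : ℝ) := by exact_mod_cast hd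
    have hk0 : (0:ℝ) ≤ (k:ℝ) := Nat.cast_nonneg k
    rw [hcard]
    nlinarith
  set S₁ : Set V := {v | A b v} \ Bad with hS₁
  set S₂ : Set V := {v | A v c} \ Bad with hS₂
  have h1 : (1/2 - ε') * (Fintype.card V) ≤ (S₁.ncard : ℝ) := key _ (hdeg b).1
  have h2 : (1/2 - ε') * (Fintype.card V) ≤ (S₂.ncard : ℝ) := key _ (hdeg c).2
  have harc : ¬ ((arcsCount A S₁ S₂ : ℝ) ≤ (ε' * Fintype.card V)^2) := by
    intro h
    exact hEC ⟨S₁, S₂, h1, h2, h⟩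
  push_neg at harc
  have hsq : (0:ℝ) < (ε' * (Fintype.card V:ℝ))^2 := by
    rw [hcard]; positivity
  have hne : arcsCount A S₁ S₂ ≠ 0 := by
    intro h; rw [h] at harc; push_cast at harc; linarith
  obtain ⟨⟨x, y⟩, hx⟩ : {p : V × V | p.1 ∈ S₁ ∧ p.2 ∈ S₂ ∧ A p.1 p.2}.Nonempty :=
    Set.nonempty_of_ncard_ne_zero hne
  obtain ⟨⟨hAbx, hxBad⟩, ⟨hAyc, hyBad⟩, hAxy⟩ := hx
  have hxy : x ≠ y := fun h => hirr x (h ▸ hAxy)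
  have hxU : x ∉ U := fun h => hxBad (Or.inl (Or.inl h))
  have hx1 : x ∉ p₁ := fun h => hxBad (Or.inl (Or.inr h))
  have hx2 : x ∉ p₂ := fun h => hxBad (Or.inr h)
  have hyU : y ∉ U := fun h => hyBad (Or.inl (Or.inl h))
  have hy1 : y ∉ p₁ := fun h => hyBad (Or.inl (Or.inr h))
  have hy2 : y ∉ p₂ := fun h => hyBad (Or.inr h)
  have hxb : x ≠ b := fun h => hx1 (h ▸ hb)
  have hxc : x ≠ c := fun h => hx2 (h ▸ hc)
  have hyb : y ≠ b := fun h => hy1 (h ▸ hb)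
  have hyc : y ≠ c := fun h => hy2 (h ▸ hc)
  refine ⟨[b, x, y, c], ⟨?_, rfl, ?_, fun h => absurd h hbc, fun _ => ?_⟩, ?_, ?_⟩
  · simp [List.Chain', List.isChain_cons_cons]
    exact ⟨hAbx, hAxy, hAyc⟩
  · rfl
  · simp only [List.nodup_cons, List.mem_cons, List.not_mem_nil, or_false,
      List.mem_singleton, List.nodup_nil, and_true]
    push_neg
    exact ⟨⟨Ne.symm hxb, Ne.symm hyb, hbc⟩, ⟨hxy, hxc⟩, hyc, trivial⟩
  · simp [listInterior]
  · intro z hz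
    simp only [listInterior, List.tail, List.dropLast, List.mem_cons,
      List.not_mem_nil, or_false, List.mem_singleton] at hz
    rcases hz with rfl | rfl
    · exact ⟨hxU, hx1, hx2⟩
    · exact ⟨hyU, hy1, hy2⟩
end

section
/- For every ε′ ∈ (0,1) there exist γ > 0 and n₀ such that the following holds for all n ≥ n₀ and all k ≤ γn. Let D be a digraph on n vertices with δ⁰(D) ≥ n/2 + k which does not satisfy the extremal condition EC with parameter ε′, let W ⊆ V(D) with |W| ≤ 2k, and set D′ = D − W. Then for every ordered pair (u, v) of vertices of D′ (possibly u = v), the digraph D′ contains at least γn⁴ distinct 4-paths absorbing (u, v). -/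
open scoped Classical

/-- The list of vertices of a quadruple. -/
def quadList {V : Type*} (z : V × V × V × V) : List V := [z.1, z.2.1, z.2.2.1, z.2.2.2]

/-- `z` records a 4-path `z₁z₂z₃z₄` of the digraph `A` all of whose vertices lie in `S`. -/
def IsFourPath {V : Type*} (A : V → V → Prop) (S : Set V) (z : V × V × V × V) : Prop :=
  (quadList z).Nodup ∧ (quadList z).Chain' A ∧ ∀ x ∈ quadList z, x ∈ S

/-- The 4-path `z = z₁z₂z₃z₄` absorbs the ordered pair `(u, v)`: `z₂u` and `vz₃` are arcs. -/
def AbsorbsPair {V : Type*} (A : V → V → Prop) (z : V × V × V × V) (u v : V) : Prop :=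
  A z.2.1 u ∧ A v z.2.2.1

private lemma ncard_setOf_eq_card_filter {α : Type*} [Fintype α] (p : α → Prop) [DecidablePred p] :
    {x | p x}.ncard = (Finset.univ.filter p).card := by
  rw [← Set.ncard_coe_finset]
  congr 1
  ext x
  simp


set_option maxHeartbeats 1000000 in
/-- **Lemma (many absorbers).**  For every `ε' ∈ (0,1)` there are `γ > 0` and `n₀` such
that for all `n ≥ n₀` and `k ≤ γn`: if `D` is a digraph on `n` vertices with
`δ⁰(D) ≥ n/2 + k` not satisfying **EC** with parameter `ε'`, and `W` is a set of at most
`2k` vertices, then for every ordered pair `(u, v)` of vertices of `D' = D - W` (possibly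
`u = v`) there are at least `γ n⁴` distinct 4-paths of `D'` absorbing `(u, v)`. -/
theorem many_absorbing_four_paths (ε' : ℝ) (hε'0 : 0 < ε') (hε'1 : ε' < 1) :
    ∃ (γ : ℝ) (n₀ : ℕ), 0 < γ ∧
      ∀ n k : ℕ, n₀ ≤ n → (k : ℝ) ≤ γ * n →
        ∀ (V : Type) [Fintype V] (A : V → V → Prop),
          (∀ v, ¬ A v v) →
          Fintype.card V = n →
          (∀ v : V, (n : ℝ) / 2 + k ≤ (outDeg A v : ℝ) ∧
                    (n : ℝ) / 2 + k ≤ (inDeg A v : ℝ)) →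
          ¬ SatisfiesEC A ε' →
          ∀ W : Set V, W.ncard ≤ 2 * k →
            ∀ u v : V, u ∉ W → v ∉ W →
              γ * (n : ℝ)^4 ≤
                (({z : V × V × V × V | IsFourPath A Wᶜ z ∧ AbsorbsPair A z u v}).ncard : ℝ) := by
  refine ⟨ε'^2/16, max 48 ⌈(48:ℝ)/ε'⌉₊, by positivity, ?_⟩
  intro n k hn hk V _ A hirr hcard hdeg hEC W hW u v hu hv
  classical
  have hn48 : (48:ℝ) ≤ (n:ℝ) := by
    have : (48:ℕ) ≤ n := le_trans (le_max_left _ _) hn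
    exact_mod_cast this
  have hεn : (48:ℝ) ≤ ε' * n := by
    have h1 : ⌈(48:ℝ)/ε'⌉₊ ≤ n := le_trans (le_max_right _ _) hn
    have h2 : (48:ℝ)/ε' ≤ n := Nat.ceil_le.mp h1
    calc (48:ℝ) = (48/ε') * ε' := by field_simp
    _ ≤ (n:ℝ) * ε' := mul_le_mul_of_nonneg_right h2 hε'0.le
    _ = ε' * n := mul_comm _ _
  have hn0 : (0:ℝ) < n := by linarith
  have hkn : (k:ℝ) ≤ ε' * n / 16 := by
    have := hk
    nlinarith
  have hk16 : (k:ℝ) ≤ (n:ℝ)/16 := by nlinarith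
  have hW2k : (W.ncard : ℝ) ≤ 2 * k := by exact_mod_cast hW
  -- the key lower bound on restricted in/out neighbourhoods
  have hbaseIn : ∀ a b : V, ((n:ℝ)/2 - k - 1) ≤
      (((Finset.univ.filter (fun x => A x a ∧ x ∉ W ∧ x ≠ b)).card : ℝ)) := by
    intro a b
    have hdeg' := (hdeg a).2
    have hin : (inDeg A a : ℝ) = ((Finset.univ.filter (fun x => A x a)).card : ℝ) := by
      have : inDeg A a = (Finset.univ.filter (fun x => A x a)).card := by
        unfold inDeg; exact ncard_setOf_eq_card_filter _
      exact_mod_cast this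
    have hsub : Finset.univ.filter (fun x => A x a) ⊆
        ((Finset.univ.filter (fun x => A x a ∧ x ∉ W ∧ x ≠ b)) ∪ W.toFinite.toFinset) ∪ {b} := by
      intro x hx
      simp only [Finset.mem_filter, Finset.mem_union, Finset.mem_singleton,
        Set.Finite.mem_toFinset, Finset.mem_univ, true_and] at hx ⊢
      by_cases hxW : x ∈ W
      · tauto
      · by_cases hxb : x = b <;> tauto
    have hcle := Finset.card_le_card hsub
    have h2 := Finset.card_union_le ((Finset.univ.filter (fun x => A x a ∧ x ∉ W ∧ x ≠ b)) ∪ W.toFinite.toFinset) ({b} : Finset V)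
    have h3 := Finset.card_union_le (Finset.univ.filter (fun x => A x a ∧ x ∉ W ∧ x ≠ b)) W.toFinite.toFinset
    have hWc : (W.toFinite.toFinset.card : ℝ) = W.ncard := by
      rw [Set.ncard_eq_toFinset_card W W.toFinite]
    have hsing : (({b} : Finset V).card : ℝ) = 1 := by simp
    have hcle' : ((Finset.univ.filter (fun x => A x a)).card : ℝ) ≤
        ((Finset.univ.filter (fun x => A x a ∧ x ∉ W ∧ x ≠ b)).card : ℝ) + W.ncard + 1 := by
      push_cast
      have h2' : ((((Finset.univ.filter (fun x => A x a ∧ x ∉ W ∧ x ≠ b)) ∪ W.toFinite.toFinset) ∪ {b}).card : ℝ)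
          ≤ ((Finset.univ.filter (fun x => A x a ∧ x ∉ W ∧ x ≠ b)).card : ℝ) + (W.toFinite.toFinset.card : ℝ) + (({b} : Finset V).card : ℝ) := by
        exact_mod_cast le_trans h2 (by exact_mod_cast Nat.add_le_add_right h3 _)
      have := (Nat.cast_le (α := ℝ)).mpr hcle
      rw [hWc, hsing] at h2'
      linarith
    rw [hin] at hdeg'
    linarith
  have hbaseOut : ∀ a b : V, ((n:ℝ)/2 - k - 1) ≤
      (((Finset.univ.filter (fun x => A a x ∧ x ∉ W ∧ x ≠ b)).card : ℝ)) := by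
    intro a b
    have hdeg' := (hdeg a).1
    have hin : (outDeg A a : ℝ) = ((Finset.univ.filter (fun x => A a x)).card : ℝ) := by
      have : outDeg A a = (Finset.univ.filter (fun x => A a x)).card := by
        unfold outDeg; exact ncard_setOf_eq_card_filter _
      exact_mod_cast this
    have hsub : Finset.univ.filter (fun x => A a x) ⊆
        ((Finset.univ.filter (fun x => A a x ∧ x ∉ W ∧ x ≠ b)) ∪ W.toFinite.toFinset) ∪ {b} := by
      intro x hx
      simp only [Finset.mem_filter, Finset.mem_union, Finset.mem_singleton,
        Set.Finite.mem_toFinset, Finset.mem_univ, true_and] at hx ⊢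
      by_cases hxW : x ∈ W
      · tauto
      · by_cases hxb : x = b <;> tauto
    have hcle := Finset.card_le_card hsub
    have h2 := Finset.card_union_le ((Finset.univ.filter (fun x => A a x ∧ x ∉ W ∧ x ≠ b)) ∪ W.toFinite.toFinset) ({b} : Finset V)
    have h3 := Finset.card_union_le (Finset.univ.filter (fun x => A a x ∧ x ∉ W ∧ x ≠ b)) W.toFinite.toFinset
    have hWc : (W.toFinite.toFinset.card : ℝ) = W.ncard := by
      rw [Set.ncard_eq_toFinset_card W W.toFinite]
    have hcle' : ((Finset.univ.filter (fun x => A a x)).card : ℝ) ≤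
        ((Finset.univ.filter (fun x => A a x ∧ x ∉ W ∧ x ≠ b)).card : ℝ) + W.ncard + 1 := by
      have h2' : ((((Finset.univ.filter (fun x => A a x ∧ x ∉ W ∧ x ≠ b)) ∪ W.toFinite.toFinset) ∪ {b}).card : ℝ)
          ≤ ((Finset.univ.filter (fun x => A a x ∧ x ∉ W ∧ x ≠ b)).card : ℝ) + (W.toFinite.toFinset.card : ℝ) + (({b} : Finset V).card : ℝ) := by
        exact_mod_cast le_trans h2 (by exact_mod_cast Nat.add_le_add_right h3 _)
      have := (Nat.cast_le (α := ℝ)).mpr hcle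
      rw [hWc] at h2'
      simp only [Finset.card_singleton, Nat.cast_one] at h2'
      push_cast
      linarith
    rw [hin] at hdeg'
    linarith
  -- EC sets
  set U₁ : Set V := {x | A x u ∧ x ∉ W} with hU₁def
  set U₂ : Set V := {x | A v x ∧ x ∉ W} with hU₂def
  have hU₁card : ((n:ℝ)/2 - k - 1) ≤ (U₁.ncard : ℝ) := by
    have h1 := hbaseIn u u
    have hsub : Finset.univ.filter (fun x => A x u ∧ x ∉ W ∧ x ≠ u) ⊆
        Finset.univ.filter (fun x => A x u ∧ x ∉ W) := by
      intro x hx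
      simp only [Finset.mem_filter, Finset.mem_univ, true_and] at hx ⊢
      tauto
    have h2 : ((Finset.univ.filter (fun x => A x u ∧ x ∉ W ∧ x ≠ u)).card : ℝ) ≤
        ((Finset.univ.filter (fun x => A x u ∧ x ∉ W)).card : ℝ) := by
      exact_mod_cast Finset.card_le_card hsub
    have h3 : (U₁.ncard : ℝ) = ((Finset.univ.filter (fun x => A x u ∧ x ∉ W)).card : ℝ) := by
      have : U₁.ncard = (Finset.univ.filter (fun x => A x u ∧ x ∉ W)).card := by
        rw [hU₁def]; exact ncard_setOf_eq_card_filter _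
      exact_mod_cast this
    linarith
  have hU₂card : ((n:ℝ)/2 - k - 1) ≤ (U₂.ncard : ℝ) := by
    have h1 := hbaseOut v v
    have hsub : Finset.univ.filter (fun x => A v x ∧ x ∉ W ∧ x ≠ v) ⊆
        Finset.univ.filter (fun x => A v x ∧ x ∉ W) := by
      intro x hx
      simp only [Finset.mem_filter, Finset.mem_univ, true_and] at hx ⊢
      tauto
    have h2 : ((Finset.univ.filter (fun x => A v x ∧ x ∉ W ∧ x ≠ v)).card : ℝ) ≤
        ((Finset.univ.filter (fun x => A v x ∧ x ∉ W)).card : ℝ) := by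
      exact_mod_cast Finset.card_le_card hsub
    have h3 : (U₂.ncard : ℝ) = ((Finset.univ.filter (fun x => A v x ∧ x ∉ W)).card : ℝ) := by
      have : U₂.ncard = (Finset.univ.filter (fun x => A v x ∧ x ∉ W)).card := by
        rw [hU₂def]; exact ncard_setOf_eq_card_filter _
      exact_mod_cast this
    linarith
  have hhalf : (1/2 - ε') * n ≤ (n:ℝ)/2 - k - 1 := by nlinarith
  -- the pair set
  set Pc : Finset (V × V) := Finset.univ.filter (fun p : V × V => p.1 ∈ U₁ ∧ p.2 ∈ U₂ ∧ A p.1 p.2) with hPcdef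
  have hPc : (ε' * n)^2 < (Pc.card : ℝ) := by
    have harcs : (arcsCount A U₁ U₂ : ℝ) = (Pc.card : ℝ) := by
      have : arcsCount A U₁ U₂ = Pc.card := by
        rw [hPcdef]; unfold arcsCount; exact ncard_setOf_eq_card_filter _
      exact_mod_cast this
    by_contra h
    push_neg at h
    exact hEC ⟨U₁, U₂, by rw [hcard]; linarith, by rw [hcard]; linarith, by rw [hcard, harcs]; linarith⟩
  -- the quadruple set
  set Q : V × V × V × V → Prop := fun z =>
    (A z.2.1 u ∧ A v z.2.2.1 ∧ A z.2.1 z.2.2.1 ∧ z.2.1 ∉ W ∧ z.2.2.1 ∉ W) ∧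
    (A z.1 z.2.1 ∧ z.1 ∉ W ∧ z.1 ≠ z.2.2.1 ∧ z.1 ≠ z.2.2.2) ∧
    (A z.2.2.1 z.2.2.2 ∧ z.2.2.2 ∉ W ∧ z.2.2.2 ≠ z.2.1) with hQdef
  set F : Finset (V × V × V × V) := Finset.univ.filter Q with hFdef
  -- F sits inside the target set
  have hsubZ : (↑F : Set (V × V × V × V)) ⊆
      {z : V × V × V × V | IsFourPath A Wᶜ z ∧ AbsorbsPair A z u v} := by
    intro z hz
    rw [hFdef] at hz
    simp only [Finset.coe_filter, Set.mem_setOf_eq, Finset.mem_univ, true_and, hQdef] at hz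
    obtain ⟨⟨h1, h2, h3, h4, h5⟩, ⟨h6, h7, h8, h9⟩, ⟨h10, h11, h12⟩⟩ := hz
    have hne12 : z.1 ≠ z.2.1 := fun h => hirr _ (h ▸ h6)
    have hne23 : z.2.1 ≠ z.2.2.1 := fun h => hirr _ (h ▸ h3)
    have hne34 : z.2.2.1 ≠ z.2.2.2 := fun h => hirr _ (h ▸ h10)
    refine ⟨⟨?_, ?_, ?_⟩, h1, h2⟩
    · simp only [quadList, List.nodup_cons, List.mem_cons, List.mem_singleton,
        List.not_mem_nil, or_false, List.nodup_nil, and_true, not_false_eq_true, not_or]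
      exact ⟨⟨hne12, h8, h9⟩, ⟨hne23, fun h => h12 h.symm⟩, hne34⟩
    · simp only [quadList, List.isChain_cons_cons, List.isChain_singleton, and_true]
      exact List.isChain_cons_cons.2 ⟨h6, List.isChain_cons_cons.2 ⟨h3, List.isChain_cons_cons.2 ⟨h10, List.isChain_singleton _⟩⟩⟩
    · intro x hx
      simp only [quadList, List.mem_cons, List.mem_singleton, List.not_mem_nil, or_false] at hx
      rcases hx with h | h | h | h <;> subst h <;> simpa using ‹_›
  -- fiberwise counting
  have hmap : ∀ z ∈ F, (z.2.1, z.2.2.1) ∈ Pc := by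
    intro z hz
    simp only [hFdef, Finset.mem_filter, Finset.mem_univ, true_and] at hz
    obtain ⟨⟨h1, h2, h3, h4, h5⟩, _, _⟩ := hz
    simp only [hPcdef, Finset.mem_filter, Finset.mem_univ, true_and]
    exact ⟨⟨h1, h4⟩, ⟨h2, h5⟩, h3⟩
  have hfib := Finset.card_eq_sum_card_fiberwise hmap
  -- per-fiber lower bound
  have hfibLB : ∀ p ∈ Pc, ((n:ℝ)^2/16 : ℝ) ≤
      (((F.filter (fun z => (z.2.1, z.2.2.1) = p)).card : ℝ)) := by
    rintro ⟨a, b⟩ hp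
    simp only [hPcdef, Finset.mem_filter, Finset.mem_univ, true_and] at hp
    obtain ⟨⟨hau, haW⟩, ⟨hvb, hbW⟩, hab⟩ := hp
    set A' : Finset V := Finset.univ.filter (fun x => A x a ∧ x ∉ W ∧ x ≠ b) with hA'def
    set B' : Finset V := Finset.univ.filter (fun x => A b x ∧ x ∉ W ∧ x ≠ a) with hB'def
    set G : Finset (V × V) := (A' ×ˢ B').filter (fun q => q.1 ≠ q.2) with hGdef
    have hinj : G.card ≤ (F.filter (fun z => (z.2.1, z.2.2.1) = (a, b))).card := by
      apply Finset.card_le_card_of_injOn (fun q => (q.1, a, b, q.2))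
      · rintro ⟨x, y⟩ hq
        have hq : (x, y) ∈ G := hq
        simp only [hGdef, Finset.mem_filter, Finset.mem_product, hA'def, hB'def,
          Finset.mem_univ, true_and] at hq
        obtain ⟨⟨⟨hxa, hxW, hxb⟩, hby, hyW, hya⟩, hxy⟩ := hq
        show (x, a, b, y) ∈ F.filter (fun z => (z.2.1, z.2.2.1) = (a, b))
        simp only [Finset.mem_filter, hFdef, hQdef, Finset.mem_univ, true_and]
        exact ⟨⟨⟨hau, hvb, hab, haW, hbW⟩, ⟨hxa, hxW, hxb, hxy⟩, ⟨hby, hyW, hya⟩⟩, trivial⟩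
      · rintro ⟨x, y⟩ _ ⟨x', y'⟩ _ h
        simp only [Prod.mk.injEq] at h
        exact Prod.ext h.1 h.2.2.2
    have hsplit := Finset.card_filter_add_card_filter_not (s := A' ×ˢ B')
      (p := fun q => q.1 ≠ q.2)
    have hdiag : ((A' ×ˢ B').filter (fun q => ¬ q.1 ≠ q.2)).card ≤ A'.card := by
      apply Finset.card_le_card_of_injOn (fun q => q.1)
      · rintro ⟨x, y⟩ hq
        have hq : (x, y) ∈ (A' ×ˢ B').filter (fun q => ¬ q.1 ≠ q.2) := hq
        simp only [Finset.mem_filter, Finset.mem_product] at hq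
        exact hq.1.1
      · rintro ⟨x, y⟩ hq ⟨x', y'⟩ hq' h
        simp only [Finset.mem_coe, Finset.mem_filter, ne_eq, not_not] at hq hq'
        simp only at h
        subst h
        exact Prod.ext rfl (hq.2.symm.trans hq'.2)
    have hprod : (A' ×ˢ B').card = A'.card * B'.card := Finset.card_product _ _
    have hGcard : (A'.card : ℝ) * B'.card - A'.card ≤ (G.card : ℝ) := by
      have h1 : (G.card : ℝ) + (((A' ×ˢ B').filter (fun q => ¬ q.1 ≠ q.2)).card : ℝ)
          = (A'.card : ℝ) * B'.card := by
        rw [← Nat.cast_mul, ← hprod]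
        exact_mod_cast hsplit
      have h2 : (((A' ×ˢ B').filter (fun q => ¬ q.1 ≠ q.2)).card : ℝ) ≤ (A'.card : ℝ) := by
        exact_mod_cast hdiag
      linarith
    have ha' := hbaseIn a b
    have hb' := hbaseOut b a
    rw [← hA'def] at ha'
    rw [← hB'def] at hb'
    have ha3 : (n:ℝ)/3 ≤ (A'.card : ℝ) := by linarith [hk16, hn48]
    have hb3 : (n:ℝ)/3 + 1 ≤ (B'.card : ℝ) := by linarith [hk16, hn48]
    have hmm : ((n:ℝ)/3) * ((n:ℝ)/3) ≤ (A'.card : ℝ) * ((B'.card : ℝ) - 1) :=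
      mul_le_mul ha3 (by linarith) (by linarith) (by linarith)
    have : ((n:ℝ)^2/16) ≤ (G.card : ℝ) := by nlinarith
    have hc : (G.card : ℝ) ≤ ((F.filter (fun z => (z.2.1, z.2.2.1) = (a, b))).card : ℝ) := by
      exact_mod_cast hinj
    linarith
  -- sum up
  have hsum : (Pc.card : ℝ) * ((n:ℝ)^2/16) ≤ (F.card : ℝ) := by
    have h1 : Pc.card • ((n:ℝ)^2/16) ≤ ∑ p ∈ Pc, ((F.filter (fun z => (z.2.1, z.2.2.1) = p)).card : ℝ) :=
      Finset.card_nsmul_le_sum _ _ _ hfibLB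
    rw [nsmul_eq_mul] at h1
    have h2 : (F.card : ℝ) = ∑ p ∈ Pc, ((F.filter (fun z => (z.2.1, z.2.2.1) = p)).card : ℝ) := by
      rw [hfib]
      push_cast
      rfl
    linarith
  -- final count
  have hFZ : (F.card : ℝ) ≤
      (({z : V × V × V × V | IsFourPath A Wᶜ z ∧ AbsorbsPair A z u v}).ncard : ℝ) := by
    have h1 : (↑F : Set (V × V × V × V)).ncard ≤
        ({z : V × V × V × V | IsFourPath A Wᶜ z ∧ AbsorbsPair A z u v}).ncard :=
      Set.ncard_le_ncard hsubZ (Set.toFinite _)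
    rw [Set.ncard_coe_finset] at h1
    exact_mod_cast h1
  have hfinal : ε'^2/16 * (n:ℝ)^4 ≤ (Pc.card : ℝ) * ((n:ℝ)^2/16) := by
    have h1 : (ε' * n)^2 * ((n:ℝ)^2/16) ≤ (Pc.card : ℝ) * ((n:ℝ)^2/16) := by
      apply mul_le_mul_of_nonneg_right hPc.le
      positivity
    calc ε'^2/16 * (n:ℝ)^4 = (ε' * n)^2 * ((n:ℝ)^2/16) := by ring
    _ ≤ _ := h1
  linarith
end

section
/- For every ε′ ∈ (0,1) there exist γ > 0 and n₀ such that the following holds for all n ≥ n₀ and all k ≤ γn. Let D be a digraph on n vertices with δ⁰(D) ≥ n/2 + k which does not satisfy the extremal condition EC with parameter ε′, let W ⊆ V(D) with |W| ≤ 2k, and set D′ = D − W. Then there exists a family F of at most γn pairwise vertex-disjoint absorbing 4-paths in D′ such that for every ordered vertex pair (u, v) of D′, at least γ²n members of F are absorbers for (u, v). -/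
open scoped Classical

lemma IsFourPath.mono {V : Type*} {A : V → V → Prop} {S S' : Set V} (h : S ⊆ S')
    {z : V × V × V × V} (hz : IsFourPath A S z) : IsFourPath A S' z :=
  ⟨hz.1, hz.2.1, fun x hx => h (hz.2.2 x hx)⟩

namespace AbsorbAux

open Finset

variable {V : Type} [Fintype V]

noncomputable def Avail (A : V → V → Prop) (U : Finset V) : Finset (V × V × V × V) :=
  univ.filter (fun z => IsFourPath A ((↑U : Set V))ᶜ z)

noncomputable def AbsF (A : V → V → Prop) (u v : V) (U : Finset V) : Finset (V × V × V × V) :=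
  (Avail A U).filter (fun z => AbsorbsPair A z u v)

noncomputable def TT (A : V → V → Prop) : ℕ → Finset V → Finset (List (V × V × V × V))
  | 0, _ => {[]}
  | (j+1), U => (Avail A U).biUnion
      (fun z => (TT A j (U ∪ (quadList z).toFinset)).image (fun l => z :: l))

noncomputable def mu (A : V → V → Prop) : List (V × V × V × V) → Finset V → ℝ
  | [], _ => 1
  | (z :: l), U => ((Avail A U).card : ℝ)⁻¹ * mu A l (U ∪ (quadList z).toFinset)

lemma mu_nonneg (A : V → V → Prop) : ∀ (l : List (V × V × V × V)) (U : Finset V), 0 ≤ mu A l U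
  | [], _ => by simp [mu]
  | (z :: l), U => by
      have := mu_nonneg A l (U ∪ (quadList z).toFinset)
      simp only [mu]
      positivity

lemma sum_TT_succ (A : V → V → Prop) (j : ℕ) (U : Finset V)
    (g : List (V × V × V × V) → ℝ) :
    ∑ l ∈ TT A (j+1) U, g l
      = ∑ z ∈ Avail A U, ∑ l ∈ TT A j (U ∪ (quadList z).toFinset), g (z :: l) := by
  show ∑ l ∈ (Avail A U).biUnion _, g l = _
  rw [Finset.sum_biUnion]
  · refine Finset.sum_congr rfl fun z hz => ?_
    rw [Finset.sum_image]
    intro a _ b _ h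
    simpa using h
  · intro z₁ h₁ z₂ h₂ hne
    simp only [Finset.disjoint_left, Finset.mem_image]
    rintro l ⟨l₁, _, rfl⟩ ⟨l₂, _, h⟩
    exact hne (by injection h with h1 h2; exact h1.symm ▸ rfl)

lemma TT_struct (A : V → V → Prop) :
    ∀ (j : ℕ) (U : Finset V) (l : List (V × V × V × V)), l ∈ TT A j U →
      l.length = j ∧ (∀ z ∈ l, IsFourPath A ((↑U : Set V))ᶜ z) ∧
      l.Pairwise (fun z z' => ∀ x ∈ quadList z, x ∉ quadList z')
  | 0, U, l, hl => by
      simp only [TT, Finset.mem_singleton] at hl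
      subst hl; simp
  | (j+1), U, l, hl => by
      simp only [TT, Finset.mem_biUnion, Finset.mem_image] at hl
      obtain ⟨z, hz, l', hl', rfl⟩ := hl
      obtain ⟨hlen, hmem, hpw⟩ := TT_struct A j _ l' hl'
      have hzU : IsFourPath A ((↑U : Set V))ᶜ z := by
        simpa [Avail] using hz
      have hsub : ((↑(U ∪ (quadList z).toFinset) : Set V))ᶜ ⊆ ((↑U : Set V))ᶜ := by
        intro x hx
        simp only [Set.mem_compl_iff, Finset.coe_union, Set.mem_union, Finset.mem_coe] at hx ⊢
        exact fun h => hx (Or.inl h)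
      have htail : ∀ z' ∈ l', IsFourPath A ((↑U : Set V))ᶜ z' :=
        fun z' hz' => (hmem z' hz').mono hsub
      refine ⟨by simp [hlen], ?_, ?_⟩
      · intro w hw
        rcases List.mem_cons.1 hw with rfl | hw
        · exact hzU
        · exact htail w hw
      · refine List.pairwise_cons.2 ⟨?_, hpw⟩
        intro z' hz' x hx hx'
        have := (hmem z' hz').2.2 x hx'
        simp only [Set.mem_compl_iff, Finset.coe_union, Set.mem_union, Finset.mem_coe,
          List.mem_toFinset] at this
        exact this (Or.inr hx)


lemma card_union_quad (U : Finset V) (z : V × V × V × V) :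
    (U ∪ (quadList z).toFinset).card ≤ U.card + 4 := by
  refine (Finset.card_union_le _ _).trans ?_
  have : (quadList z).toFinset.card ≤ 4 := (List.toFinset_card_le _).trans (by simp [quadList])
  omega

lemma sum_mu_one (A : V → V → Prop) (B : ℕ)
    (hA : ∀ U : Finset V, U.card ≤ B → (Avail A U).Nonempty) :
    ∀ (j : ℕ) (U : Finset V), U.card + 4 * j ≤ B →
      ∑ l ∈ TT A j U, mu A l U = 1
  | 0, U, _ => by simp [TT, mu]
  | (j+1), U, hU => by
      rw [sum_TT_succ]
      have ha : ((Avail A U).card : ℝ) ≠ 0 := by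
        have := (hA U (by omega)).card_pos
        positivity
      have : ∀ z ∈ Avail A U,
          ∑ l ∈ TT A j (U ∪ (quadList z).toFinset), mu A (z :: l) U
            = ((Avail A U).card : ℝ)⁻¹ := by
        intro z _
        have hcard : (U ∪ (quadList z).toFinset).card + 4 * j ≤ B :=
          le_trans (by have := card_union_quad U z; omega) hU
        simp only [mu, ← Finset.mul_sum]
        rw [sum_mu_one A B hA j _ hcard, mul_one]
      rw [Finset.sum_congr rfl this, Finset.sum_const, nsmul_eq_mul, mul_inv_cancel₀ ha]

noncomputable def cnt (A : V → V → Prop) (u v : V) (l : List (V × V × V × V)) : ℕ :=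
  (l.filter (fun z => decide (AbsorbsPair A z u v))).length

lemma cnt_cons (A : V → V → Prop) (u v : V) (z : V × V × V × V) (l : List (V × V × V × V)) :
    cnt A u v (z :: l) = (if AbsorbsPair A z u v then 1 else 0) + cnt A u v l := by
  simp only [cnt, List.filter_cons]
  split_ifs with h <;> simp_all [Nat.add_comm]

lemma sum_mu_weight (A : V → V → Prop) (u v : V) (B : ℕ) (c : ℝ) (hc0 : 0 ≤ c)
    (hA : ∀ U : Finset V, U.card ≤ B → (Avail A U).Nonempty)
    (hr : ∀ U : Finset V, U.card ≤ B →
      c * ((Avail A U).card : ℝ) ≤ ((AbsF A u v U).card : ℝ)) :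
    ∀ (j : ℕ) (U : Finset V), U.card + 4 * j ≤ B →
      ∑ l ∈ TT A j U, mu A l U * (1/2 : ℝ) ^ (cnt A u v l) ≤ (1 - c/2) ^ j
  | 0, U, _ => by simp [TT, mu, cnt]
  | (j+1), U, hU => by
      have hapos : (0:ℝ) < ((Avail A U).card : ℝ) := by
        exact_mod_cast (hA U (by omega)).card_pos
      have hρ0 : (0:ℝ) ≤ 1 - c/2 := by
        have h1 := hr U (by omega)
        have h2 : ((AbsF A u v U).card : ℝ) ≤ ((Avail A U).card : ℝ) := by
          exact_mod_cast Finset.card_le_card (Finset.filter_subset _ _)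
        nlinarith
      rw [sum_TT_succ]
      have key : ∀ z ∈ Avail A U,
          ∑ l ∈ TT A j (U ∪ (quadList z).toFinset), mu A (z :: l) U * (1/2:ℝ) ^ cnt A u v (z :: l)
          ≤ ((Avail A U).card : ℝ)⁻¹ * (if AbsorbsPair A z u v then (1/2:ℝ) else 1) * (1 - c/2)^j := by
        intro z _
        have hcard : (U ∪ (quadList z).toFinset).card + 4 * j ≤ B :=
          le_trans (by have := card_union_quad U z; omega) hU
        have ih := sum_mu_weight A u v B c hc0 hA hr j (U ∪ (quadList z).toFinset) hcard
        have : ∀ l, mu A (z :: l) U * (1/2:ℝ) ^ cnt A u v (z :: l)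
            = ((Avail A U).card : ℝ)⁻¹ * (if AbsorbsPair A z u v then (1/2:ℝ) else 1) *
              (mu A l (U ∪ (quadList z).toFinset) * (1/2:ℝ) ^ cnt A u v l) := by
          intro l
          simp only [mu, cnt_cons]
          split_ifs <;> ring
        simp only [this, ← Finset.mul_sum]
        have hw : (0:ℝ) ≤ ((Avail A U).card : ℝ)⁻¹ * (if AbsorbsPair A z u v then (1/2:ℝ) else 1) := by
          split_ifs <;> positivity
        exact mul_le_mul_of_nonneg_left ih hw
      refine (Finset.sum_le_sum key).trans ?_
      rw [← Finset.sum_mul, ← Finset.mul_sum]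
      have hsplit : ∑ z ∈ Avail A U, (if AbsorbsPair A z u v then (1/2:ℝ) else 1)
          = ((Avail A U).card : ℝ) - ((AbsF A u v U).card : ℝ) / 2 := by
        rw [Finset.sum_ite, Finset.sum_const, Finset.sum_const]
        have h1 : (Avail A U).filter (fun z => AbsorbsPair A z u v) = AbsF A u v U := rfl
        have h2 : ((Avail A U).filter (fun z => ¬ AbsorbsPair A z u v)).card
            = (Avail A U).card - (AbsF A u v U).card := by
          rw [← h1, Finset.filter_not, Finset.card_sdiff_of_subset (Finset.filter_subset _ _)]
        rw [h1, h2, nsmul_eq_mul, nsmul_eq_mul]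
        have h3 : (AbsF A u v U).card ≤ (Avail A U).card :=
          Finset.card_le_card (Finset.filter_subset _ _)
        push_cast [Nat.cast_sub h3]
        ring
      rw [hsplit]
      have hfrac : ((Avail A U).card : ℝ)⁻¹ *
          (((Avail A U).card : ℝ) - ((AbsF A u v U).card : ℝ) / 2) ≤ 1 - c/2 := by
        have h1 := hr U (by omega)
        rw [inv_mul_le_iff₀ hapos]
        nlinarith
      calc ((Avail A U).card : ℝ)⁻¹ *
            (((Avail A U).card : ℝ) - ((AbsF A u v U).card : ℝ) / 2) * (1 - c/2)^j
          ≤ (1 - c/2) * (1 - c/2)^j := by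
            exact mul_le_mul_of_nonneg_right hfrac (pow_nonneg hρ0 j)
        _ = (1 - c/2)^(j+1) := by ring


lemma mem_Avail {A : V → V → Prop} {U : Finset V} {z : V × V × V × V} :
    z ∈ Avail A U ↔ IsFourPath A ((↑U : Set V))ᶜ z := by
  simp [Avail]

lemma mem_AbsF {A : V → V → Prop} {u v : V} {U : Finset V} {z : V × V × V × V} :
    z ∈ AbsF A u v U ↔ IsFourPath A ((↑U : Set V))ᶜ z ∧ AbsorbsPair A z u v := by
  simp [AbsF, mem_Avail]

set_option maxHeartbeats 1000000 in
lemma absF_lower (A : V → V → Prop) (irr : ∀ x, ¬ A x x) (u v : V) (U : Finset V)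
    (n : ℕ) (hn : Fintype.card V = n)
    (hdeg : ∀ x : V, (n:ℝ)/2 ≤ ((univ.filter (fun y => A x y)).card : ℝ) ∧
                     (n:ℝ)/2 ≤ ((univ.filter (fun y => A y x)).card : ℝ))
    (ε₀ : ℝ) (hε : 0 < ε₀)
    (hstab : ∀ U₁ U₂ : Set V, (1/2 - ε₀) * n ≤ (U₁.ncard : ℝ) →
      (1/2 - ε₀) * n ≤ (U₂.ncard : ℝ) → (ε₀ * n)^2 < (arcsCount A U₁ U₂ : ℝ))
    (hU1 : (U.card : ℝ) ≤ ε₀ * n) (hU2 : (U.card : ℝ) + 3 ≤ (n : ℝ)/4) :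
    (ε₀ * n)^2 * ((n : ℝ)/4)^2 ≤ ((AbsF A u v U).card : ℝ) := by
  set P : Finset (V × V) := univ.filter
    (fun p : V × V => (A p.1 u ∧ p.1 ∉ U) ∧ (A v p.2 ∧ p.2 ∉ U) ∧ A p.1 p.2) with hP
  set C₁ : V × V → Finset V :=
    (fun p => (univ.filter (fun x => A x p.1)) \ (U ∪ {p.1, p.2})) with hC₁
  set C₂ : V × V → V → Finset V :=
    (fun p x => (univ.filter (fun y => A p.2 y)) \ (U ∪ {p.1, p.2, x})) with hC₂
  -- lower bound on P via stability
  have hPcard : (ε₀ * n)^2 < (P.card : ℝ) := by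
    have h1 : ∀ w : V, (1/2 - ε₀) * n
        ≤ (((univ.filter (fun x => A x w)) \ U).card : ℝ) := by
      intro w
      have := (hdeg w).2
      have hs : ((univ.filter (fun x => A x w)).card : ℝ)
          ≤ (((univ.filter (fun x => A x w)) \ U).card : ℝ) + (U.card : ℝ) := by
        exact_mod_cast Finset.card_le_card_sdiff_add_card
      nlinarith
    have h2 : ∀ w : V, (1/2 - ε₀) * n
        ≤ (((univ.filter (fun y => A w y)) \ U).card : ℝ) := by
      intro w
      have := (hdeg w).1
      have hs : ((univ.filter (fun y => A w y)).card : ℝ)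
          ≤ (((univ.filter (fun y => A w y)) \ U).card : ℝ) + (U.card : ℝ) := by
        exact_mod_cast Finset.card_le_card_sdiff_add_card
      nlinarith
    have hstab' := hstab ↑((univ.filter (fun x => A x u)) \ U)
      ↑((univ.filter (fun y => A v y)) \ U)
      (by rw [Set.ncard_coe_finset]; exact h1 u) (by rw [Set.ncard_coe_finset]; exact h2 v)
    have harc : arcsCount A ↑((univ.filter (fun x => A x u)) \ U)
        ↑((univ.filter (fun y => A v y)) \ U) = P.card := by
      rw [arcsCount, ← Set.ncard_coe_finset P]
      congr 1
      ext p
      simp only [hP, Finset.coe_filter, Set.mem_setOf_eq, Finset.mem_coe, Finset.mem_sdiff,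
        Finset.mem_filter, Finset.mem_univ, true_and, Finset.coe_sdiff, Set.mem_diff]
      try tauto
    rw [harc] at hstab'
    exact hstab'
  -- lower bounds on C₁ and C₂
  have hC₁card : ∀ p : V × V, (n : ℝ)/4 ≤ ((C₁ p).card : ℝ) := by
    intro p
    have := (hdeg p.1).2
    have hs : ((univ.filter (fun x => A x p.1)).card : ℝ)
        ≤ ((C₁ p).card : ℝ) + ((U ∪ {p.1, p.2}).card : ℝ) := by
      exact_mod_cast Finset.card_le_card_sdiff_add_card
    have hu : ((U ∪ {p.1, p.2}).card : ℝ) ≤ (U.card : ℝ) + 2 := by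
      have h1 : (U ∪ {p.1, p.2}).card ≤ U.card + ({p.1, p.2} : Finset V).card :=
        Finset.card_union_le _ _
      have h2 : ({p.1, p.2} : Finset V).card ≤ 2 := by
        have a1 := Finset.card_insert_le p.1 ({p.2} : Finset V)
        have a2 : ({p.2} : Finset V).card = 1 := Finset.card_singleton p.2
        omega
      push_cast
      exact_mod_cast le_trans h1 (by omega)
    nlinarith
  have hC₂card : ∀ (p : V × V) (x : V), (n : ℝ)/4 ≤ ((C₂ p x).card : ℝ) := by
    intro p x
    have := (hdeg p.2).1
    have hs : ((univ.filter (fun y => A p.2 y)).card : ℝ)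
        ≤ ((C₂ p x).card : ℝ) + ((U ∪ {p.1, p.2, x}).card : ℝ) := by
      exact_mod_cast Finset.card_le_card_sdiff_add_card
    have hu : ((U ∪ {p.1, p.2, x}).card : ℝ) ≤ (U.card : ℝ) + 3 := by
      have h1 : (U ∪ {p.1, p.2, x}).card ≤ U.card + ({p.1, p.2, x} : Finset V).card :=
        Finset.card_union_le _ _
      have h2 : ({p.1, p.2, x} : Finset V).card ≤ 3 := by
        have a1 := Finset.card_insert_le p.1 ({p.2, x} : Finset V)
        have a2 := Finset.card_insert_le p.2 ({x} : Finset V)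
        have a3 : ({x} : Finset V).card = 1 := Finset.card_singleton x
        omega
      push_cast
      exact_mod_cast le_trans h1 (by omega)
    nlinarith
  -- the sigma finset and its cardinality
  set E : Finset ((_ : V × V) × (_ : V) × V) :=
    P.sigma (fun p => (C₁ p).sigma (fun x => C₂ p x)) with hE
  have hEcard : (E.card : ℝ) = ∑ p ∈ P, ∑ x ∈ C₁ p, ((C₂ p x).card : ℝ) := by
    rw [hE, Finset.card_sigma]
    push_cast
    refine Finset.sum_congr rfl fun p _ => ?_
    rw [Finset.card_sigma]
    push_cast
    rfl
  have hElow : (ε₀ * n)^2 * ((n:ℝ)/4)^2 ≤ (E.card : ℝ) := by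
    rw [hEcard]
    have hn4 : (0:ℝ) ≤ (n:ℝ)/4 := by positivity
    have step1 : ∀ p ∈ P, ((n:ℝ)/4) * ((n:ℝ)/4) ≤ ∑ x ∈ C₁ p, ((C₂ p x).card : ℝ) := by
      intro p _
      calc ((n:ℝ)/4) * ((n:ℝ)/4) ≤ ((C₁ p).card : ℝ) * ((n:ℝ)/4) :=
            mul_le_mul_of_nonneg_right (hC₁card p) hn4
        _ = ∑ _x ∈ C₁ p, ((n:ℝ)/4) := by rw [Finset.sum_const, nsmul_eq_mul]
        _ ≤ ∑ x ∈ C₁ p, ((C₂ p x).card : ℝ) := Finset.sum_le_sum (fun x _ => hC₂card p x)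
    calc (ε₀ * n)^2 * ((n:ℝ)/4)^2 ≤ (P.card : ℝ) * (((n:ℝ)/4) * ((n:ℝ)/4)) := by
          have : (0:ℝ) ≤ ((n:ℝ)/4) * ((n:ℝ)/4) := by positivity
          nlinarith
      _ = ∑ _p ∈ P, (((n:ℝ)/4) * ((n:ℝ)/4)) := by rw [Finset.sum_const, nsmul_eq_mul]
      _ ≤ ∑ p ∈ P, ∑ x ∈ C₁ p, ((C₂ p x).card : ℝ) := Finset.sum_le_sum step1
  -- inject E into AbsF
  have hinj : E.card ≤ (AbsF A u v U).card := by
    refine Finset.card_le_card_of_injOn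
      (fun t => (t.2.1, t.1.1, t.1.2, t.2.2)) ?_ ?_
    · rintro ⟨⟨a, b⟩, x, y⟩ ht
      simp only [Finset.mem_coe, hE, Finset.mem_sigma, hP, Finset.mem_filter, Finset.mem_univ, true_and,
        hC₁, hC₂, Finset.mem_sdiff, Finset.mem_union, Finset.mem_insert,
        Finset.mem_singleton, not_or] at ht
      obtain ⟨⟨⟨hau, haU⟩, ⟨hvb, hbU⟩, hab⟩, ⟨hxa, hxU, hxa', hxb'⟩, hby, hyU, hya, hyb, hyx⟩ := ht
      have hab' : a ≠ b := fun h => irr a (h ▸ hab)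
      have hxy : x ≠ y := fun h => hyx h.symm
      have hay : a ≠ y := fun h => hya h.symm
      have hby' : b ≠ y := fun h => hyb h.symm
      show (x, a, b, y) ∈ AbsF A u v U
      refine mem_AbsF.2 ⟨⟨?_, ?_, ?_⟩, hau, hvb⟩
      · show List.Nodup [x, a, b, y]
        simp only [List.nodup_cons, List.mem_cons, List.mem_singleton,
          List.not_mem_nil, List.nodup_nil, not_or, not_false_eq_true, and_true, or_false]
        exact ⟨⟨hxa', hxb', hxy⟩, ⟨hab', hay⟩, hby'⟩
      · show List.Chain' A [x, a, b, y]
        simp only [List.Chain', List.isChain_cons_cons, List.isChain_singleton, and_true]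
        exact ⟨hxa, hab, hby⟩
      · intro w hw
        simp only [quadList, List.mem_cons, List.mem_singleton, List.not_mem_nil] at hw
        simp only [Set.mem_compl_iff, Finset.mem_coe]
        rcases hw with rfl | rfl | rfl | rfl | h
        · exact hxU
        · exact haU
        · exact hbU
        · exact hyU
        · exact absurd h (by simp)
    · rintro ⟨⟨a, b⟩, x, y⟩ _ ⟨⟨a', b'⟩, x', y'⟩ _ h
      simp only [Prod.mk.injEq] at h
      obtain ⟨h1, h2, h3, h4⟩ := h
      subst h1; subst h2; subst h3; subst h4
      rfl
  calc (ε₀ * n)^2 * ((n:ℝ)/4)^2 ≤ (E.card : ℝ) := hElow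
    _ ≤ ((AbsF A u v U).card : ℝ) := by exact_mod_cast hinj


end AbsorbAux

lemma numeric_bound (c0 γ : ℝ) (hc0 : 0 < c0) (hc1 : c0 ≤ 1) (hγ : γ = c0 / 256)
    (n : ℕ) (hn : ((100 / (c0 * γ))^2 : ℝ) ≤ n) :
    (n:ℝ)^2 * 2 ^ (⌈γ^2 * (n:ℝ)⌉₊) * (1 - c0/2) ^ (⌊γ * (n:ℝ)⌋₊) < 1 := by
  have hγ0 : 0 < γ := by rw [hγ]; positivity
  have hcγ : 0 < c0 * γ := by positivity
  have hcγ1 : c0 * γ ≤ 1 := by nlinarith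
  have hsn : (100 / (c0 * γ)) ≤ Real.sqrt n := by
    have h0 : (0:ℝ) ≤ 100 / (c0 * γ) := by positivity
    calc (100 / (c0*γ)) = Real.sqrt ((100/(c0*γ))^2) := (Real.sqrt_sq h0).symm
      _ ≤ Real.sqrt n := Real.sqrt_le_sqrt hn
  have hn100 : (100:ℝ) ≤ Real.sqrt n := by
    calc (100:ℝ) = 100 / 1 := by ring
      _ ≤ 100 / (c0 * γ) := by
          apply div_le_div_of_nonneg_left (by norm_num) hcγ hcγ1
      _ ≤ Real.sqrt n := hsn
  have hsq : Real.sqrt n * Real.sqrt n = (n:ℝ) := Real.mul_self_sqrt (Nat.cast_nonneg n)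
  have hn1 : (1:ℝ) ≤ n := by nlinarith
  have hn0 : (0:ℝ) < n := by linarith
  -- log bound : log n ≤ 2 sqrt n
  have hlog : Real.log n ≤ 2 * Real.sqrt n := by
    have h1 : Real.log (Real.sqrt n) ≤ Real.sqrt n - 1 :=
      Real.log_le_sub_one_of_pos (by nlinarith)
    have h2 : Real.log (Real.sqrt n) = Real.log n / 2 := Real.log_sqrt (Nat.cast_nonneg n)
    nlinarith
  set m := ⌊γ * (n:ℝ)⌋₊ with hm
  set s := ⌈γ^2 * (n:ℝ)⌉₊ with hs
  have hsle : (s:ℝ) ≤ γ^2 * n + 1 := le_of_lt (Nat.ceil_lt_add_one (by positivity))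
  have hmge : γ * n - 1 ≤ (m:ℝ) := by
    have := Nat.lt_floor_add_one (γ * (n:ℝ))
    linarith
  have hρ0 : (0:ℝ) ≤ 1 - c0/2 := by linarith
  -- exponential bounds
  have h2s : (2:ℝ) ^ s ≤ Real.exp s := by
    calc (2:ℝ) ^ s ≤ (Real.exp 1) ^ s := by
          apply pow_le_pow_left₀ (by norm_num)
          have := Real.add_one_le_exp (1:ℝ)
          linarith
      _ = Real.exp s := Real.exp_one_pow s
  have hρm : (1 - c0/2 : ℝ) ^ m ≤ Real.exp (-(c0/2) * m) := by
    calc (1 - c0/2 : ℝ) ^ m ≤ (Real.exp (-(c0/2))) ^ m := by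
          apply pow_le_pow_left₀ hρ0
          have := Real.add_one_le_exp (-(c0/2))
          linarith
      _ = Real.exp (-(c0/2) * m) := by rw [← Real.exp_nat_mul]; ring_nf
  have hn2 : (n:ℝ)^2 = Real.exp (2 * Real.log n) := by
    rw [mul_comm, Real.exp_mul, Real.exp_log hn0]
    norm_num
  have key : 2 * Real.log n + (s:ℝ) + (-(c0/2) * m) < 0 := by
    have e1 : (s:ℝ) ≤ γ^2 * n + 1 := hsle
    have e2 : -(c0/2) * (m:ℝ) ≤ -(c0/2) * (γ * n - 1) := by
      apply mul_le_mul_of_nonpos_left hmge (by linarith)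
    have e3 : γ^2 * n = (c0 * γ / 256) * n := by rw [hγ]; ring
    have e4 : 2 * Real.log n ≤ 4 * Real.sqrt n := by linarith
    have e5 : (c0 * γ / 4) * n = ((c0 * γ / 4) * Real.sqrt n) * Real.sqrt n := by
      rw [mul_assoc, hsq]
    have e6 : (25:ℝ) ≤ (c0 * γ / 4) * Real.sqrt n := by
      have : (c0 * γ / 4) * (100 / (c0 * γ)) = 25 := by field_simp; ring
      nlinarith [mul_le_mul_of_nonneg_left hsn (le_of_lt (by positivity : (0:ℝ) < c0 * γ / 4))]
    have hsqn0 : (0:ℝ) ≤ Real.sqrt n := Real.sqrt_nonneg _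
    have e7' := mul_le_mul_of_nonneg_right e6 hsqn0
    have e7 : 6 * Real.sqrt n < (c0 * γ / 4) * n := by
      rw [e5]; nlinarith
    have e8 : 4 * Real.sqrt n + 2 ≤ 6 * Real.sqrt n := by linarith
    have e9 : (c0 * γ / 4) * n ≤ (1/2 - 1/256) * (c0 * γ) * n := by
      have h0 : (0:ℝ) ≤ (c0 * γ) * n := by positivity
      linarith
    linarith
  calc (n:ℝ)^2 * 2 ^ s * (1 - c0/2) ^ m
      ≤ Real.exp (2 * Real.log n) * Real.exp s * Real.exp (-(c0/2) * m) := by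
        rw [hn2]
        have g1 : (0:ℝ) ≤ Real.exp (2 * Real.log n) := le_of_lt (Real.exp_pos _)
        have g2 : (0:ℝ) ≤ (2:ℝ)^s := by positivity
        have g3 : (0:ℝ) ≤ (1 - c0/2:ℝ)^m := pow_nonneg hρ0 m
        have g4 : (0:ℝ) ≤ Real.exp (s:ℝ) := le_of_lt (Real.exp_pos _)
        apply mul_le_mul (mul_le_mul le_rfl h2s g2 g1) hρm g3 (by positivity)
    _ = Real.exp (2 * Real.log n + (s:ℝ) + (-(c0/2) * m)) := by
        rw [← Real.exp_add, ← Real.exp_add]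
    _ < 1 := by rw [Real.exp_lt_one_iff]; exact key

set_option maxHeartbeats 3200000 in
/-- **Lemma (absorbing family).**  For every `ε' ∈ (0,1)` there are `γ > 0` and `n₀` such
that for all `n ≥ n₀` and `k ≤ γn`: if `D` is a digraph on `n` vertices with
`δ⁰(D) ≥ n/2 + k` not satisfying **EC** with parameter `ε'`, and `W` is a set of at most
`2k` vertices, then `D' = D - W` contains a family `F` of at most `γn` pairwise
vertex-disjoint absorbing 4-paths such that every ordered vertex pair `(u, v)` of `D'`
has at least `γ²n` absorbers in `F`. -/
theorem absorbing_family_exists (ε' : ℝ) (hε'0 : 0 < ε') (hε'1 : ε' < 1) :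
    ∃ (γ : ℝ) (n₀ : ℕ), 0 < γ ∧
      ∀ n k : ℕ, n₀ ≤ n → (k : ℝ) ≤ γ * n →
        ∀ (V : Type) [Fintype V] (A : V → V → Prop),
          (∀ v, ¬ A v v) →
          Fintype.card V = n →
          (∀ v : V, (n : ℝ) / 2 + k ≤ (outDeg A v : ℝ) ∧
                    (n : ℝ) / 2 + k ≤ (inDeg A v : ℝ)) →
          ¬ SatisfiesEC A ε' →
          ∀ W : Set V, W.ncard ≤ 2 * k →
            ∃ F : Set (V × V × V × V),
              (F.ncard : ℝ) ≤ γ * n ∧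
              (∀ z ∈ F, IsFourPath A Wᶜ z) ∧
              (∀ z ∈ F, ∀ z' ∈ F, z ≠ z' → ∀ x ∈ quadList z, x ∉ quadList z') ∧
              ∀ u v : V, u ∉ W → v ∉ W →
                γ^2 * n ≤ (({z ∈ F | AbsorbsPair A z u v}).ncard : ℝ) := by
  classical
  open Finset AbsorbAux in
  set ε₀ : ℝ := min ε' (1/8) with hε₀def
  have hε₀0 : 0 < ε₀ := lt_min hε'0 (by norm_num)
  have hε₀8 : ε₀ ≤ 1/8 := min_le_right _ _
  have hε₀ε' : ε₀ ≤ ε' := min_le_left _ _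
  set c0 : ℝ := ε₀^2/16 with hc0def
  set γ : ℝ := c0/256 with hγdef
  have hc00 : 0 < c0 := by positivity
  have hc01 : c0 ≤ 1 := by nlinarith
  have hγ0 : 0 < γ := by positivity
  have hγsmall : γ ≤ 1/4096 := by nlinarith
  refine ⟨γ, max (⌈(100/(c0*γ))^2⌉₊ + 1) (max (⌈1/γ⌉₊ + 1) 24), hγ0, ?_⟩
  intro n k hn hk V _ A irr hcard hdeg hEC W hWcard
  -- basic numeric facts about n
  have hnmaj : ((100/(c0*γ))^2 : ℝ) ≤ n := by
    have h1 : (⌈(100/(c0*γ))^2⌉₊ : ℕ) ≤ n := le_trans (by omega) (le_trans (le_max_left _ _) hn)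
    exact le_trans (Nat.le_ceil _) (by exact_mod_cast h1)
  have hn24 : (24:ℕ) ≤ n := le_trans (le_trans (le_max_right _ _) (le_max_right _ _)) hn
  have hnγ : (1:ℝ)/γ ≤ n := by
    have h1 : (⌈1/γ⌉₊ : ℕ) ≤ n := le_trans (by omega)
      (le_trans (le_max_left _ _) (le_trans (le_max_right _ _) hn))
    exact le_trans (Nat.le_ceil _) (by exact_mod_cast h1)
  have hn0 : (0:ℝ) < n := by
    have : (0:ℕ) < n := by omega
    exact_mod_cast this
  -- stability in quantitative form
  have hstab : ∀ U₁ U₂ : Set V, (1/2 - ε₀) * n ≤ (U₁.ncard : ℝ) →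
      (1/2 - ε₀) * n ≤ (U₂.ncard : ℝ) → (ε₀ * n)^2 < (arcsCount A U₁ U₂ : ℝ) := by
    intro U₁ U₂ h1 h2
    by_contra h3
    push_neg at h3
    refine hEC ⟨U₁, U₂, ?_, ?_, ?_⟩
    · rw [hcard]
      refine le_trans ?_ h1
      have : (1/2 - ε' : ℝ) ≤ 1/2 - ε₀ := by linarith
      nlinarith
    · rw [hcard]
      refine le_trans ?_ h2
      have : (1/2 - ε' : ℝ) ≤ 1/2 - ε₀ := by linarith
      nlinarith
    · rw [hcard]
      refine le_trans h3 ?_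
      have h4 : (0:ℝ) ≤ ε₀ * n := by positivity
      have h5 : ε₀ * n ≤ ε' * n := by nlinarith
      nlinarith
  -- degrees in Finset form
  have hdeg' : ∀ x : V, (n:ℝ)/2 ≤ ((univ.filter (fun y => A x y)).card : ℝ) ∧
      (n:ℝ)/2 ≤ ((univ.filter (fun y => A y x)).card : ℝ) := by
    intro x
    have hout : (outDeg A x : ℝ) = ((univ.filter (fun y => A x y)).card : ℝ) := by
      congr 1
      rw [outDeg, ← Set.ncard_coe_finset]
      congr 1
      ext y; simp
    have hin : (inDeg A x : ℝ) = ((univ.filter (fun y => A y x)).card : ℝ) := by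
      congr 1
      rw [inDeg, ← Set.ncard_coe_finset]
      congr 1
      ext y; simp
    have hk0 : (0:ℝ) ≤ (k:ℝ) := Nat.cast_nonneg k
    constructor
    · rw [← hout]; have := (hdeg x).1; linarith
    · rw [← hin]; have := (hdeg x).2; linarith
  -- W as a finset
  have hWfin : W.Finite := Set.toFinite W
  set Wf : Finset V := hWfin.toFinset with hWfdef
  have hWfcoe : (↑Wf : Set V) = W := hWfin.coe_toFinset
  have hWfcard : Wf.card = W.ncard := (Set.ncard_eq_toFinset_card W hWfin).symm
  set m : ℕ := ⌊γ * (n:ℝ)⌋₊ with hmdef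
  set B : ℕ := Wf.card + 4 * m with hBdef
  have hmle : (m:ℝ) ≤ γ * n := Nat.floor_le (by positivity)
  have hBle : (B:ℝ) ≤ 6 * (γ * n) := by
    have h1 : (Wf.card : ℝ) ≤ 2 * k := by
      rw [hWfcard]
      exact_mod_cast le_trans hWcard (le_refl _)
    push_cast [hBdef]
    nlinarith
  have hB1 : (B:ℝ) ≤ ε₀ * n := by
    have : 6 * γ ≤ ε₀ := by nlinarith
    nlinarith
  have hB2 : (B:ℝ) + 3 ≤ (n:ℝ)/4 := by
    have h1 : 6 * (γ * n) ≤ n/8 := by nlinarith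
    have h2 : (24:ℝ) ≤ n := by exact_mod_cast hn24
    linarith
  -- the ratio hypothesis
  have hAvail_le : ∀ U : Finset V, ((Avail A U).card : ℝ) ≤ (n:ℝ)^4 := by
    intro U
    have h1 : (Avail A U).card ≤ Fintype.card (V × V × V × V) := Finset.card_le_univ _
    have h2 : Fintype.card (V × V × V × V) = n^4 := by
      simp [Fintype.card_prod, hcard]; ring
    rw [h2] at h1
    exact_mod_cast h1
  have habs : ∀ (u v : V) (U : Finset V), (U.card : ℝ) ≤ (B:ℝ) →
      (ε₀ * n)^2 * ((n:ℝ)/4)^2 ≤ ((AbsF A u v U).card : ℝ) := by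
    intro u v U hU
    exact absF_lower A irr u v U n hcard hdeg' ε₀ hε₀0 hstab
      (le_trans hU hB1) (by linarith)
  have hr : ∀ (u v : V) (U : Finset V), U.card ≤ B →
      c0 * ((Avail A U).card : ℝ) ≤ ((AbsF A u v U).card : ℝ) := by
    intro u v U hU
    have h1 := habs u v U (by exact_mod_cast hU)
    have h2 : c0 * ((Avail A U).card : ℝ) ≤ c0 * (n:ℝ)^4 :=
      mul_le_mul_of_nonneg_left (hAvail_le U) (le_of_lt hc00)
    have h3 : c0 * (n:ℝ)^4 = (ε₀ * n)^2 * ((n:ℝ)/4)^2 := by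
      rw [hc0def]; ring
    linarith
  have hA : ∀ U : Finset V, U.card ≤ B → (Avail A U).Nonempty := by
    intro U hU
    obtain ⟨v0⟩ : Nonempty V := by
      rw [← Fintype.card_pos_iff, hcard]; omega
    have h1 := habs v0 v0 U (by exact_mod_cast hU)
    have h2 : (0:ℝ) < (ε₀ * n)^2 * ((n:ℝ)/4)^2 := by positivity
    have h3 : (0:ℝ) < ((AbsF A v0 v0 U).card : ℝ) := lt_of_lt_of_le h2 h1
    have h4 : 0 < (AbsF A v0 v0 U).card := by exact_mod_cast h3
    obtain ⟨z, hz⟩ := Finset.card_pos.1 h4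
    exact ⟨z, Finset.mem_filter.1 hz |>.1⟩
  -- the counting machinery
  have hWB : Wf.card + 4 * m ≤ B := le_of_eq hBdef.symm
  have hone : ∑ l ∈ TT A m Wf, mu A l Wf = 1 := sum_mu_one A B hA m Wf hWB
  set s : ℕ := ⌈γ^2 * (n:ℝ)⌉₊ with hsdef
  have hnum : (n:ℝ)^2 * 2 ^ s * (1 - c0/2) ^ m < 1 :=
    numeric_bound c0 γ hc00 hc01 hγdef n hnmaj
  have extraction : ∃ l ∈ TT A m Wf, ∀ u v : V, s ≤ cnt A u v l := by
    by_contra hcon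
    push_neg at hcon
    have h1 : (1:ℝ) ≤ ∑ p ∈ (univ ×ˢ univ : Finset (V × V)),
        ∑ l ∈ (TT A m Wf).filter (fun l => cnt A p.1 p.2 l < s), mu A l Wf := by
      rw [← hone]
      calc ∑ l ∈ TT A m Wf, mu A l Wf
          ≤ ∑ l ∈ TT A m Wf, ∑ p ∈ (univ ×ˢ univ : Finset (V × V)),
              (if cnt A p.1 p.2 l < s then mu A l Wf else 0) := by
            refine Finset.sum_le_sum fun l hl => ?_
            obtain ⟨u, v, huv⟩ := hcon l hl
            have hmem : ((u, v) : V × V) ∈ (univ ×ˢ univ : Finset (V × V)) := by simp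
            have := Finset.single_le_sum
              (f := fun p : V × V => if cnt A p.1 p.2 l < s then mu A l Wf else 0)
              (fun p _ => by split_ifs; exacts [mu_nonneg A l Wf, le_refl 0]) hmem
            simpa [Nat.lt_of_not_le, huv] using this
        _ = ∑ p ∈ (univ ×ˢ univ : Finset (V × V)),
              ∑ l ∈ (TT A m Wf).filter (fun l => cnt A p.1 p.2 l < s), mu A l Wf := by
            rw [Finset.sum_comm]
            refine Finset.sum_congr rfl fun p _ => ?_
            rw [Finset.sum_filter]
    have h2 : ∀ p : V × V, ∑ l ∈ (TT A m Wf).filter (fun l => cnt A p.1 p.2 l < s), mu A l Wf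
        ≤ (2:ℝ)^s * (1 - c0/2)^m := by
      intro p
      have hweight := sum_mu_weight A p.1 p.2 B c0 (le_of_lt hc00) hA (hr p.1 p.2) m Wf hWB
      calc ∑ l ∈ (TT A m Wf).filter (fun l => cnt A p.1 p.2 l < s), mu A l Wf
          ≤ ∑ l ∈ (TT A m Wf).filter (fun l => cnt A p.1 p.2 l < s),
              mu A l Wf * ((2:ℝ)^s * (1/2)^(cnt A p.1 p.2 l)) := by
            refine Finset.sum_le_sum fun l hl => ?_
            have hlt : cnt A p.1 p.2 l < s := (Finset.mem_filter.1 hl).2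
            have hfac : (1:ℝ) ≤ (2:ℝ)^s * (1/2)^(cnt A p.1 p.2 l) := by
              rw [one_div, inv_pow, ← div_eq_mul_inv, le_div_iff₀ (by positivity)]
              rw [one_mul]
              exact pow_le_pow_right₀ (by norm_num) (le_of_lt hlt)
            nlinarith [mu_nonneg A l Wf]
        _ ≤ ∑ l ∈ TT A m Wf, mu A l Wf * ((2:ℝ)^s * (1/2)^(cnt A p.1 p.2 l)) := by
            refine Finset.sum_le_sum_of_subset_of_nonneg (Finset.filter_subset _ _)
              fun l _ _ => ?_
            have := mu_nonneg A l Wf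
            positivity
        _ = (2:ℝ)^s * ∑ l ∈ TT A m Wf, mu A l Wf * (1/2)^(cnt A p.1 p.2 l) := by
            rw [Finset.mul_sum]
            refine Finset.sum_congr rfl fun l _ => ?_
            ring
        _ ≤ (2:ℝ)^s * (1 - c0/2)^m := by
            refine mul_le_mul_of_nonneg_left hweight (by positivity)
    have h3 : (1:ℝ) ≤ (n:ℝ)^2 * ((2:ℝ)^s * (1 - c0/2)^m) := by
      refine le_trans h1 ?_
      calc ∑ p ∈ (univ ×ˢ univ : Finset (V × V)),
            ∑ l ∈ (TT A m Wf).filter (fun l => cnt A p.1 p.2 l < s), mu A l Wf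
          ≤ ∑ _p ∈ (univ ×ˢ univ : Finset (V × V)), (2:ℝ)^s * (1 - c0/2)^m :=
            Finset.sum_le_sum fun p _ => h2 p
        _ = (n:ℝ)^2 * ((2:ℝ)^s * (1 - c0/2)^m) := by
            rw [Finset.sum_const, nsmul_eq_mul]
            congr 1
            simp [Finset.card_univ, hcard]
            push_cast
            ring
    nlinarith [h3]
  obtain ⟨l, hl, hcnt⟩ := extraction
  obtain ⟨hlen, hmem, hpw⟩ := TT_struct A m Wf l hl
  have hmem' : ∀ z ∈ l, IsFourPath A Wᶜ z := by
    intro z hz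
    have := hmem z hz
    rwa [hWfcoe] at this
  -- nodup
  have hRsymm : ∀ z z' : V × V × V × V,
      (∀ x ∈ quadList z, x ∉ quadList z') → (∀ x ∈ quadList z', x ∉ quadList z) :=
    fun z z' h x hx hx' => h x hx' hx
  have hnd : l.Nodup := by
    refine hpw.imp ?_
    intro z z' h
    intro hzz
    subst hzz
    exact h z.1 (by simp [quadList]) (by simp [quadList])
  refine ⟨(↑l.toFinset : Set (V × V × V × V)), ?_, ?_, ?_, ?_⟩
  · rw [Set.ncard_coe_finset, List.toFinset_card_of_nodup hnd, hlen]
    exact le_trans hmle (le_refl _)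
  · intro z hz
    exact hmem' z (List.mem_toFinset.1 hz)
  · intro z hz z' hz' hne
    have hz1 := List.mem_toFinset.1 hz
    have hz2 := List.mem_toFinset.1 hz'
    haveI : Std.Symm (fun z z' : V × V × V × V => ∀ x ∈ quadList z, x ∉ quadList z') :=
      ⟨fun a b h => hRsymm a b h⟩
    exact List.Pairwise.forall hpw hz1 hz2 hne
  · intro u v _ _
    have hset : {z ∈ (↑l.toFinset : Set (V × V × V × V)) | AbsorbsPair A z u v}
        = ↑(l.toFinset.filter (fun z => AbsorbsPair A z u v)) := by
      ext z; simp
    rw [hset, Set.ncard_coe_finset]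
    have hfeq : l.toFinset.filter (fun z => AbsorbsPair A z u v)
        = (l.filter (fun z => decide (AbsorbsPair A z u v))).toFinset := by
      ext z
      simp [List.mem_toFinset, List.mem_filter]
    rw [hfeq, List.toFinset_card_of_nodup (hnd.filter _)]
    have h1 : (s:ℝ) ≤ ((l.filter (fun z => decide (AbsorbsPair A z u v))).length : ℝ) := by
      exact_mod_cast hcnt u v
    have h2 : γ^2 * (n:ℝ) ≤ (s:ℝ) := Nat.le_ceil _
    linarith
end

section
/- For every ε′ ∈ (0,1) there exist γ > 0 and n₀ such that the following holds for all n ≥ n₀ and all k ≤ γn. Let D be a digraph on n vertices with δ⁰(D) ≥ n/2 + k which does not satisfy the extremal condition EC with parameter ε′, let W ⊆ V(D) with |W| ≤ 2k, set D′ = D − W, and let F be a family of at most γn pairwise vertex-disjoint 4-paths in D′. Then for any partition F = F_1 ∪ … ∪ F_s with F_i = {F_{i,1}, …, F_{i,l_i}}, there exist pairwise vertex-disjoint directed paths L_1, …, L_s in D′ such that for each i, L_i = F_{i,1} ∘ P_{i,1} ∘ F_{i,2} ∘ ⋯ ∘ F_{i,l_i−1} ∘ P_{i,l_i−1} ∘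 F_{i,l_i}, where each connecting path P_{i,j} has length at most 3. -/
open scoped Classical

lemma exists_conn {V : Type} [Fintype V] {A : V → V → Prop} (hirr : ∀ v, ¬ A v v)
    {ε' : ℝ} (hEC : ¬ SatisfiesEC A ε') {k : ℕ}
    (hdeg : ∀ v : V, ((Fintype.card V : ℝ)/2 + k ≤ (outDeg A v : ℝ)) ∧
      ((Fintype.card V : ℝ)/2 + k ≤ (inDeg A v : ℝ)))
    (b d : V) (B : Set V)
    (hB : (1/2 - ε') * (Fintype.card V : ℝ) + (B.ncard : ℝ) ≤ (Fintype.card V : ℝ)/2 + k) :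
    ∃ u v : V, A b u ∧ A u v ∧ A v d ∧ u ∉ B ∧ v ∉ B ∧ u ≠ v := by
  classical
  have hsub : ∀ (S : Set V), (S.ncard : ℝ) ≤ ((S \ B).ncard : ℝ) + (B.ncard : ℝ) := by
    intro S
    have h1 : S ⊆ (S \ B) ∪ B := by
      intro x hx
      by_cases hxB : x ∈ B
      · exact Or.inr hxB
      · exact Or.inl ⟨hx, hxB⟩
    have := calc S.ncard ≤ ((S \ B) ∪ B).ncard := Set.ncard_le_ncard h1 (Set.toFinite _)
      _ ≤ (S \ B).ncard + B.ncard := Set.ncard_union_le _ _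
    exact_mod_cast this
  have hU₁ : (1/2 - ε') * (Fintype.card V : ℝ) ≤ (({x | A b x} \ B).ncard : ℝ) := by
    have h1 := hsub {x | A b x}
    have hd := (hdeg b).1
    unfold outDeg at hd
    linarith
  have hU₂ : (1/2 - ε') * (Fintype.card V : ℝ) ≤ (({x | A x d} \ B).ncard : ℝ) := by
    have h1 := hsub {x | A x d}
    have hd := (hdeg d).2
    unfold inDeg at hd
    linarith
  rw [SatisfiesEC] at hEC
  push_neg at hEC
  have harc := hEC ({x | A b x} \ B) ({x | A x d} \ B) hU₁ hU₂
  have hpos : 0 < arcsCount A ({x | A b x} \ B) ({x | A x d} \ B) := by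
    have h0 : (0:ℝ) < (arcsCount A ({x | A b x} \ B) ({x | A x d} \ B) : ℝ) :=
      lt_of_le_of_lt (sq_nonneg _) harc
    exact_mod_cast h0
  unfold arcsCount at hpos
  obtain ⟨⟨u, v⟩, hu, hv, huv⟩ := (Set.ncard_pos).mp hpos
  refine ⟨u, v, hu.1, huv, hv.1, hu.2, hv.2, ?_⟩
  intro h
  exact hirr u (h ▸ huv)

lemma exists_conn_family {V : Type} [Fintype V] {A : V → V → Prop} (hirr : ∀ v, ¬ A v v)
    {ε' : ℝ} (hEC : ¬ SatisfiesEC A ε') {k : ℕ}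
    (hdeg : ∀ v : V, ((Fintype.card V : ℝ)/2 + k ≤ (outDeg A v : ℝ)) ∧
      ((Fintype.card V : ℝ)/2 + k ≤ (inDeg A v : ℝ)))
    {I : Type} (dem : I → V × V) (B₀ : Set V) :
    ∀ T : Finset I,
      ((1/2 - ε') * (Fintype.card V : ℝ) + ((B₀.ncard : ℝ) + 2 * T.card)
        ≤ (Fintype.card V : ℝ)/2 + k) →
      ∃ c : I → V × V, ∀ i ∈ T,
        A (dem i).1 (c i).1 ∧ A (c i).1 (c i).2 ∧ A (c i).2 (dem i).2 ∧
        (c i).1 ∉ B₀ ∧ (c i).2 ∉ B₀ ∧ (c i).1 ≠ (c i).2 ∧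
        ∀ i' ∈ T, i ≠ i' →
          (c i).1 ≠ (c i').1 ∧ (c i).1 ≠ (c i').2 ∧
          (c i).2 ≠ (c i').1 ∧ (c i).2 ≠ (c i').2 := by
  classical
  intro T
  induction T using Finset.induction with
  | empty => exact fun _ => ⟨dem, fun i hi => absurd hi (Finset.notMem_empty i)⟩
  | @insert a T ha IH =>
    intro hbound
    rw [Finset.card_insert_of_notMem ha] at hbound
    push_cast at hbound
    obtain ⟨c', hc'⟩ := IH (by linarith)
    set B' : Set V := B₀ ∪ ↑(T.image fun i => (c' i).1) ∪ ↑(T.image fun i => (c' i).2)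
      with hB'def
    have hB'card : (B'.ncard : ℝ) ≤ (B₀.ncard : ℝ) + T.card + T.card := by
      have h1 : B'.ncard ≤ (B₀ ∪ ↑(T.image fun i => (c' i).1)).ncard
          + ((T.image fun i => (c' i).2 : Finset V) : Set V).ncard :=
        Set.ncard_union_le _ _
      have h2 : (B₀ ∪ ↑(T.image fun i => (c' i).1)).ncard ≤ B₀.ncard
          + ((T.image fun i => (c' i).1 : Finset V) : Set V).ncard :=
        Set.ncard_union_le _ _
      have h3 : ((T.image fun i => (c' i).1 : Finset V) : Set V).ncard ≤ T.card := by
        rw [Set.ncard_coe_finset]; exact Finset.card_image_le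
      have h4 : ((T.image fun i => (c' i).2 : Finset V) : Set V).ncard ≤ T.card := by
        rw [Set.ncard_coe_finset]; exact Finset.card_image_le
      have : (B'.ncard : ℕ) ≤ B₀.ncard + T.card + T.card := by omega
      exact_mod_cast this
    obtain ⟨u, v, hbu, huv, hvd, huB, hvB, hune⟩ :=
      exists_conn hirr hEC hdeg (dem a).1 (dem a).2 B' (by linarith)
    have hmem1 : ∀ i ∈ T, (c' i).1 ∈ B' := fun i hi =>
      Or.inl (Or.inr (Finset.mem_coe.mpr (Finset.mem_image_of_mem _ hi)))
    have hmem2 : ∀ i ∈ T, (c' i).2 ∈ B' := fun i hi =>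
      Or.inr (Finset.mem_coe.mpr (Finset.mem_image_of_mem _ hi))
    have hB₀B' : B₀ ⊆ B' := fun x hx => Or.inl (Or.inl hx)
    refine ⟨Function.update c' a (u, v), ?_⟩
    intro i hi
    rcases Finset.mem_insert.mp hi with heq | hiT
    · subst heq
      rw [Function.update_self]
      refine ⟨hbu, huv, hvd, fun h => huB (hB₀B' h), fun h => hvB (hB₀B' h), hune, ?_⟩
      intro i' hi' hne
      have hi'T : i' ∈ T := by
        rcases Finset.mem_insert.mp hi' with h | h
        · exact absurd h.symm hne
        · exact h
      have hi'a : i' ≠ i := fun h => ha (h ▸ hi'T)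
      rw [Function.update_of_ne hi'a]
      exact ⟨fun h => huB (show (u,v).1 ∈ B' from h ▸ hmem1 i' hi'T),
        fun h => huB (show (u,v).1 ∈ B' from h ▸ hmem2 i' hi'T),
        fun h => hvB (show (u,v).2 ∈ B' from h ▸ hmem1 i' hi'T),
        fun h => hvB (show (u,v).2 ∈ B' from h ▸ hmem2 i' hi'T)⟩
    · have hia : i ≠ a := fun h => ha (h ▸ hiT)
      rw [Function.update_of_ne hia]
      obtain ⟨p1, p2, p3, p4, p5, p6, p7⟩ := hc' i hiT
      refine ⟨p1, p2, p3, p4, p5, p6, ?_⟩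
      intro i' hi' hne
      rcases Finset.mem_insert.mp hi' with heq | hi'T
      · subst heq
        rw [Function.update_self]
        exact ⟨fun h => huB (show (u,v).1 ∈ B' from h ▸ hmem1 i hiT),
          fun h => hvB (show (u,v).2 ∈ B' from h ▸ hmem1 i hiT),
          fun h => huB (show (u,v).1 ∈ B' from h ▸ hmem2 i hiT),
          fun h => hvB (show (u,v).2 ∈ B' from h ▸ hmem2 i hiT)⟩
      · have hi'a : i' ≠ a := fun h => ha (h ▸ hi'T)
        rw [Function.update_of_ne hi'a]
        exact p7 i' hi'T hne

/-- **Lemma (linking the 4-paths of a family).**  For every `ε' ∈ (0,1)` there are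
`γ > 0` and `n₀` such that for all `n ≥ n₀` and `k ≤ γn`: let `D` be a digraph on `n`
vertices with `δ⁰(D) ≥ n/2 + k` not satisfying **EC** with parameter `ε'`, let `W` be a
set of at most `2k` vertices, and let `F` be a family of at most `γn` pairwise
vertex-disjoint 4-paths of `D' = D - W`, partitioned into parts
`F i = {Q i 0, …, Q i (l i - 1)}`.  Then there are pairwise vertex-disjoint directed
paths `L 0, …, L (s-1)` in `D'` such that each `L i` is the concatenation
`Q i 0 ∘ P i 0 ∘ Q i 1 ∘ ⋯ ∘ P i (lᵢ - 2) ∘ Q i (lᵢ - 1)` where each connecting path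
`P i j` has length at most 3; here `L i` is recorded as the flat list interleaving the
4-paths `Q i j` with the (at most two) internal vertices `C i j` of each `P i j`. -/
theorem linking_absorbers_into_paths (ε' : ℝ) (hε'0 : 0 < ε') (hε'1 : ε' < 1) :
    ∃ (γ : ℝ) (n₀ : ℕ), 0 < γ ∧
      ∀ n k : ℕ, n₀ ≤ n → (k : ℝ) ≤ γ * n →
        ∀ (V : Type) [Fintype V] (A : V → V → Prop),
          (∀ v, ¬ A v v) →
          Fintype.card V = n →
          (∀ v : V, (n : ℝ) / 2 + k ≤ (outDeg A v : ℝ) ∧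
                    (n : ℝ) / 2 + k ≤ (inDeg A v : ℝ)) →
          ¬ SatisfiesEC A ε' →
          ∀ W : Set V, W.ncard ≤ 2 * k →
            ∀ (s : ℕ) (l : Fin s → ℕ) (hl : ∀ i, 1 ≤ l i)
              (Q : (i : Fin s) → Fin (l i) → V × V × V × V),
              (∀ i j, IsFourPath A Wᶜ (Q i j)) →
              (∀ p q : Σ i : Fin s, Fin (l i), p ≠ q →
                ∀ x ∈ quadList (Q p.1 p.2), x ∉ quadList (Q q.1 q.2)) →
              ((∑ i, l i : ℝ)) ≤ γ * n →
              ∃ (L : Fin s → List V) (C : (i : Fin s) → Fin (l i) → List V),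
                (∀ i, (L i).Chain' A ∧ (L i).Nodup ∧ ∀ x ∈ L i, x ∉ W) ∧
                (∀ i i', i ≠ i' → ∀ x ∈ L i, x ∉ L i') ∧
                (∀ i, L i = (List.ofFn fun j => quadList (Q i j) ++ C i j).flatten) ∧
                (∀ i j, (C i j).length ≤ 2) ∧
                (∀ i, C i ⟨l i - 1, Nat.sub_lt (hl i) Nat.one_pos⟩ = []) := by
  classical
  refine ⟨ε' / 16, 1, by positivity, ?_⟩
  intro n k hn hk V instV A hirr hcard hdeg hEC W hW s l hl Q hQ hdisjQ hsum
  subst hcard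
  have hN0 : (0:ℝ) ≤ (Fintype.card V : ℝ) := Nat.cast_nonneg _
  set QF : Finset V := Finset.univ.biUnion
      (fun σ : Σ i : Fin s, Fin (l i) => (quadList (Q σ.1 σ.2)).toFinset) with hQFdef
  have hQFcard : (QF.card : ℝ) ≤ 4 * ∑ i, (l i : ℝ) := by
    have h1 : QF.card ≤ ∑ σ : Σ i : Fin s, Fin (l i), (quadList (Q σ.1 σ.2)).toFinset.card :=
      Finset.card_biUnion_le
    have h2 : ∑ σ : Σ i : Fin s, Fin (l i), (quadList (Q σ.1 σ.2)).toFinset.card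
        ≤ ∑ _σ : Σ i : Fin s, Fin (l i), 4 :=
      Finset.sum_le_sum (fun σ _ => le_trans (List.toFinset_card_le _) (by simp [quadList]))
    have h3 : (∑ _σ : Σ i : Fin s, Fin (l i), (4:ℕ)) = 4 * ∑ i, l i := by
      rw [Finset.sum_const, Finset.card_univ, Fintype.card_sigma]
      simp [Fintype.card_fin, Nat.mul_comm]
    have h4 : QF.card ≤ 4 * ∑ i, l i := by omega
    calc (QF.card : ℝ) ≤ ((4 * ∑ i, l i : ℕ) : ℝ) := by exact_mod_cast h4
      _ = 4 * ∑ i, (l i : ℝ) := by push_cast; ring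
  set B₀ : Set V := W ∪ ↑QF with hB₀def
  have hquadB₀ : ∀ (i : Fin s) (j : Fin (l i)) x, x ∈ quadList (Q i j) → x ∈ B₀ := by
    intro i j x hx
    exact Or.inr (Finset.mem_coe.mpr (Finset.mem_biUnion.mpr
      ⟨⟨i, j⟩, Finset.mem_univ _, List.mem_toFinset.mpr hx⟩))
  have hWB₀ : W ⊆ B₀ := fun x hx => Or.inl hx
  have hB₀card : (B₀.ncard : ℝ) ≤ 2 * k + 4 * ∑ i, (l i : ℝ) := by
    have h1 : B₀.ncard ≤ W.ncard + (↑QF : Set V).ncard := Set.ncard_union_le _ _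
    rw [Set.ncard_coe_finset] at h1
    have h1' : (B₀.ncard : ℝ) ≤ (W.ncard : ℝ) + QF.card := by exact_mod_cast h1
    have h2 : (W.ncard : ℝ) ≤ 2 * k := by exact_mod_cast hW
    linarith
  set dem : (Σ i : Fin s, Fin (l i)) → V × V := fun σ =>
    ((Q σ.1 σ.2).2.2.2,
      if h : (σ.2 : ℕ) + 1 < l σ.1 then (Q σ.1 ⟨(σ.2 : ℕ) + 1, h⟩).1 else (Q σ.1 σ.2).2.2.2)
    with hdemdef
  have hcardI : ((Fintype.card (Σ i : Fin s, Fin (l i)) : ℕ) : ℝ) = ∑ i, (l i : ℝ) := by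
    rw [Fintype.card_sigma]
    push_cast
    simp [Fintype.card_fin]
  have hεN : (0:ℝ) ≤ ε' * (Fintype.card V : ℝ) := mul_nonneg hε'0.le hN0
  have hbound : (1/2 - ε') * (Fintype.card V : ℝ)
      + ((B₀.ncard : ℝ) + 2 * ((Finset.univ : Finset (Σ i : Fin s, Fin (l i))).card : ℝ))
      ≤ (Fintype.card V : ℝ)/2 + k := by
    rw [Finset.card_univ, hcardI]
    linarith
  obtain ⟨c, hc⟩ := exists_conn_family hirr hEC hdeg dem B₀ Finset.univ hbound
  have hcp := fun σ => hc σ (Finset.mem_univ σ)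
  set Cf : (i : Fin s) → Fin (l i) → List V := fun i j =>
    if (j : ℕ) + 1 < l i then [(c ⟨i, j⟩).1, (c ⟨i, j⟩).2] else [] with hCf
  have hCfmem : ∀ (i : Fin s) (j : Fin (l i)) x, x ∈ Cf i j →
      x = (c ⟨i, j⟩).1 ∨ x = (c ⟨i, j⟩).2 := by
    intro i j x hx
    simp only [hCf] at hx
    split_ifs at hx
    · simpa using hx
    · simp at hx
  have hCfB₀ : ∀ (i : Fin s) (j : Fin (l i)) x, x ∈ Cf i j → x ∉ B₀ := by
    intro i j x hx
    rcases hCfmem i j x hx with rfl | rfl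
    · exact (hcp ⟨i, j⟩).2.2.2.1
    · exact (hcp ⟨i, j⟩).2.2.2.2.1
  have hsne : ∀ (i : Fin s) (j j' : Fin (l i)), j ≠ j' →
      (⟨i, j⟩ : Σ i : Fin s, Fin (l i)) ≠ ⟨i, j'⟩ := by
    intro i j j' hjj h
    exact hjj (eq_of_heq (Sigma.mk.inj_iff.mp h).2)
  have hblock : ∀ σ σ' : Σ i : Fin s, Fin (l i), σ ≠ σ' → ∀ x,
      x ∈ quadList (Q σ.1 σ.2) ++ Cf σ.1 σ.2 → x ∉ quadList (Q σ'.1 σ'.2) ++ Cf σ'.1 σ'.2 := by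
    intro σ σ' hne x hx hx'
    rcases List.mem_append.mp hx with hq | hcl <;> rcases List.mem_append.mp hx' with hq' | hcl'
    · exact hdisjQ σ σ' hne x hq hq'
    · exact hCfB₀ σ'.1 σ'.2 x hcl' (hquadB₀ σ.1 σ.2 x hq)
    · exact hCfB₀ σ.1 σ.2 x hcl (hquadB₀ σ'.1 σ'.2 x hq')
    · have p := (hcp σ).2.2.2.2.2.2 σ' (Finset.mem_univ _) hne
      rcases hCfmem _ _ _ hcl with h1 | h1 <;> rcases hCfmem _ _ _ hcl' with h2 | h2
      · exact p.1 (h1.symm.trans h2)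
      · exact p.2.1 (h1.symm.trans h2)
      · exact p.2.2.1 (h1.symm.trans h2)
      · exact p.2.2.2 (h1.symm.trans h2)
  have hblockchain : ∀ (i : Fin s) (j : Fin (l i)), (quadList (Q i j) ++ Cf i j).Chain' A := by
    intro i j
    have hch := (hQ i j).2.1
    simp only [hCf]
    split_ifs with h
    · refine hch.append ?_ ?_
      · exact List.isChain_pair.mpr (hcp ⟨i, j⟩).2.1
      · intro x hx y hy
        simp [quadList] at hx
        simp at hy
        subst hx; subst hy
        exact (hcp ⟨i, j⟩).1
    · simpa using hch
  have hblocknodup : ∀ (i : Fin s) (j : Fin (l i)), (quadList (Q i j) ++ Cf i j).Nodup := by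
    intro i j
    rw [List.nodup_append]
    refine ⟨(hQ i j).1, ?_, ?_⟩
    · simp only [hCf]
      split_ifs with h
      · simp [(hcp ⟨i, j⟩).2.2.2.2.2.1]
      · simp
    · intro x hx y hy hxy
      subst hxy
      exact hCfB₀ i j x hy (hquadB₀ i j x hx)
  have hlink : ∀ (i : Fin s) (j₀ j₁ : Fin (l i)), (j₀ : ℕ) + 1 = (j₁ : ℕ) →
      ∀ x ∈ (quadList (Q i j₀) ++ Cf i j₀).getLast?,
        ∀ y ∈ (quadList (Q i j₁) ++ Cf i j₁).head?, A x y := by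
    intro i j₀ j₁ hsucc x hx y hy
    have hcond : (j₀ : ℕ) + 1 < l i := by rw [hsucc]; exact j₁.isLt
    have hC0 : Cf i j₀ = [(c ⟨i, j₀⟩).1, (c ⟨i, j₀⟩).2] := by
      simp only [hCf]; rw [if_pos hcond]
    rw [hC0] at hx
    have hlast : (quadList (Q i j₀) ++ [(c ⟨i, j₀⟩).1, (c ⟨i, j₀⟩).2]).getLast?
        = some (c ⟨i, j₀⟩).2 := by
      simp [quadList]
    rw [hlast] at hx
    have hhead : (quadList (Q i j₁) ++ Cf i j₁).head? = some (Q i j₁).1 := by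
      simp [quadList]
    rw [hhead] at hy
    simp at hx hy
    subst hx; subst hy
    have h3 := (hcp ⟨i, j₀⟩).2.2.1
    have hd2 : (dem ⟨i, j₀⟩).2 = (Q i j₁).1 := by
      simp only [hdemdef]
      rw [dif_pos hcond]
      have he : (⟨(j₀ : ℕ) + 1, hcond⟩ : Fin (l i)) = j₁ := Fin.ext hsucc
      rw [he]
    rw [hd2] at h3
    exact h3
  refine ⟨fun i => (List.ofFn fun j => quadList (Q i j) ++ Cf i j).flatten, Cf, ?_, ?_, ?_, ?_, ?_⟩
  · intro i
    have hnonnil : [] ∉ List.ofFn (fun j => quadList (Q i j) ++ Cf i j) := by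
      simp only [List.mem_ofFn]
      rintro ⟨j, hj⟩
      exact absurd hj.symm (by simp [quadList])
    refine ⟨?_, ?_, ?_⟩
    · show List.IsChain A _
      rw [List.isChain_flatten hnonnil]
      constructor
      · intro bl hbl
        rw [List.mem_ofFn] at hbl
        obtain ⟨j, rfl⟩ := hbl
        exact hblockchain i j
      · rw [List.isChain_ofFn]
        intro j hj
        exact hlink i _ _ rfl
    · rw [List.nodup_flatten]
      constructor
      · intro bl hbl
        rw [List.mem_ofFn] at hbl
        obtain ⟨j, rfl⟩ := hbl
        exact hblocknodup i j
      · rw [List.pairwise_ofFn]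
        intro j j' hlt x hx hx'
        exact hblock ⟨i, j⟩ ⟨i, j'⟩ (hsne i j j' (Fin.ne_of_lt hlt)) x hx hx'
    · intro x hx
      rw [List.mem_flatten] at hx
      obtain ⟨bl, hbl, hxbl⟩ := hx
      rw [List.mem_ofFn] at hbl
      obtain ⟨j, rfl⟩ := hbl
      rcases List.mem_append.mp hxbl with hq | hcl
      · exact (hQ i j).2.2 x hq
      · exact fun hxW => hCfB₀ i j x hcl (hWB₀ hxW)
  · intro i i' hii' x hx hx'
    rw [List.mem_flatten] at hx hx'
    obtain ⟨bl, hbl, hxbl⟩ := hx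
    obtain ⟨bl', hbl', hxbl'⟩ := hx'
    rw [List.mem_ofFn] at hbl hbl'
    obtain ⟨j, rfl⟩ := hbl
    obtain ⟨j', rfl⟩ := hbl'
    exact hblock ⟨i, j⟩ ⟨i', j'⟩ (fun h => hii' (congrArg Sigma.fst h)) x hxbl hxbl'
  · intro i
    rfl
  · intro i j
    simp only [hCf]
    split_ifs <;> simp
  · intro i
    have h1 := hl i
    simp only [hCf]
    rw [if_neg]
    omega
end

section
/- For every ε′ ∈ (0,1) and every η with 0 < η < ε′/3 there exist constants ν, τ with 0 < ν ≤ (ε′)² and ν ≪ τ ≪ η, and n₀, such that the following holds for all n ≥ n₀. Let D be a digraph on n + m vertices (m ≤ ηn/2) which does not satisfy the extremal condition EC with parameter ε′, and let D′ = D − U for a set U of m vertices with δ⁰(D′) ≥ (1/2 − η)n. Then D′ is a robust (ν, τ)-outexpander. -/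
open scoped Classical

/-- A canonical `Finset` representing a set in a fintype. -/
noncomputable def finOf {V : Type} [Fintype V] (S : Set V) : Finset V :=
  Finset.univ.filter (fun x => x ∈ S)

lemma mem_finOf {V : Type} [Fintype V] {S : Set V} {x : V} : x ∈ finOf S ↔ x ∈ S := by
  simp [finOf]

lemma ncard_eq_card' {V : Type} [Fintype V] (S : Set V) (Sf : Finset V)
    (h : ∀ x, x ∈ Sf ↔ x ∈ S) : S.ncard = Sf.card := by
  letI : Fintype ↥S := Fintype.ofFinset Sf h
  rw [Set.ncard_eq_toFinset_card', Set.toFinset_ofFinset]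

lemma ncard_finOf {V : Type} [Fintype V] (S : Set V) : S.ncard = (finOf S).card :=
  ncard_eq_card' S (finOf S) (fun _ => mem_finOf)

lemma ncard_sep' {V : Type} [Fintype V] (S : Set V) (P : V → Prop) :
    ({y ∈ S | P y}).ncard = ((finOf S).filter P).card := by
  refine ncard_eq_card' _ _ fun x => ?_
  simp [mem_finOf, Set.mem_setOf_eq]

lemma arcsCount_eq_sum_in {V : Type} [Fintype V] (A : V → V → Prop) (S T : Set V) :
    arcsCount A S T = ∑ x ∈ finOf T, ((finOf S).filter (fun y => A y x)).card := by
  rw [arcsCount]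
  rw [ncard_eq_card' _ ((finOf S ×ˢ finOf T).filter fun p => A p.1 p.2)
    (by intro p; simp [mem_finOf, and_assoc])]
  rw [Finset.card_filter, Finset.sum_product, Finset.sum_comm]
  exact Finset.sum_congr rfl fun x _ => (Finset.card_filter _ _).symm

lemma arcsCount_eq_sum_out {V : Type} [Fintype V] (A : V → V → Prop) (S T : Set V) :
    arcsCount A S T = ∑ y ∈ finOf S, ((finOf T).filter (fun x => A y x)).card := by
  rw [arcsCount]
  rw [ncard_eq_card' _ ((finOf S ×ˢ finOf T).filter fun p => A p.1 p.2)
    (by intro p; simp [mem_finOf, and_assoc])]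
  rw [Finset.card_filter, Finset.sum_product]
  exact Finset.sum_congr rfl fun y _ => (Finset.card_filter _ _).symm

set_option maxHeartbeats 4000000 in
lemma stable_aux (ε' η ν τ : ℝ)
    (hε'0 : 0 < ε') (hε'1 : ε' < 1) (hη0 : 0 < η) (hη : η < ε' / 3)
    (hνd : ν = η^2/4) (hτd : τ = η/2) :
      ∀ n : ℕ, 1 ≤ n →
        ∀ (V : Type) [Fintype V] (A : V → V → Prop) (U : Set V),
          (∀ v, ¬ A v v) →
          Fintype.card V = n + U.ncard →
          (U.ncard : ℝ) ≤ η * n / 2 →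
          ¬ SatisfiesEC A ε' →
          (∀ v ∈ Uᶜ, (1/2 - η) * n ≤ (({u ∈ Uᶜ | A v u}).ncard : ℝ) ∧
                     (1/2 - η) * n ≤ (({u ∈ Uᶜ | A u v}).ncard : ℝ)) →
          ∀ S : Set V, S ⊆ Uᶜ → τ * n < (S.ncard : ℝ) → (S.ncard : ℝ) < (1 - τ) * n →
            (S.ncard : ℝ) + ν * n ≤
              (({x ∈ Uᶜ | ν * n ≤ (({y ∈ S | A y x}).ncard : ℝ)}).ncard : ℝ) := by
  have hη1 : η < 1 := by linarith
  have hν0 : 0 < ν := by rw [hνd]; positivity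
  have hτ0 : 0 < τ := by rw [hτd]; positivity
  have hντ : ν < τ := by rw [hνd, hτd]; nlinarith
  have hνη : ν ≤ η/4 := by rw [hνd]; nlinarith
  intro n hn V _ A U hirr hcard hm hEC hdeg S hSU hSl hSu
  have hn0 : (0:ℝ) ≤ n := Nat.cast_nonneg n
  have hn1 : (1:ℝ) ≤ n := by exact_mod_cast hn
  have hUc : Uᶜ.ncard = n := by
    have := Set.ncard_add_ncard_compl U
    rw [Nat.card_eq_fintype_card] at this
    omega
  have hsnN : S.ncard ≤ n := by rw [← hUc]; exact Set.ncard_le_ncard hSU (Set.toFinite _)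
  have hsn : (S.ncard : ℝ) ≤ n := by exact_mod_cast hsnN
  have hspos : (0:ℝ) < S.ncard := lt_of_le_of_lt (by positivity) hSl
  have hm0 : (0:ℝ) ≤ (U.ncard : ℝ) := Nat.cast_nonneg _
  rcases le_or_gt (S.ncard : ℝ) ((1/2 - 2*η) * n) with hcase1 | hcase1
  · -- Case 1: S is small; counting argument
    have hlow : (S.ncard : ℝ) * ((1/2 - η) * n) ≤ (arcsCount A S Uᶜ : ℝ) := by
      rw [arcsCount_eq_sum_out]
      push_cast
      calc (S.ncard : ℝ) * ((1/2 - η) * n) = ∑ _y ∈ finOf S, (1/2 - η) * (n:ℝ) := by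
            rw [Finset.sum_const, nsmul_eq_mul, ← ncard_finOf]
        _ ≤ _ := by
            refine Finset.sum_le_sum fun y hy => ?_
            have hyU : y ∈ Uᶜ := hSU (mem_finOf.mp hy)
            have h := (hdeg y hyU).1
            rw [ncard_sep' Uᶜ (fun u => A y u)] at h
            exact h
    have hhigh : (arcsCount A S Uᶜ : ℝ) ≤
        (({x ∈ Uᶜ | ν * n ≤ (({y ∈ S | A y x}).ncard : ℝ)}).ncard : ℝ) * S.ncard
          + n * (ν * n) := by
      rw [arcsCount_eq_sum_in]
      push_cast
      have split := Finset.sum_filter_add_sum_filter_not (finOf Uᶜ)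
        (fun x => ν * n ≤ (({y ∈ S | A y x}).ncard : ℝ))
        (fun x => (((finOf S).filter (fun y => A y x)).card : ℝ))
      refine le_trans (le_of_eq split.symm) ?_
      have hRNfin : ({x ∈ Uᶜ | ν * n ≤ (({y ∈ S | A y x}).ncard : ℝ)}).ncard
          = ((finOf Uᶜ).filter (fun x => ν * n ≤ (({y ∈ S | A y x}).ncard : ℝ))).card :=
        ncard_sep' _ _
      gcongr ?_ + ?_
      · calc ∑ x ∈ (finOf Uᶜ).filter (fun x => ν * n ≤ (({y ∈ S | A y x}).ncard : ℝ)),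
              (((finOf S).filter (fun y => A y x)).card : ℝ)
            ≤ ∑ _x ∈ (finOf Uᶜ).filter (fun x => ν * n ≤ (({y ∈ S | A y x}).ncard : ℝ)),
              (S.ncard : ℝ) := by
              refine Finset.sum_le_sum fun x _ => ?_
              have h : ((finOf S).filter (fun y => A y x)).card ≤ (finOf S).card :=
                Finset.card_filter_le _ _
              rw [← ncard_finOf] at h
              exact_mod_cast h
          _ = _ := by
              rw [Finset.sum_const, nsmul_eq_mul, ← hRNfin]
      · calc ∑ x ∈ (finOf Uᶜ).filter (fun x => ¬ ν * n ≤ (({y ∈ S | A y x}).ncard : ℝ)),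
              (((finOf S).filter (fun y => A y x)).card : ℝ)
            ≤ ∑ _x ∈ (finOf Uᶜ).filter (fun x => ¬ ν * n ≤ (({y ∈ S | A y x}).ncard : ℝ)),
              ν * (n:ℝ) := by
              refine Finset.sum_le_sum fun x hx => ?_
              have hx' := (Finset.mem_filter.mp hx).2
              push_neg at hx'
              rw [ncard_sep' S (fun y => A y x)] at hx'
              exact le_of_lt hx'
          _ ≤ n * (ν * n) := by
              rw [Finset.sum_const, nsmul_eq_mul]
              have h1 : ((finOf Uᶜ).filter
                  (fun x => ¬ ν * n ≤ (({y ∈ S | A y x}).ncard : ℝ))).card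
                  ≤ (finOf Uᶜ).card := Finset.card_filter_le _ _
              have h2 : ((finOf Uᶜ).card : ℝ) = n := by rw [← ncard_finOf, hUc]
              have h3 : (((finOf Uᶜ).filter
                  (fun x => ¬ ν * n ≤ (({y ∈ S | A y x}).ncard : ℝ))).card : ℝ)
                  ≤ ((finOf Uᶜ).card : ℝ) := by exact_mod_cast h1
              have hνn : (0:ℝ) ≤ ν * n := by positivity
              exact mul_le_mul_of_nonneg_right (h3.trans (le_of_eq h2)) hνn
    have key : (S.ncard : ℝ) * ((1/2 - η) * n) ≤
        (({x ∈ Uᶜ | ν * n ≤ (({y ∈ S | A y x}).ncard : ℝ)}).ncard : ℝ) * S.ncard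
          + n * (ν * n) := le_trans hlow hhigh
    have h2 : ν * n * S.ncard + ν * n * n ≤ (S.ncard : ℝ) * (η * n) := by
      have a1 : (0:ℝ) ≤ ((S.ncard:ℝ) - η/2 * n) * (η * n) := by
        apply mul_nonneg
        · have h := hSl; rw [hτd] at h; linarith
        · positivity
      have a2 : (0:ℝ) ≤ ((n:ℝ) - S.ncard) * (ν * n) := by
        apply mul_nonneg
        · linarith
        · positivity
      have hνn2 : ν * (n:ℝ) * n = η^2/4 * n * n := by rw [hνd]
      nlinarith [a1, a2, hνn2]
    have h3 : ((S.ncard:ℝ) + ν * n) * S.ncard ≤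
        (({x ∈ Uᶜ | ν * n ≤ (({y ∈ S | A y x}).ncard : ℝ)}).ncard : ℝ) * S.ncard := by
      have a3 : (S.ncard:ℝ) * S.ncard ≤ (S.ncard:ℝ) * ((1/2 - 2*η) * n) :=
        mul_le_mul_of_nonneg_left hcase1 hspos.le
      nlinarith [key, h2, a3]
    exact le_of_mul_le_mul_right h3 hspos
  · rcases le_or_gt ((1/2 + η + ν) * n) (S.ncard : ℝ) with hcase2 | hcase2
    · -- Case 2: S is large; RN = Uᶜ
      have hall : ∀ x ∈ Uᶜ, ν * n ≤ (({y ∈ S | A y x}).ncard : ℝ) := by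
        intro x hx
        have hin := (hdeg x hx).2
        have hsub : {u ∈ Uᶜ | A u x} ⊆ {y ∈ S | A y x} ∪ (Uᶜ \ S) := by
          intro u hu
          rcases Classical.em (u ∈ S) with h | h
          · exact Or.inl ⟨h, hu.2⟩
          · exact Or.inr ⟨hu.1, h⟩
        have hdiff : ((Uᶜ \ S).ncard : ℝ) = n - S.ncard := by
          rw [Set.ncard_diff hSU (Set.toFinite _), hUc, Nat.cast_sub hsnN]
        have hle : ({u ∈ Uᶜ | A u x}).ncard ≤ ({y ∈ S | A y x}).ncard + (Uᶜ \ S).ncard :=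
          le_trans (Set.ncard_le_ncard hsub (Set.toFinite _)) (Set.ncard_union_le _ _)
        have hle' : ((({u ∈ Uᶜ | A u x}).ncard : ℝ)) ≤
            (({y ∈ S | A y x}).ncard : ℝ) + ((Uᶜ \ S).ncard : ℝ) := by exact_mod_cast hle
        rw [hdiff] at hle'
        linarith
      have hRNeq : {x ∈ Uᶜ | ν * n ≤ (({y ∈ S | A y x}).ncard : ℝ)} = Uᶜ :=
        Set.eq_of_subset_of_subset (fun x hx => hx.1) (fun x hx => ⟨hx, hall x hx⟩)
      rw [hRNeq, hUc]
      have hτνn : (0:ℝ) ≤ (τ - ν) * n := mul_nonneg (by linarith) hn0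
      nlinarith [hSu, hτνn]
    · -- Case 3: middle range; contradict ¬EC
      by_contra hcon
      push_neg at hcon
      have hUnion : {x ∈ Uᶜ | ν * n ≤ (({y ∈ S | A y x}).ncard : ℝ)}
          ∪ {x ∈ Uᶜ | ¬ ν * n ≤ (({y ∈ S | A y x}).ncard : ℝ)} = Uᶜ := by
        ext x
        constructor
        · rintro (h | h) <;> exact h.1
        · intro hx
          rcases Classical.em (ν * n ≤ (({y ∈ S | A y x}).ncard : ℝ)) with h | h
          · exact Or.inl ⟨hx, h⟩
          · exact Or.inr ⟨hx, h⟩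
      have hDisj : Disjoint {x ∈ Uᶜ | ν * n ≤ (({y ∈ S | A y x}).ncard : ℝ)}
          {x ∈ Uᶜ | ¬ ν * n ≤ (({y ∈ S | A y x}).ncard : ℝ)} := by
        rw [Set.disjoint_left]
        rintro x ⟨_, h1⟩ ⟨_, h2⟩
        exact h2 h1
      have hrwN : ({x ∈ Uᶜ | ν * n ≤ (({y ∈ S | A y x}).ncard : ℝ)}).ncard
          + ({x ∈ Uᶜ | ¬ ν * n ≤ (({y ∈ S | A y x}).ncard : ℝ)}).ncard = n := by
        rw [← Set.ncard_union_eq hDisj (Set.toFinite _) (Set.toFinite _), hUnion, hUc]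
      have harcs : (arcsCount A S {x ∈ Uᶜ | ¬ ν * n ≤ (({y ∈ S | A y x}).ncard : ℝ)} : ℝ)
          ≤ (({x ∈ Uᶜ | ¬ ν * n ≤ (({y ∈ S | A y x}).ncard : ℝ)}).ncard : ℝ) * (ν * n) := by
        rw [arcsCount_eq_sum_in]
        push_cast
        calc ∑ x ∈ finOf {x ∈ Uᶜ | ¬ ν * n ≤ (({y ∈ S | A y x}).ncard : ℝ)},
              (((finOf S).filter (fun y => A y x)).card : ℝ)
            ≤ ∑ _x ∈ finOf {x ∈ Uᶜ | ¬ ν * n ≤ (({y ∈ S | A y x}).ncard : ℝ)},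
              ν * (n:ℝ) := by
              refine Finset.sum_le_sum fun x hx => ?_
              have hx' := (mem_finOf.mp hx).2
              push_neg at hx'
              rw [ncard_sep' S (fun y => A y x)] at hx'
              exact le_of_lt hx'
          _ = _ := by rw [Finset.sum_const, nsmul_eq_mul, ← ncard_finOf]
      apply hEC
      refine ⟨S, {x ∈ Uᶜ | ¬ ν * n ≤ (({y ∈ S | A y x}).ncard : ℝ)}, ?_, ?_, ?_⟩ <;>
        rw [hcard] <;> push_cast
      · -- size of S
        clear hUnion hDisj hrwN harcs hcon hdeg hEC hirr
        have g1 : (1/2 - ε') * ((n:ℝ) + U.ncard) ≤ (1/2 - ε') * n + (U.ncard:ℝ)/2 := by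
          nlinarith [mul_nonneg hε'0.le hm0]
        have g3 : (1/2 - ε') * (n:ℝ) + η * n / 4 ≤ (1/2 - 2*η) * n := by
          nlinarith [mul_nonneg (by linarith : (0:ℝ) ≤ ε' - 3*η) hn0,
            mul_nonneg hη0.le hn0]
        linarith
      · -- size of W
        obtain ⟨r, hrdef⟩ : ∃ r : ℝ,
            (({x ∈ Uᶜ | ν * n ≤ (({y ∈ S | A y x}).ncard : ℝ)}).ncard : ℝ) = r := ⟨_, rfl⟩
        obtain ⟨w, hwdef⟩ : ∃ w : ℝ,
            (({x ∈ Uᶜ | ¬ ν * n ≤ (({y ∈ S | A y x}).ncard : ℝ)}).ncard : ℝ) = w := ⟨_, rfl⟩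
        rw [hwdef]
        rw [hrdef] at hcon
        have hwreal' : w = n - r := by
          have h : (({x ∈ Uᶜ | ν * n ≤ (({y ∈ S | A y x}).ncard : ℝ)}).ncard : ℝ)
              + ({x ∈ Uᶜ | ¬ ν * n ≤ (({y ∈ S | A y x}).ncard : ℝ)}).ncard = n := by
            exact_mod_cast hrwN
          rw [hrdef, hwdef] at h
          linarith
        clear hUnion hDisj hrwN harcs hdeg hEC hirr hrdef hwdef
        have hwreal := hwreal'
        have hr_ub : r < (1/2 + η + 2*ν) * n := by nlinarith [hcon, hcase2]
        have g1 : (1/2 - ε') * ((n:ℝ) + U.ncard) ≤ (1/2 - ε') * n + (U.ncard:ℝ)/2 := by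
          nlinarith [mul_nonneg hε'0.le hm0]
        have g3 : (1/2 - ε') * (n:ℝ) + η * n / 4 ≤ (1/2 - η - 2*ν) * n := by
          nlinarith [mul_nonneg (by linarith : (0:ℝ) ≤ ε' - 5*η/4 - 2*ν) hn0]
        linarith
      · -- few arcs
        obtain ⟨w, hwdef⟩ : ∃ w : ℝ,
            (({x ∈ Uᶜ | ¬ ν * n ≤ (({y ∈ S | A y x}).ncard : ℝ)}).ncard : ℝ) = w := ⟨_, rfl⟩
        obtain ⟨a, hadef⟩ : ∃ a : ℝ,
            (arcsCount A S {x ∈ Uᶜ | ¬ ν * n ≤ (({y ∈ S | A y x}).ncard : ℝ)} : ℝ) = a :=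
          ⟨_, rfl⟩
        rw [hadef]
        rw [hadef, hwdef] at harcs
        have hwn : w ≤ n := by
          rw [← hwdef]
          have h := Set.ncard_le_ncard
            (fun x (hx : x ∈ {x ∈ Uᶜ | ¬ ν * n ≤ (({y ∈ S | A y x}).ncard : ℝ)}) => hx.1)
            (Set.toFinite Uᶜ)
          rw [hUc] at h
          exact_mod_cast h
        have hw0 : 0 ≤ w := by
          rw [← hwdef]; positivity
        clear hUnion hDisj hrwN hcon hdeg hEC hirr hwdef hadef
        have hνε : ν ≤ ε'^2 := by rw [hνd]; nlinarith
        have h1 : a ≤ ν * n * n := by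
          refine le_trans harcs ?_
          nlinarith [mul_le_mul_of_nonneg_right hwn (by positivity : (0:ℝ) ≤ ν * n)]
        have h2 : ν * (n:ℝ) * n ≤ (ε' * n)^2 := by nlinarith [mul_nonneg hn0 hn0]
        have h3 : (ε' * (n:ℝ))^2 ≤ (ε' * ((n:ℝ) + (U.ncard:ℝ)))^2 := by
          have hb : ε' * (n:ℝ) ≤ ε' * ((n:ℝ) + (U.ncard:ℝ)) := by
            nlinarith [mul_nonneg hε'0.le hm0]
          have ha : (0:ℝ) ≤ ε' * n := by positivity
          nlinarith [hb, ha]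
        linarith

/-- **Lemma (stability implies robust outexpansion).**  For every `ε' ∈ (0,1)` and every
`η` with `0 < η < ε'/3` there are constants `ν, τ` with `0 < ν ≤ (ε')²`, `ν < τ < η`,
and `n₀`, such that for all `n ≥ n₀`: if `D` is a digraph on `n + m` vertices
(`m ≤ ηn/2`) not satisfying **EC** with parameter `ε'`, and `D' = D - U` for an `m`-set
`U` with `δ⁰(D') ≥ (1/2 - η)n`, then `D'` is a robust `(ν, τ)`-outexpander: for every
`S ⊆ V(D')` with `τn < |S| < (1-τ)n`, the set of vertices of `D'` having at least `νn`
in-neighbours in `S` has size at least `|S| + νn`. -/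
theorem stable_implies_robust_outexpander (ε' η : ℝ)
    (hε'0 : 0 < ε') (hε'1 : ε' < 1) (hη0 : 0 < η) (hη : η < ε' / 3) :
    ∃ (ν τ : ℝ) (n₀ : ℕ), 0 < ν ∧ ν ≤ ε'^2 ∧ ν < τ ∧ τ < η ∧
      ∀ n : ℕ, n₀ ≤ n →
        ∀ (V : Type) [Fintype V] (A : V → V → Prop) (U : Set V),
          (∀ v, ¬ A v v) →
          Fintype.card V = n + U.ncard →
          (U.ncard : ℝ) ≤ η * n / 2 →
          ¬ SatisfiesEC A ε' →
          (∀ v ∈ Uᶜ, (1/2 - η) * n ≤ (({u ∈ Uᶜ | A v u}).ncard : ℝ) ∧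
                     (1/2 - η) * n ≤ (({u ∈ Uᶜ | A u v}).ncard : ℝ)) →
          ∀ S : Set V, S ⊆ Uᶜ → τ * n < (S.ncard : ℝ) → (S.ncard : ℝ) < (1 - τ) * n →
            (S.ncard : ℝ) + ν * n ≤
              (({x ∈ Uᶜ | ν * n ≤ (({y ∈ S | A y x}).ncard : ℝ)}).ncard : ℝ) := by
  have hη1 : η < 1 := by linarith
  refine ⟨η^2/4, η/2, 1, by positivity, by nlinarith, by nlinarith, by linarith,
    stable_aux ε' η (η^2/4) (η/2) hε'0 hε'1 hη0 hη rfl rfl⟩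
end

section
/- Let H be a digraph with k arcs. Suppose constants satisfy 1/C ≪ ε′ ≪ ε ≪ 1. If D is a digraph on n ≥ Ck vertices with minimum semi-degree δ⁰(D) ≥ n/2 + k which satisfies the extremal condition EC with parameter ε′, then D belongs to Extremal Case 1 (EC1) with parameter ε. -/
open scoped Classical

/-- **Extremal Case 1 (EC1)** with parameter `ε`: the vertex set is partitioned into
`W 0, W 1, W 2, W 3` (corresponding to `W₁, W₂, W₃, W₄` of the paper) with
`||W₁| - |W₃||, ||W₂| - |W₄|| ≤ εn`, such that (A) each `(W i, W (i+1))` (indices mod 4)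
is `ε`-almost one-way complete, (B) `W₁` and `W₃` are `ε`-almost complete, and
(C) `(W₂, W₄)` is `ε`-almost complete bipartite. -/
def InEC1 {V : Type*} [Fintype V] (A : V → V → Prop) (ε : ℝ) : Prop :=
  ∃ W : Fin 4 → Set V,
    (∀ i j, i ≠ j → Disjoint (W i) (W j)) ∧
    (⋃ i, W i) = Set.univ ∧
    |((W 0).ncard : ℝ) - ((W 2).ncard : ℝ)| ≤ ε * Fintype.card V ∧
    |((W 1).ncard : ℝ) - ((W 3).ncard : ℝ)| ≤ ε * Fintype.card V ∧
    (∀ i : Fin 4,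
      ((W i).ncard : ℝ) * ((W (i + 1)).ncard : ℝ) - ε * (Fintype.card V : ℝ)^2 ≤
        (arcsCount A (W i) (W (i + 1)) : ℝ)) ∧
    (∀ i : Fin 4, i = 0 ∨ i = 2 →
      ((W i).ncard : ℝ)^2 - ε * (Fintype.card V : ℝ)^2 ≤ (arcsCount A (W i) (W i) : ℝ)) ∧
    (∀ i : Fin 4, i = 1 ∨ i = 3 →
      ((W i).ncard : ℝ) * ((W (i + 2)).ncard : ℝ) - ε * (Fintype.card V : ℝ)^2 ≤
        (arcsCount A (W i) (W (i + 2)) : ℝ))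

section lemmas
set_option linter.unusedSectionVars false
variable {V : Type*} [Fintype V]

lemma arcsCount_empty (A : V → V → Prop) (S : Set V) : arcsCount A S ∅ = 0 := by
  simp [arcsCount]

lemma arcsCount_mono (A : V → V → Prop) {S S' : Set V} (T : Set V) (h : S ⊆ S') :
    arcsCount A S T ≤ arcsCount A S' T := by
  refine Set.ncard_le_ncard (fun p hp => ⟨h hp.1, hp.2⟩) (Set.toFinite _)

lemma arcsCount_swap (A : V → V → Prop) (S T : Set V) :
    arcsCount (fun x y => A y x) S T = arcsCount A T S := by
  unfold arcsCount
  rw [show {p : V × V | p.1 ∈ S ∧ p.2 ∈ T ∧ A p.2 p.1}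
      = Prod.swap '' {p : V × V | p.1 ∈ T ∧ p.2 ∈ S ∧ A p.1 p.2} by
    ext ⟨x, y⟩
    simp only [Set.mem_image, Set.mem_setOf_eq, Prod.exists, Prod.swap_prod_mk,
      Prod.mk.injEq]
    constructor
    · rintro ⟨hx, hy, ha⟩; exact ⟨y, x, ⟨hy, hx, ha⟩, rfl, rfl⟩
    · rintro ⟨a, b, ⟨ha1, ha2, ha3⟩, rfl, rfl⟩; exact ⟨ha2, ha1, ha3⟩]
  exact Set.ncard_image_of_injective _ Prod.swap_injective

lemma arcsCount_eq_sum (A : V → V → Prop) (S T : Set V) :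
    arcsCount A S T = ∑ v ∈ S.toFinset, ({u | u ∈ T ∧ A v u}).ncard := by
  unfold arcsCount
  rw [Set.ncard_eq_toFinset_card']
  rw [show {p : V × V | p.1 ∈ S ∧ p.2 ∈ T ∧ A p.1 p.2}.toFinset
      = S.toFinset.biUnion
          (fun v => ({u | u ∈ T ∧ A v u}).toFinset.image (fun u => (v, u))) by
    ext ⟨x, y⟩
    simp only [Set.mem_toFinset, Set.mem_setOf_eq, Finset.mem_biUnion, Finset.mem_image,
      Prod.mk.injEq]
    constructor
    · rintro ⟨hx, hy, ha⟩; exact ⟨x, hx, y, ⟨hy, ha⟩, rfl, rfl⟩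
    · rintro ⟨v, hv, u, ⟨hu, ha⟩, rfl, rfl⟩; exact ⟨hv, hu, ha⟩]
  rw [Finset.card_biUnion]
  · refine Finset.sum_congr rfl (fun v _ => ?_)
    rw [Finset.card_image_of_injective _ (fun a b h => by simpa using h)]
    rw [Set.ncard_eq_toFinset_card']
  · intro x _ y _ hxy
    rw [Function.onFun, Finset.disjoint_left]
    rintro ⟨a, b⟩ ha hb
    simp only [Finset.mem_image, Prod.mk.injEq] at ha hb
    obtain ⟨u, _, rfl, rfl⟩ := ha
    obtain ⟨u', _, h1, _⟩ := hb
    exact hxy h1.symm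

lemma split_bound (N T U : Set V) (hd : Disjoint T U) :
    N.ncard + T.ncard + U.ncard ≤ (N ∩ T).ncard + (N ∩ U).ncard + Fintype.card V := by
  have h1 : N.ncard ≤ ((N ∩ T) ∪ ((N ∩ U) ∪ (N \ (T ∪ U)))).ncard := by
    refine Set.ncard_le_ncard (fun x hx => ?_) (Set.toFinite _)
    by_cases hT : x ∈ T
    · exact Or.inl ⟨hx, hT⟩
    · by_cases hU : x ∈ U
      · exact Or.inr (Or.inl ⟨hx, hU⟩)
      · exact Or.inr (Or.inr ⟨hx, fun h => h.elim hT hU⟩)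
  have h2 : ((N ∩ T) ∪ ((N ∩ U) ∪ (N \ (T ∪ U)))).ncard
      ≤ (N ∩ T).ncard + ((N ∩ U).ncard + (N \ (T ∪ U)).ncard) :=
    le_trans (Set.ncard_union_le _ _) (by gcongr; exact Set.ncard_union_le _ _)
  have h3 : (N \ (T ∪ U)).ncard ≤ ((T ∪ U)ᶜ).ncard :=
    Set.ncard_le_ncard (fun x hx => hx.2) (Set.toFinite _)
  have h4 : ((T ∪ U)ᶜ).ncard + (T ∪ U).ncard = Fintype.card V := by
    rw [Nat.add_comm, Set.ncard_add_ncard_compl, Nat.card_eq_fintype_card]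
  have h5 : (T ∪ U).ncard = T.ncard + U.ncard :=
    Set.ncard_union_eq hd (Set.toFinite _) (Set.toFinite _)
  omega

lemma F_nat (A : V → V → Prop) (S T U : Set V) (hd : Disjoint T U) :
    (∑ v ∈ S.toFinset, outDeg A v) + S.ncard * (T.ncard + U.ncard)
      ≤ arcsCount A S T + arcsCount A S U + S.ncard * Fintype.card V := by
  have main : ∀ v ∈ S.toFinset, outDeg A v + (T.ncard + U.ncard)
      ≤ ({u | u ∈ T ∧ A v u}).ncard + ({u | u ∈ U ∧ A v u}).ncard + Fintype.card V := by
    intro v _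
    have h := split_bound {u | A v u} T U hd
    have e1 : {u | u ∈ T ∧ A v u} = {u | A v u} ∩ T := by
      ext u; constructor <;> (intro h; exact ⟨h.2, h.1⟩)
    have e2 : {u | u ∈ U ∧ A v u} = {u | A v u} ∩ U := by
      ext u; constructor <;> (intro h; exact ⟨h.2, h.1⟩)
    rw [e1, e2]
    simp only [outDeg] at *
    omega
  have hsum := Finset.sum_le_sum main
  simp only [Finset.sum_add_distrib, Finset.sum_const, smul_eq_mul] at hsum
  rw [arcsCount_eq_sum, arcsCount_eq_sum,
    show S.ncard = S.toFinset.card from Set.ncard_eq_toFinset_card' S, Nat.mul_add]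
  omega

lemma F_real (A : V → V → Prop) (S T U₁ U₂ : Set V) (ε' : ℝ) (hε' : 0 ≤ ε')
    (hdeg : ∀ v : V, (Fintype.card V : ℝ) / 2 ≤ (outDeg A v : ℝ))
    (hS : S ⊆ U₁) (hd : Disjoint T U₂)
    (hU₂ : (1/2 - ε') * (Fintype.card V : ℝ) ≤ (U₂.ncard : ℝ))
    (hε'1 : ε' ≤ 1)
    (harc : (arcsCount A U₁ U₂ : ℝ) ≤ (ε' * Fintype.card V)^2) :
    (S.ncard : ℝ) * (T.ncard : ℝ) - 2 * ε' * (Fintype.card V : ℝ)^2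
      ≤ (arcsCount A S T : ℝ) := by
  set n : ℝ := (Fintype.card V : ℝ) with hn
  have hn0 : 0 ≤ n := Nat.cast_nonneg _
  have key := F_nat A S T U₂ hd
  have hsum : (S.ncard : ℝ) * (n / 2) ≤ ∑ v ∈ S.toFinset, ((outDeg A v : ℝ)) := by
    rw [show S.ncard = S.toFinset.card from Set.ncard_eq_toFinset_card' S]
    calc (S.toFinset.card : ℝ) * (n / 2) = ∑ _v ∈ S.toFinset, (n/2) := by
          rw [Finset.sum_const]; ring
      _ ≤ _ := Finset.sum_le_sum (fun v _ => hdeg v)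
  have hmono : (arcsCount A S U₂ : ℝ) ≤ (ε' * n)^2 :=
    le_trans (by exact_mod_cast arcsCount_mono A U₂ hS) harc
  have hkey := key
  have hc : ((∑ v ∈ S.toFinset, outDeg A v : ℕ) : ℝ) = ∑ v ∈ S.toFinset, ((outDeg A v : ℝ)) := by
    push_cast; rfl
  replace hkey : ((∑ v ∈ S.toFinset, outDeg A v : ℕ) : ℝ)
      + (S.ncard : ℝ) * ((T.ncard : ℝ) + (U₂.ncard : ℝ))
      ≤ (arcsCount A S T : ℝ) + (arcsCount A S U₂ : ℝ) + (S.ncard : ℝ) * n := by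
    rw [hn]; exact_mod_cast hkey
  rw [hc] at hkey
  have hScard : (S.ncard : ℝ) ≤ n := by
    rw [hn]
    exact_mod_cast Set.ncard_le_ncard (Set.subset_univ S)
      (Set.toFinite _) |>.trans_eq (by rw [Set.ncard_univ, Nat.card_eq_fintype_card])
  have hS0 : (0:ℝ) ≤ (S.ncard : ℝ) := Nat.cast_nonneg _
  have h6 : (S.ncard : ℝ) * (n/2 - (U₂.ncard : ℝ)) ≤ (S.ncard : ℝ) * (ε' * n) :=
    mul_le_mul_of_nonneg_left (by linarith) hS0
  have h7 : (S.ncard : ℝ) * (ε' * n) ≤ n * (ε' * n) :=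
    mul_le_mul_of_nonneg_right hScard (mul_nonneg hε' hn0)
  have h8 : (ε' * n)^2 ≤ ε' * n^2 := by
    nlinarith [mul_nonneg (mul_nonneg hε' (by linarith : (0:ℝ) ≤ 1 - ε')) (sq_nonneg n)]
  nlinarith

/-- Lower bound on `arcsCount A U₁ U₂` from the out-degree. -/
lemma arcs_lower (A : V → V → Prop) (U₁ U₂ : Set V)
    (hdeg : ∀ v : V, (Fintype.card V : ℝ) / 2 ≤ (outDeg A v : ℝ)) :
    (U₁.ncard : ℝ) * ((U₂.ncard : ℝ) - (Fintype.card V : ℝ)/2)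
      ≤ (arcsCount A U₁ U₂ : ℝ) := by
  set n : ℝ := (Fintype.card V : ℝ) with hn
  have key := F_nat A U₁ (∅ : Set V) U₂ (disjoint_bot_left)
  rw [arcsCount_empty] at key
  simp only [Set.ncard_empty, Nat.zero_add, Nat.add_zero] at key
  have hsum : (U₁.ncard : ℝ) * (n / 2) ≤ ∑ v ∈ U₁.toFinset, ((outDeg A v : ℝ)) := by
    rw [show U₁.ncard = U₁.toFinset.card from Set.ncard_eq_toFinset_card' U₁]
    calc (U₁.toFinset.card : ℝ) * (n / 2) = ∑ _v ∈ U₁.toFinset, (n/2) := by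
          rw [Finset.sum_const]; ring
      _ ≤ _ := Finset.sum_le_sum (fun v _ => hdeg v)
  have hc : ((∑ v ∈ U₁.toFinset, outDeg A v : ℕ) : ℝ)
      = ∑ v ∈ U₁.toFinset, ((outDeg A v : ℝ)) := by push_cast; rfl
  replace key : ((∑ v ∈ U₁.toFinset, outDeg A v : ℕ) : ℝ)
      + (U₁.ncard : ℝ) * (U₂.ncard : ℝ)
      ≤ (arcsCount A U₁ U₂ : ℝ) + (U₁.ncard : ℝ) * n := by
    rw [hn]; exact_mod_cast key
  rw [hc] at key
  linarith

lemma upper_half (u1 u2 n e : ℝ) (hn : 0 ≤ n) (he : 0 ≤ e) (he2 : e ≤ 1/20)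
    (h1 : (1/2 - e) * n ≤ u1) (h2 : u1 * (u2 - n/2) ≤ (e*n)^2)
    (hu2n : u2 ≤ n) (hu20 : 0 ≤ u2) : u2 ≤ n/2 + 3*e*n := by
  rcases le_or_gt u2 (n/2) with h | h
  · nlinarith
  · by_contra hcon
    push_neg at hcon
    have hd : 0 ≤ u2 - n/2 := by linarith
    have hh : (1/2 - e) * n * (u2 - n/2) ≤ (e*n)^2 :=
      le_trans (mul_le_mul_of_nonneg_right h1 hd) h2
    have hnpos : 0 < n := by
      rcases hn.lt_or_eq with h' | h'
      · exact h'
      · exfalso; rw [← h'] at hu2n; linarith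
    nlinarith [mul_pos hnpos hnpos, mul_nonneg he hn]

end lemmas

set_option maxHeartbeats 2000000 in
/-- **Lemma (EC implies EC1).**  Suppose `1/C ≪ ε' ≪ ε ≪ 1`.  If a digraph `D` on
`n ≥ Ck` vertices with `δ⁰(D) ≥ n/2 + k` satisfies the extremal condition **EC** with
parameter `ε'`, then `D` belongs to Extremal Case 1 (**EC1**) with parameter `ε`. -/
theorem ec_implies_ec1 :
    ∃ ε₀ : ℝ, 0 < ε₀ ∧ ε₀ < 1 ∧
      ∀ ε : ℝ, 0 < ε → ε ≤ ε₀ →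
        ∃ ε'₀ : ℝ, 0 < ε'₀ ∧
          ∀ ε' : ℝ, 0 < ε' → ε' ≤ ε'₀ →
            ∃ C₀ : ℕ, ∀ C : ℕ, C₀ ≤ C →
              ∀ (k : ℕ) (V : Type) [Fintype V] (A : V → V → Prop),
                (∀ v, ¬ A v v) →
                C * k ≤ Fintype.card V →
                (∀ v : V, (Fintype.card V : ℝ) / 2 + k ≤ (outDeg A v : ℝ) ∧
                          (Fintype.card V : ℝ) / 2 + k ≤ (inDeg A v : ℝ)) →
                SatisfiesEC A ε' →
                InEC1 A ε := by
  refine ⟨1/2, by norm_num, by norm_num, ?_⟩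
  intro ε hε hε₀
  refine ⟨ε/10, by positivity, ?_⟩
  intro ε' hε'pos hε'le
  refine ⟨0, fun C _ k V _ A _ _ hdeg hEC => ?_⟩
  obtain ⟨U₁, U₂, hU1, hU2, harc⟩ := hEC
  set n : ℝ := (Fintype.card V : ℝ) with hn
  have hn0 : 0 ≤ n := Nat.cast_nonneg _
  have hε'0 : 0 ≤ ε' := le_of_lt hε'pos
  have hε'small : ε' ≤ 1/20 := by linarith
  have hk0 : (0:ℝ) ≤ (k:ℝ) := Nat.cast_nonneg _
  have hdout : ∀ v : V, n / 2 ≤ (outDeg A v : ℝ) := fun v => by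
    have := (hdeg v).1; linarith
  have hdin : ∀ v : V, n / 2 ≤ (outDeg (fun x y => A y x) v : ℝ) := fun v => by
    have := (hdeg v).2
    have he : outDeg (fun x y => A y x) v = inDeg A v := rfl
    rw [he]; linarith
  have harc' : (arcsCount (fun x y => A y x) U₂ U₁ : ℝ) ≤ (ε' * n)^2 := by
    rw [arcsCount_swap]; exact harc
  -- cardinality facts
  have hcard_le : ∀ S : Set V, (S.ncard : ℝ) ≤ n := by
    intro S
    rw [hn]
    exact_mod_cast Set.ncard_le_ncard (Set.subset_univ S)
      (Set.toFinite _) |>.trans_eq (by rw [Set.ncard_univ, Nat.card_eq_fintype_card])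
  have hu2up : (U₂.ncard : ℝ) ≤ n/2 + 3*ε'*n := by
    refine upper_half _ _ _ _ hn0 hε'0 hε'small hU1 ?_ (hcard_le U₂) (Nat.cast_nonneg _)
    have := arcs_lower A U₁ U₂ hdout
    linarith
  have hu1up : (U₁.ncard : ℝ) ≤ n/2 + 3*ε'*n := by
    refine upper_half _ _ _ _ hn0 hε'0 hε'small hU2 ?_ (hcard_le U₁) (Nat.cast_nonneg _)
    have := arcs_lower (fun x y => A y x) U₂ U₁ hdin
    linarith
  have hεn : (0:ℝ) ≤ ε * n := mul_nonneg (le_of_lt hε) hn0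
  have hkey1 : ε' * n ≤ (ε * n)/10 := by
    have := mul_le_mul_of_nonneg_right hε'le hn0; linarith
  have hkey2 : 2 * ε' * n^2 ≤ ε * n^2 := by
    have := mul_le_mul_of_nonneg_right (show 2*ε' ≤ ε by linarith) (sq_nonneg n)
    linarith
  -- the partition
  refine ⟨![U₂ \ U₁, U₁ ∩ U₂, U₁ \ U₂, (U₁ ∪ U₂)ᶜ], ?_, ?_, ?_, ?_, ?_, ?_, ?_⟩
  · intro i j hij
    fin_cases i <;> fin_cases j <;>
      simp_all [Set.disjoint_left, Set.mem_diff, Set.mem_inter_iff, Set.mem_compl_iff,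
        Set.mem_union] <;> tauto
  · refine Set.eq_univ_of_forall fun x => ?_
    by_cases h1 : x ∈ U₁ <;> by_cases h2 : x ∈ U₂
    · exact Set.mem_iUnion.2 ⟨1, by simp [h1, h2]⟩
    · exact Set.mem_iUnion.2 ⟨2, by simp [h1, h2]⟩
    · exact Set.mem_iUnion.2 ⟨0, by simp [h1, h2]⟩
    · exact Set.mem_iUnion.2 ⟨3, by simp [h1, h2]⟩
  · -- |W0| - |W2| = |U₂| - |U₁|
    have e1 : (U₁ ∩ U₂).ncard + (U₁ \ U₂).ncard = U₁.ncard :=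
      Set.ncard_inter_add_ncard_diff_eq_ncard U₁ U₂
    have e2 : (U₁ ∩ U₂).ncard + (U₂ \ U₁).ncard = U₂.ncard := by
      rw [Set.inter_comm]; exact Set.ncard_inter_add_ncard_diff_eq_ncard U₂ U₁
    have e1' : ((U₁ ∩ U₂).ncard : ℝ) + ((U₁ \ U₂).ncard : ℝ) = (U₁.ncard : ℝ) := by
      exact_mod_cast congrArg (Nat.cast : ℕ → ℝ) e1
    have e2' : ((U₁ ∩ U₂).ncard : ℝ) + ((U₂ \ U₁).ncard : ℝ) = (U₂.ncard : ℝ) := by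
      exact_mod_cast congrArg (Nat.cast : ℕ → ℝ) e2
    simp only [Matrix.cons_val_zero, Matrix.cons_val_two, Matrix.tail_cons, Matrix.head_cons]
    rw [abs_le]
    constructor <;> linarith
  · -- |W1| - |W3| = |U₁| + |U₂| - n
    have e1 : (U₁ ∩ U₂).ncard + (U₁ \ U₂).ncard = U₁.ncard :=
      Set.ncard_inter_add_ncard_diff_eq_ncard U₁ U₂
    have e3 : (U₁ ∪ U₂).ncard + ((U₁ ∪ U₂)ᶜ).ncard = Fintype.card V := by
      rw [Set.ncard_add_ncard_compl, Nat.card_eq_fintype_card]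
    have e4 : (U₁ ∪ U₂).ncard + (U₁ ∩ U₂).ncard = U₁.ncard + U₂.ncard :=
      Set.ncard_union_add_ncard_inter U₁ U₂
    have e3' : ((U₁ ∪ U₂).ncard : ℝ) + (((U₁ ∪ U₂)ᶜ).ncard : ℝ) = n := by
      rw [hn]; exact_mod_cast congrArg (Nat.cast : ℕ → ℝ) e3
    have e4' : ((U₁ ∪ U₂).ncard : ℝ) + ((U₁ ∩ U₂).ncard : ℝ)
        = (U₁.ncard : ℝ) + (U₂.ncard : ℝ) := by
      exact_mod_cast congrArg (Nat.cast : ℕ → ℝ) e4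
    simp only [Matrix.cons_val_one, Matrix.head_cons, Matrix.cons_val_three,
      Matrix.tail_cons, Matrix.cons_val_zero]
    rw [abs_le]
    constructor <;> linarith
  · -- condition (A)
    have hF1 : ∀ S T : Set V, S ⊆ U₁ → Disjoint T U₂ →
        (S.ncard : ℝ) * (T.ncard : ℝ) - ε * n^2 ≤ (arcsCount A S T : ℝ) := by
      intro S T hS hd
      have := F_real A S T U₁ U₂ ε' hε'0 hdout hS hd hU2 (by linarith) harc
      linarith
    have hF2 : ∀ S T : Set V, T ⊆ U₂ → Disjoint S U₁ →
        (S.ncard : ℝ) * (T.ncard : ℝ) - ε * n^2 ≤ (arcsCount A S T : ℝ) := by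
      intro S T hT hd
      have := F_real (fun x y => A y x) T S U₂ U₁ ε' hε'0 hdin hT hd hU1
        (by linarith) harc'
      rw [arcsCount_swap] at this
      linarith
    intro i
    fin_cases i <;>
      simp only [Matrix.cons_val_zero, Matrix.cons_val_one, Matrix.head_cons,
        Matrix.cons_val_two, Matrix.tail_cons, Matrix.cons_val_three,
        Fin.isValue, show (0:Fin 4)+1 = 1 from rfl, show (1:Fin 4)+1 = 2 from rfl,
        show (2:Fin 4)+1 = 3 from rfl, show (3:Fin 4)+1 = 0 from rfl]
    · exact hF2 _ _ Set.inter_subset_right (by rw [Set.disjoint_left]; exact fun x hx => hx.2)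
    · exact hF1 _ _ Set.inter_subset_left (by rw [Set.disjoint_left]; exact fun x hx => hx.2)
    · exact hF1 _ _ Set.diff_subset
        (by rw [Set.disjoint_left]; exact fun x hx h => hx (Or.inr h))
    · exact hF2 _ _ Set.diff_subset
        (by rw [Set.disjoint_left]; exact fun x hx h => hx (Or.inl h))
  · -- condition (B)
    have hF1 : ∀ S T : Set V, S ⊆ U₁ → Disjoint T U₂ →
        (S.ncard : ℝ) * (T.ncard : ℝ) - ε * n^2 ≤ (arcsCount A S T : ℝ) := by
      intro S T hS hd
      have := F_real A S T U₁ U₂ ε' hε'0 hdout hS hd hU2 (by linarith) harc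
      linarith
    have hF2 : ∀ S T : Set V, T ⊆ U₂ → Disjoint S U₁ →
        (S.ncard : ℝ) * (T.ncard : ℝ) - ε * n^2 ≤ (arcsCount A S T : ℝ) := by
      intro S T hT hd
      have := F_real (fun x y => A y x) T S U₂ U₁ ε' hε'0 hdin hT hd hU1
        (by linarith) harc'
      rw [arcsCount_swap] at this
      linarith
    rintro i (rfl | rfl) <;>
      simp only [Matrix.cons_val_zero, Matrix.cons_val_two, Matrix.tail_cons,
        Matrix.head_cons, sq]
    · have h := hF2 (U₂ \ U₁) (U₂ \ U₁) Set.diff_subset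
        (by rw [Set.disjoint_left]; exact fun x hx => hx.2)
      rw [← hn]; linarith
    · have h := hF1 (U₁ \ U₂) (U₁ \ U₂) Set.diff_subset
        (by rw [Set.disjoint_left]; exact fun x hx => hx.2)
      rw [← hn]; linarith
  · -- condition (C)
    have hF1 : ∀ S T : Set V, S ⊆ U₁ → Disjoint T U₂ →
        (S.ncard : ℝ) * (T.ncard : ℝ) - ε * n^2 ≤ (arcsCount A S T : ℝ) := by
      intro S T hS hd
      have := F_real A S T U₁ U₂ ε' hε'0 hdout hS hd hU2 (by linarith) harc
      linarith
    have hF2 : ∀ S T : Set V, T ⊆ U₂ → Disjoint S U₁ →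
        (S.ncard : ℝ) * (T.ncard : ℝ) - ε * n^2 ≤ (arcsCount A S T : ℝ) := by
      intro S T hT hd
      have := F_real (fun x y => A y x) T S U₂ U₁ ε' hε'0 hdin hT hd hU1
        (by linarith) harc'
      rw [arcsCount_swap] at this
      linarith
    rintro i (rfl | rfl) <;>
      simp only [Matrix.cons_val_one, Matrix.head_cons, Matrix.cons_val_three,
        Matrix.tail_cons, Matrix.cons_val_zero, Matrix.cons_val_two,
        show (1:Fin 4)+2 = 3 from rfl, show (3:Fin 4)+2 = 1 from rfl]
    · exact hF1 _ _ Set.inter_subset_left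
        (by rw [Set.disjoint_left]; exact fun x hx h => hx (Or.inr h))
    · exact hF2 _ _ Set.inter_subset_right
        (by rw [Set.disjoint_left]; exact fun x hx h => hx (Or.inl h))
end

section
/- Suppose 1/C ≪ ε′ ≪ ε₁ ≪ 1 and let D be a digraph on n ≥ Ck vertices with δ⁰(D) ≥ n/2 + k. Suppose U_1, U_2 ⊆ V(D) witness the extremal condition EC with parameter ε′ (|U_i| ≥ (1/2 − ε′)n and at most (ε′n)² arcs from U_1 to U_2), and suppose ε₁n < |U_1 ∩ U_2| < (1/2 − ε₁)n. Set U_0 = U_1 ∩ U_2, W_1 = U_1 ∖ U_0, W_2 = V(D) ∖ (U_1 ∪ U_2), W_3 = U_2 ∖ U_0, and W_4 = U_0. Then: (i) for each j ∈ {1, 3}, (1/2 − ε′/2)n + k ≤ |W_j| + |W_2| ≤ (1/2 + ε′)n; (ii) −3ε′n/2 + k ≤ |W_1| − |W_3| ≤ 3ε′n/2 − k; and (iii) −ε′n + 2k ≤ |W_2| − |W_4| ≤ 2ε′n. -/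
open scoped Classical

lemma arcs_eq_sum {V : Type*} [Fintype V] (A : V → V → Prop) (S T : Set V) :
    arcsCount A S T = ∑ v ∈ S.toFinset, {u | u ∈ T ∧ A v u}.ncard := by
  classical
  rw [arcsCount, Set.ncard_eq_toFinset_card', Set.toFinset_setOf]
  rw [Finset.card_eq_sum_card_fiberwise (f := Prod.fst) (t := S.toFinset)
    (fun p hp => by simp at hp ⊢; exact hp.1)]
  refine Finset.sum_congr rfl fun v hv => ?_
  rw [Set.ncard_eq_toFinset_card', Set.toFinset_setOf]
  have hvS : v ∈ S := by simpa using hv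
  refine Finset.card_nbij' Prod.snd (fun u => (v, u)) ?_ ?_ ?_ ?_
  · intro p hp
    simp only [Finset.mem_coe, Finset.mem_filter, Finset.mem_univ, true_and] at hp ⊢
    exact ⟨hp.1.2.1, hp.2 ▸ hp.1.2.2⟩
  · intro u hu
    simp only [Finset.mem_coe, Finset.mem_filter, Finset.mem_univ, true_and] at hu ⊢
    exact ⟨⟨hvS, hu.1, hu.2⟩, trivial⟩
  · intro p hp
    simp only [Finset.mem_coe, Finset.mem_filter, Finset.mem_univ, true_and] at hp
    exact Prod.ext hp.2.symm rfl
  · intro u hu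
    rfl

lemma exists_low_out {V : Type*} [Fintype V] (A : V → V → Prop) (S T : Set V)
    (hS : S.Nonempty) :
    ∃ v ∈ S, S.ncard * {u | u ∈ T ∧ A v u}.ncard ≤ arcsCount A S T := by
  classical
  have hne : S.toFinset.Nonempty := by simpa using hS
  obtain ⟨v, hv, hmin⟩ := S.toFinset.exists_min_image
    (fun v => {u | u ∈ T ∧ A v u}.ncard) hne
  refine ⟨v, by simpa using hv, ?_⟩
  rw [arcs_eq_sum]
  calc S.ncard * {u | u ∈ T ∧ A v u}.ncard
      = ∑ _w ∈ S.toFinset, {u | u ∈ T ∧ A v u}.ncard := by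
        rw [Finset.sum_const, smul_eq_mul, Set.ncard_eq_toFinset_card']
    _ ≤ ∑ w ∈ S.toFinset, {u | u ∈ T ∧ A w u}.ncard :=
        Finset.sum_le_sum fun w hw => hmin w hw

lemma arcs_swap {V : Type*} [Fintype V] (A : V → V → Prop) (S T : Set V) :
    arcsCount A S T = arcsCount (fun x y => A y x) T S := by
  classical
  rw [arcsCount, arcsCount]
  have : {p : V × V | p.1 ∈ T ∧ p.2 ∈ S ∧ A p.2 p.1}
      = Prod.swap '' {p : V × V | p.1 ∈ S ∧ p.2 ∈ T ∧ A p.1 p.2} := by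
    ext ⟨x, y⟩
    simp [Prod.swap_eq_iff_eq_swap]
    tauto
  rw [this, Set.ncard_image_of_injective _ Prod.swap_injective]

lemma exists_low_in {V : Type*} [Fintype V] (A : V → V → Prop) (S T : Set V)
    (hT : T.Nonempty) :
    ∃ u ∈ T, T.ncard * {v | v ∈ S ∧ A v u}.ncard ≤ arcsCount A S T := by
  obtain ⟨u, hu, h⟩ := exists_low_out (fun x y => A y x) T S hT
  exact ⟨u, hu, by rwa [arcs_swap A S T]⟩

set_option maxHeartbeats 1600000 in
/-- **Claims on the sizes of the `Wᵢ` (Case 3 of Lemma 3.12).**  Suppose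
`1/C ≪ ε' ≪ ε₁ ≪ 1`, let `D` be a digraph on `n ≥ Ck` vertices with
`δ⁰(D) ≥ n/2 + k`, let `U₁, U₂` witness **EC** with parameter `ε'`, and suppose
`ε₁n < |U₁ ∩ U₂| < (1/2 - ε₁)n`.  With `U₀ = U₁ ∩ U₂`, `W₁ = U₁ ∖ U₀`,
`W₂ = V(D) ∖ (U₁ ∪ U₂)`, `W₃ = U₂ ∖ U₀`, `W₄ = U₀` we have:
(i) `(1/2 - ε'/2)n + k ≤ |W_j| + |W₂| ≤ (1/2 + ε')n` for `j ∈ {1,3}`;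
(ii) `-3ε'n/2 + k ≤ |W₁| - |W₃| ≤ 3ε'n/2 - k`;
(iii) `-ε'n + 2k ≤ |W₂| - |W₄| ≤ 2ε'n`. -/
theorem extremal_partition_size_claims :
    ∃ ε₁₀ : ℝ, 0 < ε₁₀ ∧ ε₁₀ < 1 ∧
      ∀ ε₁ : ℝ, 0 < ε₁ → ε₁ ≤ ε₁₀ →
        ∃ ε'₀ : ℝ, 0 < ε'₀ ∧
          ∀ ε' : ℝ, 0 < ε' → ε' ≤ ε'₀ →
            ∃ C₀ : ℕ, ∀ C : ℕ, C₀ ≤ C →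
              ∀ (k n : ℕ) (V : Type) [Fintype V] (A : V → V → Prop),
                (∀ v, ¬ A v v) →
                Fintype.card V = n →
                C * k ≤ n →
                (∀ v : V, (n : ℝ) / 2 + k ≤ (outDeg A v : ℝ) ∧
                          (n : ℝ) / 2 + k ≤ (inDeg A v : ℝ)) →
                ∀ U₁ U₂ : Set V,
                  (1/2 - ε') * n ≤ ((U₁.ncard : ℕ) : ℝ) →
                  (1/2 - ε') * n ≤ ((U₂.ncard : ℕ) : ℝ) →
                  (arcsCount A U₁ U₂ : ℝ) ≤ (ε' * n)^2 →
                  ε₁ * n < (((U₁ ∩ U₂).ncard : ℕ) : ℝ) →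
                  (((U₁ ∩ U₂).ncard : ℕ) : ℝ) < (1/2 - ε₁) * n →
                  ∀ W₁ W₂ W₃ W₄ : Set V,
                    W₁ = U₁ \ (U₁ ∩ U₂) →
                    W₂ = (U₁ ∪ U₂)ᶜ →
                    W₃ = U₂ \ (U₁ ∩ U₂) →
                    W₄ = U₁ ∩ U₂ →
                    ((1/2 - ε'/2) * n + k ≤ (W₁.ncard : ℝ) + (W₂.ncard : ℝ) ∧
                      (W₁.ncard : ℝ) + (W₂.ncard : ℝ) ≤ (1/2 + ε') * n ∧
                      (1/2 - ε'/2) * n + k ≤ (W₃.ncard : ℝ) + (W₂.ncard : ℝ) ∧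
                      (W₃.ncard : ℝ) + (W₂.ncard : ℝ) ≤ (1/2 + ε') * n) ∧
                    (-(3 * ε' * n / 2) + k ≤ (W₁.ncard : ℝ) - (W₃.ncard : ℝ) ∧
                      (W₁.ncard : ℝ) - (W₃.ncard : ℝ) ≤ 3 * ε' * n / 2 - k) ∧
                    (-(ε' * n) + 2 * k ≤ (W₂.ncard : ℝ) - (W₄.ncard : ℝ) ∧
                      (W₂.ncard : ℝ) - (W₄.ncard : ℝ) ≤ 2 * ε' * n) := by
  refine ⟨1/2, by norm_num, by norm_num, fun ε₁ hε₁ hε₁le => ?_⟩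
  refine ⟨1/6, by norm_num, fun ε' hε' hε'le => ?_⟩
  refine ⟨1, fun C hC k n V _ A hirr hcardV hCk hdeg U₁ U₂ hU₁ hU₂ harcs hc1 hc2
    W₁ W₂ W₃ W₄ hW₁ hW₂ hW₃ hW₄ => ?_⟩
  classical
  have hUnivcard : (Set.univ : Set V).ncard = n := by
    rw [Set.ncard_univ, Nat.card_eq_fintype_card, hcardV]
  have hcn : (U₁ ∩ U₂).ncard ≤ n := by
    rw [← hUnivcard]; exact Set.ncard_le_ncard (Set.subset_univ _) Set.finite_univ
  -- n ≥ 1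
  have hcpos : (0:ℝ) < ((U₁ ∩ U₂).ncard : ℝ) :=
    lt_of_le_of_lt (by positivity) hc1
  have hn1 : 1 ≤ n := le_trans (by exact_mod_cast hcpos) hcn
  have hnR : (1:ℝ) ≤ n := by exact_mod_cast hn1
  -- U₁, U₂ nonempty
  have hU₁ne : U₁.Nonempty := by
    refine Set.nonempty_of_ncard_ne_zero ?_
    have : (0:ℝ) < (U₁.ncard : ℝ) := lt_of_lt_of_le (by nlinarith) hU₁
    exact_mod_cast this.ne'
  have hU₂ne : U₂.Nonempty := by
    refine Set.nonempty_of_ncard_ne_zero ?_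
    have : (0:ℝ) < (U₂.ncard : ℝ) := lt_of_lt_of_le (by nlinarith) hU₂
    exact_mod_cast this.ne'
  -- find low-out-degree vertex in U₁ and low-in-degree vertex in U₂
  obtain ⟨v, hvU₁, hv⟩ := exists_low_out A U₁ U₂ hU₁ne
  obtain ⟨u, huU₂, hu⟩ := exists_low_in A U₁ U₂ hU₂ne
  set d : ℝ := ({x | x ∈ U₂ ∧ A v x}.ncard : ℝ) with hd_def
  set e : ℝ := ({x | x ∈ U₁ ∧ A x u}.ncard : ℝ) with he_def
  have hd0 : (0:ℝ) ≤ d := Nat.cast_nonneg _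
  have he0 : (0:ℝ) ≤ e := Nat.cast_nonneg _
  have hvR : (U₁.ncard : ℝ) * d ≤ (ε' * n)^2 := by
    refine le_trans ?_ harcs
    rw [hd_def]
    exact_mod_cast hv
  have huR : (U₂.ncard : ℝ) * e ≤ (ε' * n)^2 := by
    refine le_trans ?_ harcs
    rw [he_def]
    exact_mod_cast hu
  -- d, e ≤ ε'/2 * n
  have hn0 : (0:ℝ) < n := lt_of_lt_of_le zero_lt_one hnR
  have hd_small : d ≤ ε' / 2 * n := by
    have h1 : d * ((1/2 - ε') * n) ≤ d * (U₁.ncard : ℝ) :=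
      mul_le_mul_of_nonneg_left hU₁ hd0
    have h2 : d * ((1/2 - ε') * n) ≤ (ε' * n)^2 := by
      refine h1.trans ?_
      rw [mul_comm]; exact hvR
    have key1 : (0:ℝ) ≤ d * n * (1/6 - ε') :=
      mul_nonneg (mul_nonneg hd0 hn0.le) (by linarith)
    have key2 : (0:ℝ) ≤ ε' * (1/6 - ε') * (n * n) :=
      mul_nonneg (mul_nonneg hε'.le (by linarith)) (mul_nonneg hn0.le hn0.le)
    nlinarith [h2, key1, key2, hn0]
  have he_small : e ≤ ε' / 2 * n := by
    have h1 : e * ((1/2 - ε') * n) ≤ e * (U₂.ncard : ℝ) :=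
      mul_le_mul_of_nonneg_left hU₂ he0
    have h2 : e * ((1/2 - ε') * n) ≤ (ε' * n)^2 := by
      refine h1.trans ?_
      rw [mul_comm]; exact huR
    have key1 : (0:ℝ) ≤ e * n * (1/6 - ε') :=
      mul_nonneg (mul_nonneg he0 hn0.le) (by linarith)
    have key2 : (0:ℝ) ≤ ε' * (1/6 - ε') * (n * n) :=
      mul_nonneg (mul_nonneg hε'.le (by linarith)) (mul_nonneg hn0.le hn0.le)
    nlinarith [h2, key1, key2, hn0]
  -- complement cardinalities
  have hcompl2 : ((U₂ᶜ.ncard : ℕ) : ℝ) = n - (U₂.ncard : ℝ) := by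
    have h := Set.ncard_add_ncard_compl U₂ (Set.toFinite _) (Set.toFinite _)
    rw [Nat.card_eq_fintype_card, hcardV] at h
    have : ((U₂.ncard + U₂ᶜ.ncard : ℕ) : ℝ) = (n : ℝ) := by exact_mod_cast h
    push_cast at this; linarith
  have hcompl1 : ((U₁ᶜ.ncard : ℕ) : ℝ) = n - (U₁.ncard : ℝ) := by
    have h := Set.ncard_add_ncard_compl U₁ (Set.toFinite _) (Set.toFinite _)
    rw [Nat.card_eq_fintype_card, hcardV] at h
    have : ((U₁.ncard + U₁ᶜ.ncard : ℕ) : ℝ) = (n : ℝ) := by exact_mod_cast h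
    push_cast at this; linarith
  -- degree splits
  have hb_ub : (U₂.ncard : ℝ) ≤ (1/2 + ε'/2) * n - k := by
    have hsplit : {x | A v x} ⊆ {x | x ∈ U₂ ∧ A v x} ∪ U₂ᶜ := by
      intro x hx
      by_cases hxU : x ∈ U₂
      · exact Or.inl ⟨hxU, hx⟩
      · exact Or.inr hxU
    have hdv : outDeg A v ≤ {x | x ∈ U₂ ∧ A v x}.ncard + U₂ᶜ.ncard :=
      le_trans (Set.ncard_le_ncard hsplit (Set.toFinite _)) (Set.ncard_union_le _ _)
    have hdvR : (outDeg A v : ℝ) ≤ d + (n - (U₂.ncard : ℝ)) := by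
      rw [← hcompl2, hd_def]
      exact_mod_cast hdv
    have hdegv := (hdeg v).1
    linarith [hd_small]
  have ha_ub : (U₁.ncard : ℝ) ≤ (1/2 + ε'/2) * n - k := by
    have hsplit : {x | A x u} ⊆ {x | x ∈ U₁ ∧ A x u} ∪ U₁ᶜ := by
      intro x hx
      by_cases hxU : x ∈ U₁
      · exact Or.inl ⟨hxU, hx⟩
      · exact Or.inr hxU
    have hdu : inDeg A u ≤ {x | x ∈ U₁ ∧ A x u}.ncard + U₁ᶜ.ncard :=
      le_trans (Set.ncard_le_ncard hsplit (Set.toFinite _)) (Set.ncard_union_le _ _)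
    have hduR : (inDeg A u : ℝ) ≤ e + (n - (U₁.ncard : ℝ)) := by
      rw [← hcompl1, he_def]
      exact_mod_cast hdu
    have hdegu := (hdeg u).2
    linarith [he_small]
  -- cardinal identities for the W's
  have hcle1 : (U₁ ∩ U₂).ncard ≤ U₁.ncard :=
    Set.ncard_le_ncard Set.inter_subset_left (Set.toFinite _)
  have hcle2 : (U₁ ∩ U₂).ncard ≤ U₂.ncard :=
    Set.ncard_le_ncard Set.inter_subset_right (Set.toFinite _)
  have hW1c : (W₁.ncard : ℝ) = (U₁.ncard : ℝ) - ((U₁ ∩ U₂).ncard : ℝ) := by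
    rw [hW₁, Set.ncard_diff Set.inter_subset_left (Set.toFinite _), Nat.cast_sub hcle1]
  have hW3c : (W₃.ncard : ℝ) = (U₂.ncard : ℝ) - ((U₁ ∩ U₂).ncard : ℝ) := by
    rw [hW₃, Set.ncard_diff Set.inter_subset_right (Set.toFinite _), Nat.cast_sub hcle2]
  have hW4c : (W₄.ncard : ℝ) = ((U₁ ∩ U₂).ncard : ℝ) := by rw [hW₄]
  have hunion : (((U₁ ∪ U₂).ncard : ℕ) : ℝ)
      = (U₁.ncard : ℝ) + (U₂.ncard : ℝ) - ((U₁ ∩ U₂).ncard : ℝ) := by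
    have h := Set.ncard_union_add_ncard_inter U₁ U₂ (Set.toFinite _) (Set.toFinite _)
    have : (((U₁ ∪ U₂).ncard + (U₁ ∩ U₂).ncard : ℕ) : ℝ)
        = ((U₁.ncard + U₂.ncard : ℕ) : ℝ) := by exact_mod_cast h
    push_cast at this; linarith
  have hW2c : (W₂.ncard : ℝ)
      = (n : ℝ) - ((U₁.ncard : ℝ) + (U₂.ncard : ℝ) - ((U₁ ∩ U₂).ncard : ℝ)) := by
    rw [hW₂, ← hunion]
    have h := Set.ncard_add_ncard_compl (U₁ ∪ U₂) (Set.toFinite _) (Set.toFinite _)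
    rw [Nat.card_eq_fintype_card, hcardV] at h
    have : (((U₁ ∪ U₂).ncard + (U₁ ∪ U₂)ᶜ.ncard : ℕ) : ℝ) = (n : ℝ) := by exact_mod_cast h
    push_cast at this; linarith
  have hk0 : (0:ℝ) ≤ (k : ℝ) := Nat.cast_nonneg _
  refine ⟨⟨?_, ?_, ?_, ?_⟩, ⟨?_, ?_⟩, ⟨?_, ?_⟩⟩ <;>
    simp only [hW1c, hW2c, hW3c, hW4c] <;> linarith [hU₁, hU₂, ha_ub, hb_ub]
end
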